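/- arXiv:0807.4200 — 14 statements merged into one kernel-verified Lean document; each statement's English description precedes it below -/
import Mathlib

section
/- Let F be a distribution function on ℝ with infinite right endpoint belonging to the Gumbel maximal domain of attraction with auxiliary function f (i.e., for all x ∈ ℝ, lim_{t→∞} (1-F(t+x f(t)))/(1-F(t)) = e^{-x}). Then f(t)/t → 0 as t → ∞. -/
open MeasureTheory Filter Real

/-- If `F` is a distribution function with infinite right endpoint belonging to the
Gumbel maximal domain of attraction with auxiliary function `f`, then `f(t)/t → 0`. -/
theorem stmt_0 (F f : ℝ → ℝ)
    (hmono : Monotone F) (hrange : ∀ x, 0 ≤ F x ∧ F x ≤ 1)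
    (hend : ∀ x, F x < 1)
    (hfpos : ∀ x, 0 < f x)
    (hMDA : ∀ x : ℝ, Tendsto (fun t => (1 - F (t + x * f t)) / (1 - F t))
      atTop (nhds (Real.exp (-x)))) :
    Tendsto (fun t => f t / t) atTop (nhds 0) := by
  have hbdd : BddAbove (Set.range F) := ⟨1, by rintro y ⟨x, rfl⟩; exact (hrange x).2⟩
  have hL : Tendsto F atTop (nhds (⨆ x, F x)) := tendsto_atTop_ciSup hmono hbdd
  have hL1 : (⨆ x, F x) = 1 := by
    by_contra hne
    have hnum : Tendsto (fun t => F (t + 1 * f t)) atTop (nhds (⨆ x, F x)) := by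
      refine tendsto_of_tendsto_of_tendsto_of_le_of_le hL tendsto_const_nhds
        (fun t => hmono (by nlinarith [hfpos t])) (fun t => le_ciSup hbdd _)
    have hratio : Tendsto (fun t => (1 - F (t + 1 * f t)) / (1 - F t)) atTop
        (nhds ((1 - ⨆ x, F x) / (1 - ⨆ x, F x))) :=
      (tendsto_const_nhds.sub hnum).div (tendsto_const_nhds.sub hL)
        (sub_ne_zero.2 (Ne.symm hne))
    rw [div_self (sub_ne_zero.2 (Ne.symm hne))] at hratio
    have huniq := tendsto_nhds_unique (hMDA 1) hratio
    have hexp : Real.exp (-1) < 1 := by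
      rw [Real.exp_lt_one_iff]; norm_num
    linarith [huniq]
  have hF1 : Tendsto F atTop (nhds 1) := hL1 ▸ hL
  have hpos : ∀ t, (0:ℝ) < 1 - F t := fun t => sub_pos.2 (hend t)
  have h0 : Tendsto (fun t => 1 - F t) atTop (nhds 0) := by
    simpa using hF1.const_sub 1
  have hinv : Tendsto (fun t => (1 - F 0) / (1 - F t)) atTop atTop := by
    have h1 : Tendsto (fun t => (1 - F t)⁻¹) atTop atTop :=
      tendsto_inv_nhdsGT_zero.comp
        (tendsto_nhdsWithin_of_tendsto_nhds_of_eventually_within _ h0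
          (Eventually.of_forall fun t => hpos t))
    simpa [div_eq_mul_inv] using h1.const_mul_atTop (hpos 0)
  by_contra hnot
  rw [Metric.tendsto_nhds] at hnot
  push_neg at hnot
  obtain ⟨ε, hε, hfreq⟩ := hnot
  simp only [← not_lt] at hfreq
  have hev1 : ∀ᶠ t in atTop,
      (1 - F (t + (-ε⁻¹) * f t)) / (1 - F t) < Real.exp ε⁻¹ + 1 := by
    have := hMDA (-ε⁻¹)
    rw [neg_neg] at this
    exact this.eventually (eventually_lt_nhds (lt_add_one _))
  have hev2 : ∀ᶠ t in atTop, Real.exp ε⁻¹ + 1 < (1 - F 0) / (1 - F t) :=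
    hinv.eventually_gt_atTop _
  have hev3 : ∀ᶠ t in atTop, (0:ℝ) < t := eventually_gt_atTop 0
  obtain ⟨t, hd, h1, h2, ht⟩ := (hfreq.and_eventually (hev1.and (hev2.and hev3))).exists
  have hft : ε * t ≤ f t := by
    have : ε ≤ f t / t := by
      have := not_lt.1 hd
      rw [Real.dist_eq, sub_zero, abs_of_pos (div_pos (hfpos t) ht)] at this
      exact this
    calc ε * t ≤ (f t / t) * t := by nlinarith
    _ = f t := div_mul_cancel₀ _ ht.ne'
  have harg : t + (-ε⁻¹) * f t ≤ 0 := by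
    have h1' : ε⁻¹ * (ε * t) ≤ ε⁻¹ * f t := by
      apply mul_le_mul_of_nonneg_left hft (inv_nonneg.2 hε.le)
    rw [← mul_assoc, inv_mul_cancel₀ hε.ne', one_mul] at h1'
    linarith
  have hFle : F (t + (-ε⁻¹) * f t) ≤ F 0 := hmono harg
  have hchain : (1 - F 0) / (1 - F t) ≤ (1 - F (t + (-ε⁻¹) * f t)) / (1 - F t) := by
    gcongr <;> linarith [hpos t, hFle]
  linarith
end

section
/- Let (X,Y) be random variables where X has distribution F ∈ MDA(Λ) with auxiliary function f, F has infinite right endpoint, and suppose for every t > 0, P(|Y| > t f(x) | X > x) → 0 as x → ∞. If the auxiliary function is self-neglecting (f(t + x f(t))/f(t) → 1 for every x), then for all x ∈ ℝ and t > 0, lim_{u→∞} P(|Y| > t f(u) | X > u + x f(u)) = 0. -/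
open MeasureTheory Filter Real

/-- If `X` has distribution `F ∈ MDA(Λ)` with self-neglecting auxiliary function `f`,
`F` has infinite right endpoint, and `P(|Y| > t f(x) | X > x) → 0` for all `t > 0`,
then for all `x ∈ ℝ` and `t > 0`, `P(|Y| > t f(u) | X > u + x f(u)) → 0` as `u → ∞`. -/
theorem stmt_1 {Ω : Type*} [MeasurableSpace Ω] (ℙ : Measure Ω) [IsProbabilityMeasure ℙ]
    (X Y : Ω → ℝ) (hXm : Measurable X) (hYm : Measurable Y)
    (F f : ℝ → ℝ)
    (hF : ∀ x, F x = (ℙ {ω | X ω ≤ x}).toReal)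
    (hend : ∀ x, F x < 1)
    (hfpos : ∀ x, 0 < f x)
    (hMDA : ∀ x : ℝ, Tendsto (fun t => (1 - F (t + x * f t)) / (1 - F t))
      atTop (nhds (Real.exp (-x))))
    (hself : ∀ x : ℝ, Tendsto (fun t => f (t + x * f t) / f t) atTop (nhds 1))
    (hcond : ∀ t > (0:ℝ), Tendsto (fun x =>
      (ℙ {ω | |Y ω| > t * f x ∧ X ω > x}).toReal / (ℙ {ω | X ω > x}).toReal)
      atTop (nhds 0)) :
    ∀ (x : ℝ), ∀ t > (0:ℝ), Tendsto (fun u =>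
      (ℙ {ω | |Y ω| > t * f u ∧ X ω > u + x * f u}).toReal /
        (ℙ {ω | X ω > u + x * f u}).toReal) atTop (nhds 0) := by
  intro x t ht
  set v : ℝ → ℝ := fun u => u + x * f u with hv_def
  -- F is monotone
  have hFmono : Monotone F := by
    intro a b hab
    rw [hF a, hF b]
    exact ENNReal.toReal_mono (measure_ne_top _ _)
      (measure_mono fun ω h => le_trans h hab)
  -- F tends to 1 at infinity
  have hFlim : Tendsto F atTop (nhds 1) := by
    have hmono : Monotone (fun u : ℝ => {ω | X ω ≤ u}) :=
      fun a b hab ω h => le_trans h hab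
    have hU : (Set.iUnion fun u : ℝ => {ω | X ω ≤ u}) = Set.univ := by
      ext ω; simp only [Set.mem_iUnion, Set.mem_univ, iff_true, Set.mem_setOf_eq]
      exact ⟨X ω, le_refl (X ω)⟩
    have h1 := tendsto_measure_iUnion_atTop (μ := ℙ) hmono
    rw [hU, measure_univ] at h1
    have h2 := (ENNReal.tendsto_toReal (by norm_num : (1:ENNReal) ≠ ⊤)).comp h1
    simp only [ENNReal.toReal_one] at h2
    have : F = fun u => (ℙ {ω | X ω ≤ u}).toReal := funext hF
    rw [this]; exact h2
  -- 1 - F → 0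
  have hsurv : Tendsto (fun u => 1 - F u) atTop (nhds 0) := by
    have := hFlim.const_sub 1
    simpa using this
  -- v tends to atTop
  have hFv : Tendsto (fun u => F (v u)) atTop (nhds 1) := by
    have h1 : Tendsto (fun u => (1 - F (v u)) / (1 - F u) * (1 - F u)) atTop
        (nhds (Real.exp (-x) * 0)) := (hMDA x).mul hsurv
    rw [mul_zero] at h1
    have heq : (fun u => (1 - F (v u)) / (1 - F u) * (1 - F u)) =
        fun u => 1 - F (v u) := by
      funext u
      have : 1 - F u ≠ 0 := by have := hend u; linarith
      field_simp
    rw [heq] at h1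
    have := h1.const_sub 1
    simpa using this
  have hv : Tendsto v atTop atTop := by
    rw [tendsto_atTop]
    intro M
    have h1 : ∀ᶠ u in atTop, F M < F (v u) :=
      hFv.eventually (eventually_gt_nhds (hend M))
    filter_upwards [h1] with u hu
    by_contra h
    push_neg at h
    exact absurd (hFmono h.le) (not_le.mpr hu)
  -- complement measure formula
  have hcomp : ∀ a : ℝ, (ℙ {ω | X ω > a}).toReal = 1 - F a := by
    intro a
    have hset : {ω | X ω > a} = {ω | X ω ≤ a}ᶜ := by
      ext ω; simp [not_le]
    have hms : MeasurableSet {ω | X ω ≤ a} := hXm measurableSet_Iic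
    rw [hset, measure_compl hms (measure_ne_top _ _), measure_univ, hF,
      ENNReal.toReal_sub_of_le prob_le_one (by norm_num)]
    simp
  have hden_pos : ∀ a : ℝ, 0 < (ℙ {ω | X ω > a}).toReal := by
    intro a; rw [hcomp a]; linarith [hend a]
  -- the comparison function
  have hg : Tendsto (fun u =>
      (ℙ {ω | |Y ω| > (t/2) * f (v u) ∧ X ω > v u}).toReal /
        (ℙ {ω | X ω > v u}).toReal) atTop (nhds 0) :=
    (hcond (t/2) (by linarith)).comp hv
  -- eventual inequality from self-neglecting
  have hfv : ∀ᶠ u in atTop, f (v u) < 2 * f u := by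
    have h1 : ∀ᶠ u in atTop, f (v u) / f u < 2 :=
      (hself x).eventually (eventually_lt_nhds (by norm_num))
    filter_upwards [h1] with u hu
    exact (div_lt_iff₀ (hfpos u)).mp hu
  refine squeeze_zero' ?_ ?_ hg
  · filter_upwards with u
    exact div_nonneg ENNReal.toReal_nonneg ENNReal.toReal_nonneg
  · filter_upwards [hfv] with u hu
    apply div_le_div_of_nonneg_right ?_ (hden_pos (v u)).le
    apply ENNReal.toReal_mono (measure_ne_top _ _)
    apply measure_mono
    intro ω ⟨h1, h2⟩
    refine ⟨?_, h2⟩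
    calc (t/2) * f (v u) < (t/2) * (2 * f u) := by
            apply mul_lt_mul_of_pos_left hu (by linarith)
      _ = t * f u := by ring
      _ < |Y ω| := h1
end

section
/- Suppose X has distribution F ∈ MDA(Λ) with auxiliary function f and infinite right endpoint, and for all t > 0, lim_{x→∞} P(|Y| > t f(x) | X > x) = 0. Then lim_{x→∞} P(X > x, Y > x)/P(X > x) = 0. -/
open MeasureTheory Filter Real

/-- If `X` has distribution `F ∈ MDA(Λ)` with auxiliary function `f` (so `f(x)/x → 0`)
and infinite right endpoint, and `P(|Y| > t f(x) | X > x) → 0` for all `t > 0`, then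
`P(X > x, Y > x)/P(X > x) → 0`. -/
theorem stmt_2 {Ω : Type*} [MeasurableSpace Ω] (ℙ : Measure Ω) [IsProbabilityMeasure ℙ]
    (X Y : Ω → ℝ) (hXm : Measurable X) (hYm : Measurable Y)
    (F f : ℝ → ℝ)
    (hF : ∀ x, F x = (ℙ {ω | X ω ≤ x}).toReal)
    (hend : ∀ x, F x < 1)
    (hfpos : ∀ x, 0 < f x)
    (hfx : Tendsto (fun x => f x / x) atTop (nhds 0))
    (hMDA : ∀ x : ℝ, Tendsto (fun t => (1 - F (t + x * f t)) / (1 - F t))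
      atTop (nhds (Real.exp (-x))))
    (hcond : ∀ t > (0:ℝ), Tendsto (fun x =>
      (ℙ {ω | |Y ω| > t * f x ∧ X ω > x}).toReal / (ℙ {ω | X ω > x}).toReal)
      atTop (nhds 0)) :
    Tendsto (fun x =>
      (ℙ {ω | X ω > x ∧ Y ω > x}).toReal / (ℙ {ω | X ω > x}).toReal)
      atTop (nhds 0) := by
  have h1 := hcond 1 one_pos
  apply tendsto_of_tendsto_of_tendsto_of_le_of_le' (tendsto_const_nhds (x := (0:ℝ))) h1
  · filter_upwards with x
    positivity
  · have hev : ∀ᶠ x in atTop, f x < x := by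
      have h := hfx.eventually (eventually_lt_nhds (show (0:ℝ) < 1 by norm_num))
      filter_upwards [h, eventually_gt_atTop (0:ℝ)] with x hx hx0
      exact (div_lt_one hx0).mp hx
    filter_upwards [hev] with x hx
    have hnum : (ℙ {ω | X ω > x ∧ Y ω > x}).toReal
        ≤ (ℙ {ω | |Y ω| > 1 * f x ∧ X ω > x}).toReal := by
      apply ENNReal.toReal_mono (measure_ne_top ℙ _)
      apply measure_mono
      intro ω hω
      refine ⟨?_, hω.1⟩
      have : Y ω > x := hω.2
      have : f x < Y ω := lt_trans hx this
      calc 1 * f x = f x := one_mul _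
        _ < Y ω := this
        _ ≤ |Y ω| := le_abs_self _
    rcases eq_or_lt_of_le (ENNReal.toReal_nonneg (a := ℙ {ω | X ω > x})) with h0 | h0
    · rw [← h0, div_zero, div_zero]
    · exact div_le_div_of_nonneg_right hnum h0.le
end

section
/- Let (X,Y) satisfy: (1) X has distribution F ∈ MDA(Λ) with infinite right endpoint and auxiliary function f; (2) lim_{x→∞} P(Y > x)/P(X > x) = c ∈ [0,∞); (3) for all t > 0, P(|Y| > t f(x) | X > x) → 0; (4) for all t > 0, P(|X| > t f(x) | Y > x) → 0; (5) there exists L > 0 with P(Y > L f(x), X > L f(x))/P(X > x) → 0. Then P(X + Y > x) ∼ (1 + c) P(X > x) as x → ∞. -/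
open MeasureTheory Filter Real

private lemma div_chain {a b d : ℝ} (hb : b ≠ 0) : a / b * (b / d) = a / d := by
  rw [div_mul_div_comm, mul_comm a b, mul_div_mul_left _ _ hb]

private lemma div_mono_den {a b d : ℝ} (h : a ≤ b) (hd : 0 ≤ d) : a / d ≤ b / d := by
  simpa [div_eq_mul_inv] using mul_le_mul_of_nonneg_right h (inv_nonneg.2 hd)

private lemma aux_sn1 {f T : ℝ → ℝ} (hfpos : ∀ x, 0 < f x) (hTpos : ∀ x, 0 < T x)
    (hTanti : Antitone T) (hT0 : Tendsto T atTop (nhds 0))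
    (hMDA' : ∀ s : ℝ, Tendsto (fun x => T (x + s * f x) / T x) atTop (nhds (Real.exp (-s))))
    {M : ℝ} (hM : 0 < M) : Tendsto (fun x => x - M * f x) atTop atTop := by
  have h1 : ∀ᶠ x in atTop, T (x + -(2*M) * f x) / T x < exp (2*M) + 1 := by
    refine (hMDA' (-(2*M))).eventually_lt_const ?_
    rw [neg_neg]; linarith
  have h2 : ∀ᶠ x in atTop, T x < T 0 / (exp (2*M) + 1) :=
    hT0.eventually_lt_const (div_pos (hTpos 0) (by positivity))
  have h3 : ∀ᶠ x in atTop, x / 2 ≤ x - M * f x := by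
    filter_upwards [h1, h2] with x hx1 hx2
    have hTx := hTpos x
    have e1 : T (x + -(2*M) * f x) < (exp (2*M) + 1) * T x := by
      rw [div_lt_iff₀ hTx] at hx1; linarith
    have e2 : (exp (2*M) + 1) * T x < T 0 := by
      rw [lt_div_iff₀ (by positivity)] at hx2; linarith
    have key : T (x - 2*M*f x) < T 0 := by
      have harg : x + -(2*M) * f x = x - 2*M*f x := by ring
      rw [harg] at e1; linarith
    have hpos : 0 < x - 2*M*f x := by
      by_contra h
      push_neg at h
      exact absurd (hTanti h) (not_le.2 key)
    have := hfpos x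
    linarith
  exact tendsto_atTop_mono' atTop h3 (tendsto_id.atTop_div_const two_pos)

private lemma aux_sn2 {f T : ℝ → ℝ} (hfpos : ∀ x, 0 < f x) (hTpos : ∀ x, 0 < T x)
    (hTanti : Antitone T) (hT0 : Tendsto T atTop (nhds 0))
    (hMDA' : ∀ s : ℝ, Tendsto (fun x => T (x + s * f x) / T x) atTop (nhds (Real.exp (-s))))
    {M : ℝ} (hM : 0 < M) : ∀ᶠ x in atTop, f (x - M * f x) ≤ 2 * f x := by
  have hphi := aux_sn1 hfpos hTpos hTanti hT0 hMDA' hM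
  have h1 : ∀ᶠ x in atTop,
      exp (-(M+2))/2 < T ((x - M*f x) + (M+2) * f (x - M*f x)) / T (x - M*f x) :=
    hphi.eventually ((hMDA' (M+2)).eventually_const_lt (by linarith [exp_pos (-(M+2))]))
  have h2 : ∀ᶠ x in atTop, T (x + (M+4) * f x) / T x < 2 * exp (-(M+4)) :=
    (hMDA' (M+4)).eventually_lt_const (by linarith [exp_pos (-(M+4))])
  filter_upwards [h1, h2] with x h1 h2
  by_contra hcon
  push_neg at hcon
  set y := x - M * f x with hy
  have hfx := hfpos x
  have hfy := hfpos y
  have hy_le : y ≤ x := by nlinarith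
  have harg : x + (M+4)*f x ≤ y + (M+2) * f y := by nlinarith
  have hT1 : T (y + (M+2)*f y) ≤ T (x + (M+4)*f x) := hTanti harg
  have e1 : exp (-(M+2))/2 * T y < T (y + (M+2)*f y) := (lt_div_iff₀ (hTpos y)).1 h1
  have e2 : T (x + (M+4)*f x) < 2 * exp (-(M+4)) * T x := (div_lt_iff₀ (hTpos x)).1 h2
  have e3 : T x ≤ T y := hTanti hy_le
  have key2 : exp (-(M+2)) < 4 * exp (-(M+4)) := by
    nlinarith [hTpos y, hTpos x, exp_pos (-(M+4))]
  have e4 : exp (-(M+2)) = exp 2 * exp (-(M+4)) := by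
    rw [← Real.exp_add]; ring_nf
  have e5 : (2:ℝ) ≤ exp 1 := by linarith [Real.add_one_le_exp 1]
  have e6 : (4:ℝ) ≤ exp 2 := by
    have h12 : Real.exp 2 = Real.exp 1 * Real.exp 1 := by rw [← Real.exp_add]; norm_num
    nlinarith
  nlinarith [exp_pos (-(M+4))]

/-- Main tail-equivalence theorem: under Assumptions 1–5,
`P(X + Y > x) ∼ (1 + c) P(X > x)` as `x → ∞`. -/
theorem stmt_3 {Ω : Type*} [MeasurableSpace Ω] (ℙ : Measure Ω) [IsProbabilityMeasure ℙ]
    (X Y : Ω → ℝ) (hXm : Measurable X) (hYm : Measurable Y)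
    (F f : ℝ → ℝ) (c : ℝ) (hc : 0 ≤ c)
    (hF : ∀ x, F x = (ℙ {ω | X ω ≤ x}).toReal)
    (hend : ∀ x, F x < 1)
    (hfpos : ∀ x, 0 < f x)
    (hself : ∀ x : ℝ, Tendsto (fun t => f (t + x * f t) / f t) atTop (nhds 1))
    (hMDA : ∀ x : ℝ, Tendsto (fun t => (1 - F (t + x * f t)) / (1 - F t))
      atTop (nhds (Real.exp (-x))))
    (hratio : Tendsto (fun x =>
      (ℙ {ω | Y ω > x}).toReal / (ℙ {ω | X ω > x}).toReal) atTop (nhds c))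
    (hcondY : ∀ t > (0:ℝ), Tendsto (fun x =>
      (ℙ {ω | |Y ω| > t * f x ∧ X ω > x}).toReal / (ℙ {ω | X ω > x}).toReal)
      atTop (nhds 0))
    (hcondX : ∀ t > (0:ℝ), Tendsto (fun x =>
      (ℙ {ω | |X ω| > t * f x ∧ Y ω > x}).toReal / (ℙ {ω | Y ω > x}).toReal)
      atTop (nhds 0))
    (hjoint : ∃ L > (0:ℝ), Tendsto (fun x =>
      (ℙ {ω | Y ω > L * f x ∧ X ω > L * f x}).toReal / (ℙ {ω | X ω > x}).toReal)
      atTop (nhds 0)) :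
    Tendsto (fun x =>
      (ℙ {ω | X ω + Y ω > x}).toReal / (ℙ {ω | X ω > x}).toReal)
      atTop (nhds (1 + c)) := by
  clear hself
  obtain ⟨L, hL, hJ⟩ := hjoint
  set T : ℝ → ℝ := fun u => (ℙ {ω | X ω > u}).toReal with hT_def
  set G : ℝ → ℝ := fun u => (ℙ {ω | Y ω > u}).toReal with hG_def
  -- basic facts about T
  have hTF : ∀ u, T u = 1 - F u := by
    intro u
    have hcompl : {ω | X ω > u} = {ω | X ω ≤ u}ᶜ := by ext ω; simp [not_le]
    rw [hT_def]
    simp only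
    rw [hF u, hcompl, prob_compl_eq_one_sub (measurableSet_le hXm measurable_const),
      ENNReal.toReal_sub_of_le prob_le_one ENNReal.one_ne_top, ENNReal.toReal_one]
  have hTpos : ∀ u, 0 < T u := fun u => by rw [hTF u]; linarith [hend u]
  have hTanti : Antitone T := fun a b hab =>
    ENNReal.toReal_mono (measure_ne_top _ _)
      (measure_mono fun ω h => lt_of_le_of_lt hab h)
  have hT0 : Tendsto T atTop (nhds 0) := by
    have hseq : Tendsto (fun n : ℕ => ℙ {ω | X ω > (n:ℝ)}) atTop
        (nhds (ℙ (⋂ n : ℕ, {ω | X ω > (n:ℝ)}))) :=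
      tendsto_measure_iInter_atTop
        (fun n => (measurableSet_lt measurable_const hXm).nullMeasurableSet)
        (fun a b hab => Set.setOf_subset_setOf.2 fun ω h =>
          lt_of_le_of_lt (Nat.cast_le.2 hab) h)
        ⟨0, measure_ne_top _ _⟩
    have hempty : (⋂ n : ℕ, {ω | X ω > (n:ℝ)}) = ∅ := by
      ext ω
      simp only [Set.mem_iInter, Set.mem_setOf_eq, Set.mem_empty_iff_false, iff_false,
        not_forall, not_lt]
      obtain ⟨n, hn⟩ := exists_nat_gt (X ω)
      exact ⟨n, hn.le⟩
    rw [hempty, measure_empty] at hseq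
    have hseq' : Tendsto (fun n : ℕ => T (n:ℝ)) atTop (nhds 0) := by
      have h := (ENNReal.tendsto_toReal (by simp)).comp hseq
      simpa [Function.comp_def] using h
    refine tendsto_order.2 ⟨fun a ha => Eventually.of_forall fun x => lt_trans ha (hTpos x),
      fun a ha => ?_⟩
    obtain ⟨N, hN⟩ := (hseq'.eventually_lt_const ha).exists
    exact eventually_atTop.2 ⟨N, fun x hx => lt_of_le_of_lt (hTanti hx) hN⟩
  have hMDA' : ∀ s : ℝ, Tendsto (fun x => T (x + s * f x) / T x) atTop
      (nhds (Real.exp (-s))) := by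
    intro s
    refine (hMDA s).congr fun x => ?_
    rw [hTF, hTF]
  -- self-neglecting consequences
  have hphi : ∀ M : ℝ, 0 < M → Tendsto (fun x => x - M * f x) atTop atTop :=
    fun M hM => aux_sn1 hfpos hTpos hTanti hT0 hMDA' hM
  have hSN2 : ∀ M : ℝ, 0 < M → ∀ᶠ x in atTop, f (x - M * f x) ≤ 2 * f x :=
    fun M hM => aux_sn2 hfpos hTpos hTanti hT0 hMDA' hM
  have hTshift : ∀ M : ℝ, Tendsto (fun x => T (x - M * f x) / T x) atTop
      (nhds (Real.exp M)) := by
    intro M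
    have h := hMDA' (-M)
    rw [neg_neg] at h
    exact h.congr fun x => by rw [neg_mul, ← sub_eq_add_neg]
  -- helper inequalities
  have tr_mono : ∀ {s t : Set Ω}, s ⊆ t → (ℙ s).toReal ≤ (ℙ t).toReal :=
    fun h => ENNReal.toReal_mono (measure_ne_top _ _) (measure_mono h)
  have tu : ∀ s t : Set Ω, (ℙ (s ∪ t)).toReal ≤ (ℙ s).toReal + (ℙ t).toReal := by
    intro s t
    rw [← ENNReal.toReal_add (measure_ne_top _ _) (measure_ne_top _ _)]
    exact ENNReal.toReal_mono (ENNReal.add_ne_top.2 ⟨measure_ne_top _ _, measure_ne_top _ _⟩)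
      (measure_union_le s t)
  -- Lemma A
  have lemA : ∀ t : ℝ, 0 < t → ∀ M : ℝ, 0 < M →
      Tendsto (fun x => (ℙ {ω | |Y ω| > t * f x ∧ X ω > x - M * f x}).toReal / T x)
        atTop (nhds 0) := by
    intro t ht M hM
    have ht2 : (0:ℝ) < t/2 := by linarith
    have hcomp : Tendsto (fun x =>
        (ℙ {ω | |Y ω| > (t/2) * f (x - M * f x) ∧ X ω > x - M * f x}).toReal
          / T (x - M * f x) * (T (x - M * f x) / T x)) atTop (nhds (0 * Real.exp M)) :=
      Tendsto.mul ((hcondY (t/2) ht2).comp (hphi M hM)) (hTshift M)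
    rw [zero_mul] at hcomp
    refine squeeze_zero' (Eventually.of_forall fun x => by positivity) ?_ hcomp
    filter_upwards [hSN2 M hM] with x hx
    have hmono : (ℙ {ω | |Y ω| > t * f x ∧ X ω > x - M * f x}).toReal ≤
        (ℙ {ω | |Y ω| > (t/2) * f (x - M * f x) ∧ X ω > x - M * f x}).toReal := by
      refine tr_mono fun ω hω => ⟨lt_of_le_of_lt (by nlinarith) hω.1, hω.2⟩
    calc (ℙ {ω | |Y ω| > t * f x ∧ X ω > x - M * f x}).toReal / T x
        ≤ (ℙ {ω | |Y ω| > (t/2) * f (x - M * f x) ∧ X ω > x - M * f x}).toReal / T x :=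
          div_mono_den hmono (hTpos x).le
      _ = (ℙ {ω | |Y ω| > (t/2) * f (x - M * f x) ∧ X ω > x - M * f x}).toReal
            / T (x - M * f x) * (T (x - M * f x) / T x) :=
          (div_chain (hTpos (x - M * f x)).ne').symm
  -- Lemma B
  have lemB : ∀ t : ℝ, 0 < t → ∀ M : ℝ, 0 < M →
      Tendsto (fun x => (ℙ {ω | |X ω| > t * f x ∧ Y ω > x - M * f x}).toReal / T x)
        atTop (nhds 0) := by
    intro t ht M hM
    have ht2 : (0:ℝ) < t/2 := by linarith
    have hcomp : Tendsto (fun x =>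
        (ℙ {ω | |X ω| > (t/2) * f (x - M * f x) ∧ Y ω > x - M * f x}).toReal
          / G (x - M * f x) * (G (x - M * f x) / T (x - M * f x))
          * (T (x - M * f x) / T x)) atTop (nhds (0 * c * Real.exp M)) :=
      (((hcondX (t/2) ht2).comp (hphi M hM)).mul (hratio.comp (hphi M hM))).mul (hTshift M)
    rw [zero_mul, zero_mul] at hcomp
    refine squeeze_zero' (Eventually.of_forall fun x => by positivity) ?_ hcomp
    filter_upwards [hSN2 M hM] with x hx
    set y := x - M * f x with hy
    have hmono : (ℙ {ω | |X ω| > t * f x ∧ Y ω > y}).toReal ≤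
        (ℙ {ω | |X ω| > (t/2) * f y ∧ Y ω > y}).toReal := by
      refine tr_mono fun ω hω => ⟨lt_of_le_of_lt (by nlinarith) hω.1, hω.2⟩
    by_cases hg : G y = 0
    · have hK' : (ℙ {ω | |X ω| > (t/2) * f y ∧ Y ω > y}).toReal = 0 :=
        le_antisymm (le_trans (tr_mono fun ω hω => hω.2) hg.le) ENNReal.toReal_nonneg
      have hKt : (ℙ {ω | |X ω| > t * f x ∧ Y ω > y}).toReal = 0 :=
        le_antisymm (hmono.trans hK'.le) ENNReal.toReal_nonneg
      rw [hKt, hK', hg]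
      simp
    · calc (ℙ {ω | |X ω| > t * f x ∧ Y ω > y}).toReal / T x
          ≤ (ℙ {ω | |X ω| > (t/2) * f y ∧ Y ω > y}).toReal / T x :=
            div_mono_den hmono (hTpos x).le
        _ = (ℙ {ω | |X ω| > (t/2) * f y ∧ Y ω > y}).toReal / G y * (G y / T y)
              * (T y / T x) := by
            rw [div_chain hg, div_chain (hTpos y).ne']
  -- upper bound
  have main_upper : ∀ t : ℝ, 0 < t → ∃ V : ℝ → ℝ,
      (∀ᶠ x in atTop, (ℙ {ω | X ω + Y ω > x}).toReal / T x ≤ V x) ∧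
      Tendsto V atTop (nhds ((1 + c) * Real.exp t)) := by
    intro t ht
    refine ⟨fun x => T (x - t * f x) / T x + G (x - t * f x) / T x
      + (ℙ {ω | |Y ω| > t * f x ∧ X ω > x - L * f x}).toReal / T x
      + (ℙ {ω | |X ω| > t * f x ∧ Y ω > x - L * f x}).toReal / T x
      + (ℙ {ω | Y ω > L * f x ∧ X ω > L * f x}).toReal / T x, ?_, ?_⟩
    · refine Eventually.of_forall fun x => ?_
      have hincl : {ω | X ω + Y ω > x} ⊆ {ω | X ω > x - t * f x} ∪ ({ω | Y ω > x - t * f x}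
          ∪ ({ω | |Y ω| > t * f x ∧ X ω > x - L * f x}
          ∪ ({ω | |X ω| > t * f x ∧ Y ω > x - L * f x}
          ∪ {ω | Y ω > L * f x ∧ X ω > L * f x}))) := by
        intro ω hω
        simp only [Set.mem_setOf_eq, Set.mem_union] at *
        by_cases h1 : |Y ω| ≤ t * f x
        · exact Or.inl (by cases abs_le.1 h1; linarith)
        by_cases h2 : |X ω| ≤ t * f x
        · exact Or.inr (Or.inl (by cases abs_le.1 h2; linarith))
        push_neg at h1 h2
        by_cases h3 : Y ω ≤ L * f x
        · exact Or.inr (Or.inr (Or.inl ⟨h1, by linarith⟩))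
        push_neg at h3
        by_cases h4 : X ω ≤ L * f x
        · exact Or.inr (Or.inr (Or.inr (Or.inl ⟨h2, by linarith⟩)))
        push_neg at h4
        exact Or.inr (Or.inr (Or.inr (Or.inr ⟨h3, h4⟩)))
      have hsum : (ℙ {ω | X ω + Y ω > x}).toReal ≤ T (x - t * f x) + G (x - t * f x)
          + (ℙ {ω | |Y ω| > t * f x ∧ X ω > x - L * f x}).toReal
          + (ℙ {ω | |X ω| > t * f x ∧ Y ω > x - L * f x}).toReal
          + (ℙ {ω | Y ω > L * f x ∧ X ω > L * f x}).toReal := by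
        have h0 := tr_mono hincl
        have h1 := tu {ω | X ω > x - t * f x} ({ω | Y ω > x - t * f x}
          ∪ ({ω | |Y ω| > t * f x ∧ X ω > x - L * f x}
          ∪ ({ω | |X ω| > t * f x ∧ Y ω > x - L * f x}
          ∪ {ω | Y ω > L * f x ∧ X ω > L * f x})))
        have h2 := tu {ω | Y ω > x - t * f x}
          ({ω | |Y ω| > t * f x ∧ X ω > x - L * f x}
          ∪ ({ω | |X ω| > t * f x ∧ Y ω > x - L * f x}
          ∪ {ω | Y ω > L * f x ∧ X ω > L * f x}))
        have h3 := tu {ω | |Y ω| > t * f x ∧ X ω > x - L * f x}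
          ({ω | |X ω| > t * f x ∧ Y ω > x - L * f x}
          ∪ {ω | Y ω > L * f x ∧ X ω > L * f x})
        have h4 := tu {ω | |X ω| > t * f x ∧ Y ω > x - L * f x}
          {ω | Y ω > L * f x ∧ X ω > L * f x}
        rw [hT_def, hG_def]
        simp only
        linarith
      calc (ℙ {ω | X ω + Y ω > x}).toReal / T x
          ≤ (T (x - t * f x) + G (x - t * f x)
            + (ℙ {ω | |Y ω| > t * f x ∧ X ω > x - L * f x}).toReal
            + (ℙ {ω | |X ω| > t * f x ∧ Y ω > x - L * f x}).toReal
            + (ℙ {ω | Y ω > L * f x ∧ X ω > L * f x}).toReal) / T x :=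
            div_mono_den hsum (hTpos x).le
        _ = _ := by ring
    · have hG2 : Tendsto (fun x => G (x - t * f x) / T x) atTop (nhds (c * Real.exp t)) := by
        have h := (hratio.comp (hphi t ht)).mul (hTshift t)
        refine h.congr fun x => ?_
        exact div_chain (hTpos (x - t * f x)).ne'
      have hall := ((((hTshift t).add hG2).add (lemA t ht L hL)).add (lemB t ht L hL)).add hJ
      have hval : Real.exp t + c * Real.exp t + 0 + 0 + 0 = (1 + c) * Real.exp t := by ring
      rw [hval] at hall
      exact hall
  -- lower bound
  have main_lower : ∀ t : ℝ, 0 < t → ∃ W : ℝ → ℝ,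
      (∀ᶠ x in atTop, W x ≤ (ℙ {ω | X ω + Y ω > x}).toReal / T x) ∧
      Tendsto W atTop (nhds ((1 + c) * Real.exp (-t))) := by
    intro t ht
    refine ⟨fun x => T (x + t * f x) / T x + G (x + t * f x) / T x
      - (ℙ {ω | |Y ω| > t * f x ∧ X ω > x}).toReal / T x
      - (ℙ {ω | |X ω| > t * f x ∧ Y ω > x}).toReal / T x, ?_, ?_⟩
    · filter_upwards [eventually_gt_atTop (0:ℝ)] with x hx
      have htf : 0 < t * f x := mul_pos ht (hfpos x)
      set A : Set Ω := {ω | X ω > x + t * f x ∧ |Y ω| ≤ t * f x} with hA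
      set B : Set Ω := {ω | Y ω > x + t * f x ∧ |X ω| ≤ t * f x} with hB
      have mB : MeasurableSet B :=
        (measurableSet_lt measurable_const hYm).inter (measurableSet_le hXm.abs measurable_const)
      have hdisj : Disjoint A B := by
        rw [Set.disjoint_left]
        rintro ω ⟨h1, h2⟩ ⟨h3, h4⟩
        have := (abs_le.1 h4).2
        linarith
      have h1 : T (x + t * f x) ≤ (ℙ A).toReal
          + (ℙ {ω | |Y ω| > t * f x ∧ X ω > x}).toReal := by
        refine le_trans (tr_mono ?_) (tu _ _)
        intro ω hω
        by_cases hY : |Y ω| ≤ t * f x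
        · exact Or.inl ⟨hω, hY⟩
        · exact Or.inr ⟨not_le.1 hY, by simp only [Set.mem_setOf_eq] at hω ⊢; linarith⟩
      have h2 : G (x + t * f x) ≤ (ℙ B).toReal
          + (ℙ {ω | |X ω| > t * f x ∧ Y ω > x}).toReal := by
        refine le_trans (tr_mono ?_) (tu _ _)
        intro ω hω
        by_cases hX : |X ω| ≤ t * f x
        · exact Or.inl ⟨hω, hX⟩
        · exact Or.inr ⟨not_le.1 hX, by simp only [Set.mem_setOf_eq] at hω ⊢; linarith⟩
      have h3 : (ℙ A).toReal + (ℙ B).toReal ≤ (ℙ {ω | X ω + Y ω > x}).toReal := by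
        rw [← ENNReal.toReal_add (measure_ne_top _ _) (measure_ne_top _ _),
          ← measure_union hdisj mB]
        refine tr_mono ?_
        rintro ω (⟨ha1, ha2⟩ | ⟨hb1, hb2⟩)
        · have := (abs_le.1 ha2).1
          simp only [Set.mem_setOf_eq]
          linarith
        · have := (abs_le.1 hb2).1
          simp only [Set.mem_setOf_eq]
          linarith
      have hkey : T (x + t * f x) + G (x + t * f x)
          - (ℙ {ω | |Y ω| > t * f x ∧ X ω > x}).toReal
          - (ℙ {ω | |X ω| > t * f x ∧ Y ω > x}).toReal
          ≤ (ℙ {ω | X ω + Y ω > x}).toReal := by linarith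
      calc T (x + t * f x) / T x + G (x + t * f x) / T x
          - (ℙ {ω | |Y ω| > t * f x ∧ X ω > x}).toReal / T x
          - (ℙ {ω | |X ω| > t * f x ∧ Y ω > x}).toReal / T x
          = (T (x + t * f x) + G (x + t * f x)
            - (ℙ {ω | |Y ω| > t * f x ∧ X ω > x}).toReal
            - (ℙ {ω | |X ω| > t * f x ∧ Y ω > x}).toReal) / T x := by ring
        _ ≤ (ℙ {ω | X ω + Y ω > x}).toReal / T x := div_mono_den hkey (hTpos x).le
    · have hpsi : Tendsto (fun x => x + t * f x) atTop atTop :=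
        tendsto_atTop_mono (fun x => le_add_of_nonneg_right (mul_pos ht (hfpos x)).le) tendsto_id
      have hG2 : Tendsto (fun x => G (x + t * f x) / T x) atTop
          (nhds (c * Real.exp (-t))) := by
        have h := (hratio.comp hpsi).mul (hMDA' t)
        refine h.congr fun x => ?_
        exact div_chain (hTpos (x + t * f x)).ne'
      have hb1 : Tendsto (fun x => (ℙ {ω | |X ω| > t * f x ∧ Y ω > x}).toReal / T x)
          atTop (nhds 0) := by
        have h := (hcondX t ht).mul hratio
        rw [zero_mul] at h
        refine h.congr fun x => ?_
        by_cases hg : G x = 0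
        · have hb : (ℙ {ω | |X ω| > t * f x ∧ Y ω > x}).toReal = 0 :=
            le_antisymm (le_trans (tr_mono fun ω hω => hω.2) hg.le) ENNReal.toReal_nonneg
          rw [hb]
          have hg' : (ℙ {ω | Y ω > x}).toReal = 0 := hg
          rw [hg']
          simp
        · exact div_chain hg
      have hall := (((hMDA' t).add hG2).sub (hcondY t ht)).sub hb1
      have hval : Real.exp (-t) + c * Real.exp (-t) - 0 - 0 = (1 + c) * Real.exp (-t) := by
        ring
      rw [hval] at hall
      exact hall
  -- conclusion
  show Tendsto (fun x => (ℙ {ω | X ω + Y ω > x}).toReal / T x) atTop (nhds (1 + c))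
  have h1c : (0:ℝ) < 1 + c := by linarith
  refine tendsto_order.2 ⟨fun a ha => ?_, fun a ha => ?_⟩
  · -- a < 1 + c : eventually a < ratio
    have hcont : Tendsto (fun t : ℝ => (1 + c) * Real.exp (-t)) (nhds 0) (nhds (1 + c)) := by
      have h : Tendsto (fun t : ℝ => Real.exp (-t)) (nhds 0) (nhds 1) := by
        simpa [Function.comp_def] using (Real.continuous_exp.comp continuous_neg).tendsto 0
      simpa using h.const_mul (1 + c)
    have hev : ∀ᶠ t in nhdsWithin (0:ℝ) (Set.Ioi 0), a < (1 + c) * Real.exp (-t) :=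
      (hcont.mono_left nhdsWithin_le_nhds).eventually_const_lt ha
    obtain ⟨t, ht1, ht2⟩ := (hev.and (eventually_mem_nhdsWithin)).exists
    obtain ⟨W, hWle, hWlim⟩ := main_lower t ht2
    filter_upwards [hWle, hWlim.eventually_const_lt ht1] with x hx1 hx2
    exact lt_of_lt_of_le hx2 hx1
  · have hcont : Tendsto (fun t : ℝ => (1 + c) * Real.exp t) (nhds 0) (nhds (1 + c)) := by
      have h : Continuous fun t : ℝ => (1 + c) * Real.exp t := by continuity
      simpa using h.tendsto 0
    have hev : ∀ᶠ t in nhdsWithin (0:ℝ) (Set.Ioi 0), (1 + c) * Real.exp t < a :=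
      (hcont.mono_left nhdsWithin_le_nhds).eventually_lt_const ha
    obtain ⟨t, ht1, ht2⟩ := (hev.and (eventually_mem_nhdsWithin)).exists
    obtain ⟨V, hVle, hVlim⟩ := main_upper t ht2
    filter_upwards [hVle, hVlim.eventually_lt_const ht1] with x hx1 hx2
    exact lt_of_le_of_lt hx1 hx2
end

section
/- Under assumptions (1)–(3) of Theorem on tail equivalence (X has distribution F ∈ MDA(Λ) with infinite right endpoint and auxiliary function f; lim P(Y>x)/P(X>x)=c ∈ (0,∞); for all t>0, P(|Y|>tf(x)|X>x)→0), the pair (X,Y) is asymptotically independent: with b_F(t) = inf{s : 1/(1-F(s)) ≥ t} and b_G(t) defined analogously for the distribution G of Y, lim_{t→∞} P(X > b_F(t), Y > b_G(t))/P(X > b_F(t)) = 0. -/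
open MeasureTheory Filter Real

lemma cdf_tendsto_one {Ω : Type*} [MeasurableSpace Ω] (ℙ : Measure Ω) [IsProbabilityMeasure ℙ]
    (Z : Ω → ℝ) :
    Tendsto (fun x : ℝ => (ℙ {ω | Z ω ≤ x}).toReal) atTop (nhds 1) := by
  have hmono : Monotone fun x : ℝ => {ω | Z ω ≤ x} := fun a b hab ω h => le_trans h hab
  have hseq := tendsto_measure_iUnion_atTop (μ := ℙ) hmono
  have hunion : (⋃ x : ℝ, {ω | Z ω ≤ x}) = Set.univ := by
    ext ω; simp only [Set.mem_iUnion, Set.mem_setOf_eq, Set.mem_univ, iff_true]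
    exact ⟨Z ω, le_refl _⟩
  rw [hunion, measure_univ] at hseq
  exact (ENNReal.tendsto_toReal ENNReal.one_ne_top).comp hseq


/-- Under Assumptions 1–3 with `c ∈ (0,∞)`, the pair `(X,Y)` is asymptotically
independent: `P(X > b_F(t), Y > b_G(t))/P(X > b_F(t)) → 0` where `b_F, b_G` are the
generalized inverses of `1/(1-F)`, `1/(1-G)`. -/
theorem stmt_4 {Ω : Type*} [MeasurableSpace Ω] (ℙ : Measure Ω) [IsProbabilityMeasure ℙ]
    (X Y : Ω → ℝ) (hXm : Measurable X) (hYm : Measurable Y)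
    (F G f : ℝ → ℝ) (c : ℝ) (hc : 0 < c)
    (hF : ∀ x, F x = (ℙ {ω | X ω ≤ x}).toReal)
    (hG : ∀ x, G x = (ℙ {ω | Y ω ≤ x}).toReal)
    (hend : ∀ x, F x < 1)
    (hfpos : ∀ x, 0 < f x)
    (hfx : Tendsto (fun x => f x / x) atTop (nhds 0))
    (hMDA : ∀ x : ℝ, Tendsto (fun t => (1 - F (t + x * f t)) / (1 - F t))
      atTop (nhds (Real.exp (-x))))
    (hratio : Tendsto (fun x => (1 - G x) / (1 - F x)) atTop (nhds c))
    (hcond : ∀ t > (0:ℝ), Tendsto (fun x =>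
      (ℙ {ω | |Y ω| > t * f x ∧ X ω > x}).toReal / (ℙ {ω | X ω > x}).toReal)
      atTop (nhds 0))
    (bF bG : ℝ → ℝ)
    (hbF : ∀ t, bF t = sInf {s : ℝ | 1 / (1 - F s) ≥ t})
    (hbG : ∀ t, bG t = sInf {s : ℝ | 1 / (1 - G s) ≥ t}) :
    Tendsto (fun t =>
      (ℙ {ω | X ω > bF t ∧ Y ω > bG t}).toReal / (ℙ {ω | X ω > bF t}).toReal)
      atTop (nhds 0) := by
  -- basic facts
  have hF1 : ∀ x, 0 < 1 - F x := fun x => by linarith [hend x]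
  have hFmono : Monotone F := fun a b hab => by
    rw [hF a, hF b]
    exact ENNReal.toReal_mono (measure_ne_top _ _) (measure_mono fun ω h => le_trans h hab)
  have hGmono : Monotone G := fun a b hab => by
    rw [hG a, hG b]
    exact ENNReal.toReal_mono (measure_ne_top _ _) (measure_mono fun ω h => le_trans h hab)
  have hFtop : Tendsto F atTop (nhds 1) := by
    have := cdf_tendsto_one ℙ X
    simpa only [← hF] using this
  have hGtop : Tendsto G atTop (nhds 1) := by
    have := cdf_tendsto_one ℙ Y
    simpa only [← hG] using this
  have hGlt1 : ∀ᶠ x in atTop, G x < 1 := by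
    have := hratio.eventually (eventually_gt_nhds (show c/2 < c by linarith))
    filter_upwards [this] with x hx
    have hFx := hF1 x
    have h := (lt_div_iff₀ hFx).mp hx
    nlinarith
  -- nonemptiness of the quantile sets
  have hneF : ∀ t : ℝ, {s : ℝ | 1 / (1 - F s) ≥ t}.Nonempty := by
    intro t
    have h1 : (0:ℝ) < 1/(|t|+1) := by positivity
    obtain ⟨s, hs⟩ := (hFtop.eventually (eventually_gt_nhds
      (show 1 - 1/(|t|+1) < 1 by linarith))).exists
    refine ⟨s, ?_⟩
    have h2 := hF1 s
    show 1/(1 - F s) ≥ t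
    rw [ge_iff_le, le_div_iff₀ h2]
    have h3 : (|t|+1) * (1/(|t|+1)) = 1 := mul_one_div_cancel (by positivity)
    nlinarith [le_abs_self t, abs_nonneg t]
  have hneG : ∀ t : ℝ, {s : ℝ | 1 / (1 - G s) ≥ t}.Nonempty := by
    intro t
    have h1 : (0:ℝ) < 1/(|t|+1) := by positivity
    obtain ⟨s, hs, hslt⟩ := ((hGtop.eventually (eventually_gt_nhds
      (show 1 - 1/(|t|+1) < 1 by linarith))).and hGlt1).exists
    refine ⟨s, ?_⟩
    have h2 : 0 < 1 - G s := by linarith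
    show 1/(1 - G s) ≥ t
    rw [ge_iff_le, le_div_iff₀ h2]
    have h3 : (|t|+1) * (1/(|t|+1)) = 1 := mul_one_div_cancel (by positivity)
    nlinarith [le_abs_self t, abs_nonneg t]
  -- subset lemma
  have hsubF : ∀ M t : ℝ, 1/(1 - F M) < t → ∀ s ∈ {s : ℝ | 1/(1 - F s) ≥ t}, M < s := by
    intro M t hMt s hs
    by_contra h
    push_neg at h
    have h1 : 1 - F M ≤ 1 - F s := by linarith [hFmono h]
    have h2 : 1/(1 - F s) ≤ 1/(1 - F M) := one_div_le_one_div_of_le (hF1 M) h1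
    exact absurd hs (by simp only [Set.mem_setOf_eq, ge_iff_le, not_le]; linarith)
  have hbFtop : Tendsto bF atTop atTop := by
    rw [tendsto_atTop]
    intro M
    filter_upwards [eventually_gt_atTop (1/(1 - F M))] with t ht
    rw [hbF]
    exact le_csInf (hneF t) fun s hs => (hsubF M t ht s hs).le
  have hbdd : ∀ t : ℝ, 1/(1 - F 0) < t → BddBelow {s : ℝ | 1/(1 - F s) ≥ t} :=
    fun t ht => ⟨0, fun s hs => (hsubF 0 t ht s hs).le⟩
  -- the constant u
  set u : ℝ := max 1 (Real.log (8/c)) with hu_def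
  have hu0 : 0 < u := lt_of_lt_of_le one_pos (le_max_left _ _)
  have hue : 8/c ≤ Real.exp u := by
    calc 8/c = Real.exp (Real.log (8/c)) := (Real.exp_log (by positivity)).symm
    _ ≤ Real.exp u := Real.exp_le_exp.mpr (le_max_right _ _)
  have hce : 8 ≤ c * Real.exp u := by
    rw [div_le_iff₀ hc] at hue; linarith [mul_comm (Real.exp u) c]
  -- key eventual estimate in y
  have hkey : ∀ᶠ y : ℝ in atTop, 1 - G y ≥ 2 * (1 - F (y + u * f y)) ∧ u * f y < y := by
    have e1 : ∀ᶠ y : ℝ in atTop, f y / y < 1/u :=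
      hfx.eventually (eventually_lt_nhds (by positivity))
    have e2 : ∀ᶠ y : ℝ in atTop, (1 - F (y + u * f y)) / (1 - F y) < 2 * Real.exp (-u) :=
      (hMDA u).eventually (eventually_lt_nhds (by nlinarith [Real.exp_pos (-u)]))
    have e3 : ∀ᶠ y : ℝ in atTop, c/2 < (1 - G y) / (1 - F y) :=
      hratio.eventually (eventually_gt_nhds (by linarith))
    filter_upwards [e1, e2, e3, eventually_gt_atTop (0:ℝ)] with y h1 h2 h3 hy0
    have hFy := hF1 y
    have hfy := hfpos y
    constructor
    · have hA : 1 - F (y + u * f y) < 2 * Real.exp (-u) * (1 - F y) := by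
        rw [div_lt_iff₀ hFy] at h2; linarith
      have hB : c/2 * (1 - F y) < 1 - G y := by
        rw [lt_div_iff₀ hFy] at h3; linarith
      have hexp : Real.exp (-u) * Real.exp u = 1 := by
        rw [← Real.exp_add]; simp
      nlinarith [Real.exp_pos (-u), Real.exp_pos u]
    · rw [div_lt_iff₀ hy0] at h1
      have h4 : u * (1/u) = 1 := mul_one_div_cancel (ne_of_gt hu0)
      nlinarith
  -- main: bG t ≥ bF t / 2 eventually
  have hhalf : Tendsto (fun t => bF t / 2) atTop atTop := hbFtop.atTop_div_const two_pos
  have hmain : ∀ᶠ t in atTop, bF t / 2 ≤ bG t := by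
    filter_upwards [hhalf.eventually hkey, eventually_gt_atTop (1/(1 - F 0)),
      eventually_gt_atTop (0:ℝ), hbFtop.eventually (eventually_gt_atTop (0:ℝ))] with t hk ht0 htpos hbFpos
    obtain ⟨hkey1, hkey2⟩ := hk
    set m : ℝ := bF t / 2 with hm
    have hs_lt : m + u * f m < bF t := by
      have : bF t = m + m := by rw [hm]; ring
      linarith
    have hs_notin : ¬ (1 / (1 - F (m + u * f m)) ≥ t) := by
      intro hmem
      have := csInf_le (hbdd t ht0) hmem
      rw [← hbF] at this; linarith
    push_neg at hs_notin
    have hFs := hF1 (m + u * f m)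
    have h5 : 1/t < 1 - F (m + u * f m) := by
      rw [div_lt_iff₀ hFs] at hs_notin
      rw [div_lt_iff₀ htpos]
      nlinarith
    have h6 : 2/t < 1 - G m := by
      have : 2/t = 2 * (1/t) := by ring
      rw [this]; linarith
    have hGm : 0 < 1 - G m := lt_trans (by positivity) h6
    have h7 : 1/(1 - G m) < t := by
      rw [div_lt_iff₀ hGm]
      have h8 : 2/t * t = 2 := div_mul_cancel₀ 2 (ne_of_gt htpos)
      nlinarith
    rw [hbG]
    refine le_csInf (hneG t) fun s' hs' => ?_
    by_contra hcon
    push_neg at hcon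
    have h9 : 1 - G m ≤ 1 - G s' := by linarith [hGmono hcon.le]
    have h10 : 1/(1 - G s') ≤ 1/(1 - G m) := one_div_le_one_div_of_le hGm h9
    exact absurd hs' (by simp only [Set.mem_setOf_eq, ge_iff_le, not_le]; linarith)
  -- f (bF t) < bF t / 2 eventually
  have hfsmall : ∀ᶠ t in atTop, f (bF t) < bF t / 2 := by
    have e : ∀ᶠ y : ℝ in atTop, f y < y/2 := by
      filter_upwards [hfx.eventually (eventually_lt_nhds (show (0:ℝ) < 1/2 by norm_num)),
        eventually_gt_atTop (0:ℝ)] with y h1 h2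
      rw [div_lt_iff₀ h2] at h1
      linarith
    exact hbFtop.eventually e
  -- squeeze
  have hU : Tendsto ((fun x => (ℙ {ω | |Y ω| > 1 * f x ∧ X ω > x}).toReal /
      (ℙ {ω | X ω > x}).toReal) ∘ bF) atTop (nhds 0) := (hcond 1 one_pos).comp hbFtop
  refine tendsto_of_tendsto_of_tendsto_of_le_of_le' tendsto_const_nhds hU
    (Eventually.of_forall fun t => div_nonneg ENNReal.toReal_nonneg ENNReal.toReal_nonneg) ?_
  filter_upwards [hmain, hfsmall] with t h1 h2
  simp only [Function.comp_apply]
  have hnum : (ℙ {ω | X ω > bF t ∧ Y ω > bG t}).toReal ≤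
      (ℙ {ω | |Y ω| > 1 * f (bF t) ∧ X ω > bF t}).toReal := by
    refine ENNReal.toReal_mono (measure_ne_top _ _) (measure_mono fun ω hω => ?_)
    refine ⟨?_, hω.1⟩
    have hY : Y ω > bG t := hω.2
    have : 1 * f (bF t) = f (bF t) := one_mul _
    rw [this]
    calc f (bF t) < bF t / 2 := h2
      _ ≤ bG t := h1
      _ < Y ω := hY
      _ ≤ |Y ω| := le_abs_self _
  rcases eq_or_lt_of_le (ENNReal.toReal_nonneg :
      (0:ℝ) ≤ (ℙ {ω | X ω > bF t}).toReal) with hd | hd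
  · rw [← hd]; simp
  · exact (div_le_div_iff_of_pos_right hd).mpr hnum
end

section
/- If X and Y are nonnegative random variables, X has distribution F ∈ MDA(Λ) with auxiliary function f and infinite right endpoint, and for every L > 0, P(X > L f(x), Y > L f(x))/P(X > x) → 0 as x → ∞, then for every t > 0, P(Y > t f(x) | X > x) → 0 as x → ∞. -/
open MeasureTheory Filter Real

/-- For nonnegative risks, if the joint-tail condition holds for every `L > 0`, then
the conditional-tail condition holds: `P(Y > t f(x) | X > x) → 0` for every `t > 0`. -/
theorem stmt_5 {Ω : Type*} [MeasurableSpace Ω] (ℙ : Measure Ω) [IsProbabilityMeasure ℙ]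
    (X Y : Ω → ℝ) (hXm : Measurable X) (hYm : Measurable Y)
    (hXnn : ∀ ω, 0 ≤ X ω) (hYnn : ∀ ω, 0 ≤ Y ω)
    (F f : ℝ → ℝ)
    (hF : ∀ x, F x = (ℙ {ω | X ω ≤ x}).toReal)
    (hend : ∀ x, F x < 1)
    (hfpos : ∀ x, 0 < f x)
    (hfx : Tendsto (fun x => f x / x) atTop (nhds 0))
    (hMDA : ∀ x : ℝ, Tendsto (fun t => (1 - F (t + x * f t)) / (1 - F t))
      atTop (nhds (Real.exp (-x))))
    (hjoint : ∀ L > (0:ℝ), Tendsto (fun x =>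
      (ℙ {ω | X ω > L * f x ∧ Y ω > L * f x}).toReal / (ℙ {ω | X ω > x}).toReal)
      atTop (nhds 0)) :
    ∀ t > (0:ℝ), Tendsto (fun x =>
      (ℙ {ω | Y ω > t * f x ∧ X ω > x}).toReal / (ℙ {ω | X ω > x}).toReal)
      atTop (nhds 0) := by
  intro t ht
  have hbound : ∀ᶠ x in atTop,
      (ℙ {ω | Y ω > t * f x ∧ X ω > x}).toReal / (ℙ {ω | X ω > x}).toReal ≤
      (ℙ {ω | X ω > t * f x ∧ Y ω > t * f x}).toReal / (ℙ {ω | X ω > x}).toReal := by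
    have h1 : ∀ᶠ x in atTop, f x / x < 1 / t := by
      have := hfx.eventually (eventually_lt_nhds (by positivity : (0:ℝ) < 1 / t))
      exact this
    filter_upwards [h1, eventually_gt_atTop (0:ℝ)] with x hx hx0
    have hfl : t * f x < x := by
      have := (div_lt_div_iff₀ hx0 ht).mp hx
      nlinarith
    have hsub : {ω | Y ω > t * f x ∧ X ω > x} ⊆ {ω | X ω > t * f x ∧ Y ω > t * f x} := by
      intro ω hω
      exact ⟨lt_trans hfl hω.2, hω.1⟩
    have hmono : (ℙ {ω | Y ω > t * f x ∧ X ω > x}).toReal ≤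
        (ℙ {ω | X ω > t * f x ∧ Y ω > t * f x}).toReal := by
      apply ENNReal.toReal_mono (measure_ne_top _ _) (measure_mono hsub)
    exact div_le_div_of_nonneg_right hmono ENNReal.toReal_nonneg
  have hnn : ∀ᶠ x in atTop, 0 ≤
      (ℙ {ω | Y ω > t * f x ∧ X ω > x}).toReal / (ℙ {ω | X ω > x}).toReal := by
    filter_upwards with x
    positivity
  exact squeeze_zero' hnn hbound (hjoint t ht)
end

section
/- Let U ~ Uniform(0,1), X = -log U and Y = -log(1-U), so X and Y are standard Exponential(1) with auxiliary function f ≡ 1. Then P(X + Y > x) ∼ 2 P(X > x) = 2 e^{-x} as x → ∞. -/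
open MeasureTheory Filter Real

lemma stmt_7_map_eval {Ω : Type*} [MeasurableSpace Ω] (ℙ : Measure Ω)
    (U : Ω → ℝ) (hUm : Measurable U)
    (hU : Measure.map U ℙ = volume.restrict (Set.Ioo (0:ℝ) 1))
    {S : Set ℝ} (hS : MeasurableSet S) :
    ℙ (U ⁻¹' S) = volume (S ∩ Set.Ioo 0 1) := by
  rw [show ℙ (U ⁻¹' S) = Measure.map U ℙ S from (Measure.map_apply hUm hS).symm, hU,
    Measure.restrict_apply hS]

lemma stmt_7_quad {t : ℝ} (ht : 0 < t) (ht4 : t < 1/4) (u : ℝ) (hu0 : 0 < u) (hu1 : u < 1) :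
    u * (1 - u) < t ↔ u < (1 - Real.sqrt (1 - 4*t))/2 ∨ 1 - (1 - Real.sqrt (1 - 4*t))/2 < u := by
  set s := Real.sqrt (1 - 4*t) with hs
  have hs2 : s^2 = 1 - 4*t := Real.sq_sqrt (by linarith)
  have hs0 : 0 ≤ s := Real.sqrt_nonneg _
  have hs1 : s < 1 := by nlinarith
  constructor
  · intro h
    by_contra hc
    push_neg at hc
    obtain ⟨h1, h2⟩ := hc
    nlinarith
  · rintro (h | h) <;> nlinarith

/-- For `U ~ Uniform(0,1)`, `X = -log U`, `Y = -log(1-U)` are Exponential(1), and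
`P(X + Y > x) ∼ 2 P(X > x) = 2 e^{-x}` as `x → ∞`. -/
theorem stmt_7 {Ω : Type*} [MeasurableSpace Ω] (ℙ : Measure Ω) [IsProbabilityMeasure ℙ]
    (U : Ω → ℝ) (hUm : Measurable U)
    (hU : Measure.map U ℙ = volume.restrict (Set.Ioo (0:ℝ) 1)) :
    (∀ x ≥ (0:ℝ), (ℙ {ω | -Real.log (U ω) > x}).toReal = Real.exp (-x)) ∧
    Tendsto (fun x =>
      (ℙ {ω | (-Real.log (U ω)) + (-Real.log (1 - U ω)) > x}).toReal /
        (2 * Real.exp (-x))) atTop (nhds 1) := by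
  constructor
  · intro x hx
    have hS : MeasurableSet {u : ℝ | -Real.log u > x} := by
      exact measurableSet_lt measurable_const Real.measurable_log.neg
    have key : ℙ {ω | -Real.log (U ω) > x} = volume ({u : ℝ | -Real.log u > x} ∩ Set.Ioo 0 1) :=
      stmt_7_map_eval ℙ U hUm hU hS
    have hset : {u : ℝ | -Real.log u > x} ∩ Set.Ioo 0 1 = Set.Ioo 0 (Real.exp (-x)) := by
      ext u
      simp only [Set.mem_inter_iff, Set.mem_setOf_eq, Set.mem_Ioo]
      constructor
      · rintro ⟨h, h0, h1⟩
        refine ⟨h0, ?_⟩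
        rw [← Real.exp_log h0]
        exact Real.exp_lt_exp.2 (by linarith)
      · rintro ⟨h0, h1⟩
        have hlt1 : u < 1 := lt_of_lt_of_le h1 (by simpa using Real.exp_le_exp.2 (by linarith : -x ≤ 0))
        refine ⟨?_, h0, hlt1⟩
        have := (Real.log_lt_iff_lt_exp h0).2 h1
        linarith
    rw [key, hset, Real.volume_Ioo, sub_zero, ENNReal.toReal_ofReal (Real.exp_nonneg _)]
  · -- second part
    have hmain : ∀ x : ℝ, Real.exp (-x) < 1/4 →
        (ℙ {ω | (-Real.log (U ω)) + (-Real.log (1 - U ω)) > x}).toReal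
          = 1 - Real.sqrt (1 - 4 * Real.exp (-x)) := by
      intro x hx4
      set t := Real.exp (-x) with htdef
      have ht0 : 0 < t := Real.exp_pos _
      set s := Real.sqrt (1 - 4*t) with hsdef
      have hs2 : s^2 = 1 - 4*t := Real.sq_sqrt (by linarith)
      have hs0 : 0 ≤ s := Real.sqrt_nonneg _
      have hs1 : s < 1 := by nlinarith
      have hspos : 0 < s := Real.sqrt_pos.2 (by linarith)
      set a := (1 - s)/2 with hadef
      have ha0 : 0 < a := by simp only [hadef]; linarith
      have ha1 : a < 1 - a := by simp only [hadef]; linarith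
      have hS : MeasurableSet {u : ℝ | -Real.log u + -Real.log (1 - u) > x} := by
        exact measurableSet_lt measurable_const
          (Real.measurable_log.neg.add
            ((Real.measurable_log.comp (measurable_const.sub measurable_id)).neg))
      have key : ℙ {ω | (-Real.log (U ω)) + (-Real.log (1 - U ω)) > x}
          = volume ({u : ℝ | -Real.log u + -Real.log (1 - u) > x} ∩ Set.Ioo 0 1) :=
        stmt_7_map_eval ℙ U hUm hU hS
      have hset : {u : ℝ | -Real.log u + -Real.log (1 - u) > x} ∩ Set.Ioo 0 1
          = Set.Ioo 0 a ∪ Set.Ioo (1 - a) 1 := by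
        ext u
        simp only [Set.mem_inter_iff, Set.mem_setOf_eq, Set.mem_Ioo, Set.mem_union]
        constructor
        · rintro ⟨h, h0, h1⟩
          have h1u : 0 < 1 - u := by linarith
          have hlog : -Real.log u + -Real.log (1 - u) = -Real.log (u * (1 - u)) := by
            rw [Real.log_mul (ne_of_gt h0) (ne_of_gt h1u)]; ring
          rw [hlog] at h
          have hprod : 0 < u * (1 - u) := mul_pos h0 h1u
          have hlt' : Real.log (u * (1 - u)) < -x := by linarith
          have : u * (1 - u) < t := by
            simpa [htdef] using (Real.log_lt_iff_lt_exp hprod).1 hlt'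
          rcases (stmt_7_quad ht0 hx4 u h0 h1).1 this with hc | hc
          · exact Or.inl ⟨h0, hc⟩
          · exact Or.inr ⟨hc, h1⟩
        · intro h
          have h0 : 0 < u := by rcases h with ⟨h0, _⟩ | ⟨hg, h1⟩; exact h0; nlinarith
          have h1 : u < 1 := by rcases h with ⟨_, hlt⟩ | ⟨_, h1⟩; nlinarith; exact h1
          have h1u : 0 < 1 - u := by linarith
          have hlt : u * (1 - u) < t := by
            apply (stmt_7_quad ht0 hx4 u h0 h1).2
            rcases h with ⟨_, hlt⟩ | ⟨hg, _⟩
            · exact Or.inl hlt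
            · exact Or.inr hg
          have hprod : 0 < u * (1 - u) := mul_pos h0 h1u
          have hlog : -Real.log u + -Real.log (1 - u) = -Real.log (u * (1 - u)) := by
            rw [Real.log_mul (ne_of_gt h0) (ne_of_gt h1u)]; ring
          refine ⟨?_, h0, h1⟩
          rw [hlog]
          have := (Real.log_lt_iff_lt_exp hprod).2 hlt
          linarith
      rw [key, hset, measure_union ?_ measurableSet_Ioo, Real.volume_Ioo, Real.volume_Ioo,
        sub_zero, ← ENNReal.ofReal_add (le_of_lt ha0) (by linarith),
        ENNReal.toReal_ofReal (by linarith)]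
      · simp only [hadef]
        ring
      · apply Set.disjoint_left.2
        rintro u ⟨_, hu⟩ ⟨hu2, _⟩
        linarith
    -- eventual equality with nice function
    have hev : ∀ᶠ x in atTop, (ℙ {ω | (-Real.log (U ω)) + (-Real.log (1 - U ω)) > x}).toReal /
        (2 * Real.exp (-x)) = 2 / (1 + Real.sqrt (1 - 4 * Real.exp (-x))) := by
      filter_upwards [eventually_ge_atTop (2:ℝ)] with x hx
      have hx4 : Real.exp (-x) < 1/4 := by
        have h1 : Real.exp (-x) ≤ Real.exp (-2) := Real.exp_le_exp.2 (by linarith)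
        have h2 : Real.exp (-2) < 1/4 := by
          have h4 : (4:ℝ) < Real.exp 2 := by
            have h := Real.exp_one_gt_d9
            have he : Real.exp 2 = Real.exp 1 * Real.exp 1 := by
              rw [← Real.exp_add]; norm_num
            nlinarith
          have hi : (0:ℝ) < (Real.exp 2)⁻¹ := inv_pos.2 (Real.exp_pos 2)
          have hc : (Real.exp 2)⁻¹ * Real.exp 2 = 1 := inv_mul_cancel₀ (ne_of_gt (Real.exp_pos 2))
          rw [Real.exp_neg]
          nlinarith
        linarith
      rw [hmain x hx4]
      set t := Real.exp (-x) with htdef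
      have ht0 : 0 < t := Real.exp_pos _
      set s := Real.sqrt (1 - 4*t) with hsdef
      have hs2 : s^2 = 1 - 4*t := Real.sq_sqrt (by linarith)
      have hs0 : 0 ≤ s := Real.sqrt_nonneg _
      have h1s : (0:ℝ) < 1 + s := by linarith
      field_simp
      nlinarith
    refine Tendsto.congr' (Filter.EventuallyEq.symm hev) ?_
    have htend : Tendsto (fun x : ℝ => 1 + Real.sqrt (1 - 4 * Real.exp (-x))) atTop (nhds 2) := by
      have h0 : Tendsto (fun x : ℝ => Real.exp (-x)) atTop (nhds 0) :=
        Real.tendsto_exp_neg_atTop_nhds_zero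
      have h1 : Tendsto (fun x : ℝ => 1 - 4 * Real.exp (-x)) atTop (nhds 1) := by
        have := (h0.const_mul (4:ℝ)).const_sub (1:ℝ)
        simpa using this
      have h2 : Tendsto (fun x : ℝ => Real.sqrt (1 - 4 * Real.exp (-x))) atTop (nhds 1) := by
        have := (Real.continuous_sqrt.tendsto 1).comp h1
        simpa [Function.comp_def] using this
      have := h2.const_add (1:ℝ)
      simpa [one_add_one_eq_two] using this
    have := (tendsto_const_nhds (x := (2:ℝ))).div htend (by norm_num)
    simpa [Pi.div_def] using this
end

section
/- Let X₁, X₂, X₃ be i.i.d. with survival function exp(-(log x)^α) for x > 1 (α > 1), and set X = min(X₁, X₂), Y = min(X₂, X₃). Then X and Y are identically distributed with survival function exp(-2(log x)^α) for x > 1, and with auxiliary function f(x) = x/(2α(log x)^{α-1}), one has P(X > f(x), Y > f(x))/P(X > x) → 0 as x → ∞. -/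
open MeasureTheory Filter Real ProbabilityTheory

/-- For `X₁,X₂,X₃` i.i.d. with survival function `exp(-(log x)^α)` for `x > 1` (`α > 1`),
`X = X₁ ∧ X₂` and `Y = X₂ ∧ X₃` are identically distributed with survival function
`exp(-2(log x)^α)`, and with auxiliary function `f(x) = x/(2α(log x)^{α-1})` the
joint-tail condition `P(X > f(x), Y > f(x))/P(X > x) → 0` holds. -/
theorem stmt_9 {Ω : Type*} [MeasurableSpace Ω] (μpr : Measure Ω) [IsProbabilityMeasure μpr]
    (α : ℝ) (hα : 1 < α)
    (X : Fin 3 → Ω → ℝ) (hXm : ∀ i, Measurable (X i))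
    (hindep : iIndepFun X μpr)
    (hsurv : ∀ i, ∀ x : ℝ, 1 < x →
      (μpr {ω | X i ω > x}).toReal = Real.exp (-(Real.log x ^ α)))
    (hsurv1 : ∀ i, ∀ x : ℝ, x ≤ 1 → (μpr {ω | X i ω > x}).toReal = 1)
    (f : ℝ → ℝ) (hf : ∀ x, f x = x / (2 * α * Real.log x ^ (α - 1))) :
    (∀ x : ℝ, 1 < x →
      (μpr {ω | min (X 0 ω) (X 1 ω) > x}).toReal = Real.exp (-(2 * Real.log x ^ α)) ∧
      (μpr {ω | min (X 1 ω) (X 2 ω) > x}).toReal = Real.exp (-(2 * Real.log x ^ α))) ∧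
    Tendsto (fun x =>
      (μpr {ω | min (X 0 ω) (X 1 ω) > f x ∧ min (X 1 ω) (X 2 ω) > f x}).toReal /
        (μpr {ω | min (X 0 ω) (X 1 ω) > x}).toReal) atTop (nhds 0) := by
  have hα0 : (0:ℝ) < α := by linarith
  have h2α : (0:ℝ) < 2 * α := by linarith
  -- pairwise independence product
  have key2 : ∀ (i j : Fin 3), i ≠ j → ∀ a : ℝ,
      (μpr {ω | min (X i ω) (X j ω) > a}).toReal
        = (μpr {ω | X i ω > a}).toReal * (μpr {ω | X j ω > a}).toReal := by
    intro i j hij a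
    have hset : {ω | min (X i ω) (X j ω) > a}
        = X i ⁻¹' Set.Ioi a ∩ X j ⁻¹' Set.Ioi a := by
      ext ω
      simp [lt_min_iff, Set.mem_Ioi]
    have hprod := (hindep.indepFun hij).measure_inter_preimage_eq_mul
      (Set.Ioi a) (Set.Ioi a) measurableSet_Ioi measurableSet_Ioi
    rw [hset, hprod, ENNReal.toReal_mul]
    rfl
  -- triple independence product
  have key3 : ∀ a : ℝ,
      (μpr {ω | min (X 0 ω) (X 1 ω) > a ∧ min (X 1 ω) (X 2 ω) > a}).toReal
        = (μpr {ω | X 0 ω > a}).toReal * (μpr {ω | X 1 ω > a}).toReal *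
            (μpr {ω | X 2 ω > a}).toReal := by
    intro a
    have hset : {ω | min (X 0 ω) (X 1 ω) > a ∧ min (X 1 ω) (X 2 ω) > a}
        = ⋂ i, X i ⁻¹' Set.Ioi a := by
      ext ω
      simp only [Set.mem_setOf_eq, Set.mem_iInter, Set.mem_preimage, Set.mem_Ioi,
        gt_iff_lt, lt_min_iff]
      constructor
      · rintro ⟨⟨h0, h1⟩, -, h2⟩ i
        fin_cases i <;> assumption
      · intro h
        exact ⟨⟨h 0, h 1⟩, h 1, h 2⟩
    have hmeas : ∀ i : Fin 3,
        MeasurableSet[(inferInstance : MeasurableSpace ℝ).comap (X i)] (X i ⁻¹' Set.Ioi a) :=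
      fun i => ⟨Set.Ioi a, measurableSet_Ioi, rfl⟩
    rw [hset, hindep.meas_iInter hmeas, Fin.prod_univ_three, ENNReal.toReal_mul,
      ENNReal.toReal_mul]
    rfl
  -- first part
  have part1 : ∀ x : ℝ, 1 < x →
      (μpr {ω | min (X 0 ω) (X 1 ω) > x}).toReal = Real.exp (-(2 * Real.log x ^ α)) ∧
      (μpr {ω | min (X 1 ω) (X 2 ω) > x}).toReal = Real.exp (-(2 * Real.log x ^ α)) := by
    intro x hx
    constructor
    · rw [key2 0 1 (by decide) x, hsurv 0 x hx, hsurv 1 x hx, ← Real.exp_add]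
      congr 1; ring
    · rw [key2 1 2 (by decide) x, hsurv 1 x hx, hsurv 2 x hx, ← Real.exp_add]
      congr 1; ring
  refine ⟨part1, ?_⟩
  -- log of f
  have hlogf : ∀ x : ℝ, 1 < x → Real.log (f x)
      = Real.log x - (Real.log (2 * α) + (α - 1) * Real.log (Real.log x)) := by
    intro x hx
    have hL : 0 < Real.log x := Real.log_pos hx
    have hx0 : (0:ℝ) < x := by linarith
    have hpow : (0:ℝ) < Real.log x ^ (α - 1) := Real.rpow_pos_of_pos hL _
    rw [hf, Real.log_div (ne_of_gt hx0) (by positivity),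
      Real.log_mul (ne_of_gt h2α) (ne_of_gt hpow), Real.log_rpow hL]
  -- log y / y → 0
  have hlogdiv : Tendsto (fun y : ℝ => Real.log y / y) atTop (nhds 0) := by
    have := Real.tendsto_pow_log_div_mul_add_atTop 1 0 1 one_ne_zero
    simpa using this
  -- the quotient tends to 0
  have hq : Tendsto
      (fun x : ℝ => (Real.log (2 * α) + (α - 1) * Real.log (Real.log x)) / Real.log x)
      atTop (nhds 0) := by
    have h1 : Tendsto (fun y : ℝ => (Real.log (2 * α) + (α - 1) * Real.log y) / y)
        atTop (nhds 0) := by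
      have ha : Tendsto (fun y : ℝ => Real.log (2 * α) / y) atTop (nhds 0) :=
        tendsto_const_nhds.div_atTop tendsto_id
      have hb : Tendsto (fun y : ℝ => (α - 1) * (Real.log y / y)) atTop (nhds 0) := by
        simpa using hlogdiv.const_mul (α - 1)
      have hab := ha.add hb
      rw [add_zero] at hab
      refine hab.congr fun y => ?_
      ring
    exact h1.comp Real.tendsto_log_atTop
  -- ratio of logs tends to 1
  have hr : Tendsto (fun x : ℝ => Real.log (f x) / Real.log x) atTop (nhds 1) := by
    have h1 : Tendsto (fun x : ℝ =>
        1 - (Real.log (2 * α) + (α - 1) * Real.log (Real.log x)) / Real.log x)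
        atTop (nhds 1) := by
      simpa using tendsto_const_nhds.sub hq
    refine h1.congr' ?_
    filter_upwards [eventually_gt_atTop 1] with x hx
    have hL : 0 < Real.log x := Real.log_pos hx
    rw [hlogf x hx, sub_div, div_self hL.ne']
  -- f x > 1 eventually
  have hfx1 : ∀ᶠ x : ℝ in atTop, 1 < f x := by
    filter_upwards [hr.eventually (eventually_gt_nhds (by norm_num : (0:ℝ) < 1)),
      eventually_gt_atTop 1] with x hrx hx
    have hL : 0 < Real.log x := Real.log_pos hx
    have hx0 : (0:ℝ) < x := by linarith
    have hpow : (0:ℝ) < Real.log x ^ (α - 1) := Real.rpow_pos_of_pos hL _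
    have hfx0 : 0 < f x := by
      rw [hf]
      exact div_pos hx0 (by positivity)
    have hlf : 0 < Real.log (f x) := by
      have heq : Real.log (f x) = Real.log (f x) / Real.log x * Real.log x :=
        (div_mul_cancel₀ _ hL.ne').symm
      rw [heq]
      exact mul_pos hrx hL
    exact (Real.log_pos_iff hfx0.le).mp hlf
  -- (log f x / log x) ^ α → 1
  have hrα : Tendsto (fun x : ℝ => (Real.log (f x) / Real.log x) ^ α) atTop (nhds 1) := by
    have := hr.rpow_const (Or.inr hα0.le)
    simpa using this
  have hcoef : Tendsto (fun x : ℝ => 3 * (Real.log (f x) / Real.log x) ^ α - 2)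
      atTop (nhds 1) := by
    have h' := (hrα.const_mul 3).sub_const 2
    rw [show (3:ℝ) * 1 - 2 = 1 by norm_num] at h'
    exact h'
  have hLα : Tendsto (fun x : ℝ => Real.log x ^ α) atTop atTop :=
    (tendsto_rpow_atTop hα0).comp Real.tendsto_log_atTop
  have hmul : Tendsto (fun x : ℝ =>
      (3 * (Real.log (f x) / Real.log x) ^ α - 2) * Real.log x ^ α) atTop atTop :=
    hcoef.pos_mul_atTop one_pos hLα
  have hEtop : Tendsto (fun x : ℝ => 3 * Real.log (f x) ^ α - 2 * Real.log x ^ α)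
      atTop atTop := by
    refine hmul.congr' ?_
    filter_upwards [hfx1, eventually_gt_atTop 1] with x hfx hx
    have hL : 0 < Real.log x := Real.log_pos hx
    have hlf : 0 ≤ Real.log (f x) := (Real.log_pos hfx).le
    have hLα0 : Real.log x ^ α ≠ 0 := (Real.rpow_pos_of_pos hL α).ne'
    rw [Real.div_rpow hlf hL.le, sub_mul, ← mul_div_assoc, div_mul_cancel₀ _ hLα0]
  -- the ratio eventually equals an explicit exponential
  have hratio : ∀ᶠ x : ℝ in atTop,
      (μpr {ω | min (X 0 ω) (X 1 ω) > f x ∧ min (X 1 ω) (X 2 ω) > f x}).toReal /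
        (μpr {ω | min (X 0 ω) (X 1 ω) > x}).toReal
      = Real.exp (-(3 * Real.log (f x) ^ α - 2 * Real.log x ^ α)) := by
    filter_upwards [hfx1, eventually_gt_atTop 1] with x hfx hx
    rw [key3 (f x), hsurv 0 _ hfx, hsurv 1 _ hfx, hsurv 2 _ hfx, (part1 x hx).1,
      ← Real.exp_add, ← Real.exp_add, ← Real.exp_sub]
    congr 1; ring
  have hneg : Tendsto (fun x : ℝ => -(3 * Real.log (f x) ^ α - 2 * Real.log x ^ α))
      atTop atBot := tendsto_neg_atBot_iff.mpr hEtop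
  have hlim : Tendsto (fun x : ℝ =>
      Real.exp (-(3 * Real.log (f x) ^ α - 2 * Real.log x ^ α))) atTop (nhds 0) :=
    Real.tendsto_exp_atBot.comp hneg
  exact Tendsto.congr' (Filter.EventuallyEq.symm hratio) hlim
end

section
/- Let X₁, X₂, X₃ be i.i.d. with survival function exp(-(log x)^α), x>1 (α > 1), X = min(X₁,X₂), Y = min(X₂,X₃), and f(x) = x/(2α(log x)^{α-1}). Then for each t > 0, lim_{x→∞} P(X > x, Y > t f(x))/P(X > x) = 0. -/
open MeasureTheory Filter Real ProbabilityTheory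

/-- In the minimum construction (`X = X₁ ∧ X₂`, `Y = X₂ ∧ X₃` with i.i.d. `Xᵢ` having
survival function `exp(-(log x)^α)` for `x > 1`, `α > 1`), for each `t > 0`,
`P(X > x, Y > t f(x))/P(X > x) → 0` where `f(x) = x/(2α(log x)^{α-1})`. -/
theorem stmt_10 {Ω : Type*} [MeasurableSpace Ω] (μpr : Measure Ω) [IsProbabilityMeasure μpr]
    (α : ℝ) (hα : 1 < α)
    (X : Fin 3 → Ω → ℝ) (hXm : ∀ i, Measurable (X i))
    (hindep : iIndepFun X μpr)
    (hsurv : ∀ i, ∀ x : ℝ, 1 < x →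
      (μpr {ω | X i ω > x}).toReal = Real.exp (-(Real.log x ^ α)))
    (hsurv1 : ∀ i, ∀ x : ℝ, x ≤ 1 → (μpr {ω | X i ω > x}).toReal = 1)
    (f : ℝ → ℝ) (hf : ∀ x, f x = x / (2 * α * Real.log x ^ (α - 1))) :
    ∀ t > (0:ℝ), Tendsto (fun x =>
      (μpr {ω | min (X 0 ω) (X 1 ω) > x ∧ min (X 1 ω) (X 2 ω) > t * f x}).toReal /
        (μpr {ω | min (X 0 ω) (X 1 ω) > x}).toReal) atTop (nhds 0) := by
  -- factorization lemmas
  have factor3 : ∀ a b c : ℝ,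
      μpr ({ω | X 0 ω > a} ∩ {ω | X 1 ω > b} ∩ {ω | X 2 ω > c})
        = μpr {ω | X 0 ω > a} * μpr {ω | X 1 ω > b} * μpr {ω | X 2 ω > c} := by
    intro a b c
    set v : Fin 3 → ℝ := ![a, b, c] with hv
    have h := hindep.meas_iInter (s := fun i => {ω | X i ω > v i})
      (fun i => ⟨Set.Ioi (v i), measurableSet_Ioi, rfl⟩)
    rw [Fin.prod_univ_three] at h
    have hset : (⋂ i, {ω | X i ω > v i})
        = {ω | X 0 ω > a} ∩ {ω | X 1 ω > b} ∩ {ω | X 2 ω > c} := by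
      ext ω
      simp [Set.mem_iInter, Fin.forall_fin_succ, hv, and_assoc]
    rw [hset] at h
    simpa [hv] using h
  have factor2 : ∀ a b : ℝ,
      μpr ({ω | X 0 ω > a} ∩ {ω | X 1 ω > b})
        = μpr {ω | X 0 ω > a} * μpr {ω | X 1 ω > b} := by
    intro a b
    have h01 : IndepFun (X 0) (X 1) μpr := hindep.indepFun (by decide)
    have := h01.measure_inter_preimage_eq_mul (Set.Ioi a) (Set.Ioi b)
      measurableSet_Ioi measurableSet_Ioi
    exact this
  intro t ht
  -- f tends to infinity
  have hα1 : (0:ℝ) < α - 1 := by linarith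
  have hα0 : (0:ℝ) < α := by linarith
  have hD : Tendsto (fun x => 2 * α * Real.log x ^ (α - 1)) atTop atTop := by
    have h1 : Tendsto (fun x => Real.log x ^ (α - 1)) atTop atTop :=
      (tendsto_rpow_atTop hα1).comp Real.tendsto_log_atTop
    exact h1.const_mul_atTop (by positivity)
  have hflarge : ∀ᶠ x in atTop, x ^ (1/2 : ℝ) ≤ f x := by
    have hlo := isLittleO_log_rpow_rpow_atTop (s := (1/2 : ℝ)) (α - 1) (by norm_num)
    have hc : (0:ℝ) < 1 / (2 * α) := by positivity
    filter_upwards [hlo.bound hc, eventually_ge_atTop (Real.exp 1),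
      eventually_gt_atTop (0:ℝ)] with x hx hex hx0
    have hlog1 : (1:ℝ) ≤ Real.log x := by
      rw [show (1:ℝ) = Real.log (Real.exp 1) by simp]
      exact Real.log_le_log (Real.exp_pos 1) hex
    have hlogpos : (0:ℝ) < Real.log x ^ (α - 1) :=
      Real.rpow_pos_of_pos (by linarith) _
    have hxr : (0:ℝ) < x ^ (1/2 : ℝ) := Real.rpow_pos_of_pos hx0 _
    rw [Real.norm_eq_abs, Real.norm_eq_abs, abs_of_pos hlogpos, abs_of_pos hxr] at hx
    have hDle : 2 * α * Real.log x ^ (α - 1) ≤ x ^ (1/2 : ℝ) := by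
      rw [div_mul_eq_mul_div, le_div_iff₀ (by positivity)] at hx
      calc 2 * α * Real.log x ^ (α - 1) = Real.log x ^ (α - 1) * (2 * α) := by ring
        _ ≤ x ^ (1/2:ℝ) := by linarith [hx]
    have hDpos : (0:ℝ) < 2 * α * Real.log x ^ (α - 1) := by positivity
    rw [hf]
    calc x ^ (1/2 : ℝ) = x / x ^ (1/2:ℝ) := by
          rw [eq_div_iff hxr.ne', ← Real.rpow_add hx0]
          norm_num
      _ ≤ x / (2 * α * Real.log x ^ (α - 1)) :=
          div_le_div_of_nonneg_left hx0.le hDpos hDle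
  have hftop : Tendsto f atTop atTop :=
    tendsto_atTop_mono' _ hflarge (tendsto_rpow_atTop (by norm_num))
  have htf : Tendsto (fun x => t * f x) atTop atTop := hftop.const_mul_atTop ht
  -- eventually t * f x ≤ x
  have hle : ∀ᶠ x in atTop, t * f x ≤ x := by
    filter_upwards [hD.eventually_ge_atTop t, hD.eventually_ge_atTop 1,
      eventually_gt_atTop (0:ℝ)] with x hDt hD1 hx0
    rw [hf, mul_div_assoc']
    rw [div_le_iff₀ (by linarith)]
    calc t * x = x * t := by ring
      _ ≤ x * (2 * α * Real.log x ^ (α - 1)) :=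
        mul_le_mul_of_nonneg_left hDt hx0.le
  -- the limit function
  have hval : Tendsto (fun x => Real.exp (-(Real.log (t * f x) ^ α))) atTop (nhds 0) := by
    have h2 : Tendsto (fun x => Real.log (t * f x) ^ α) atTop atTop :=
      (tendsto_rpow_atTop hα0).comp (Real.tendsto_log_atTop.comp htf)
    exact Real.tendsto_exp_atBot.comp (tendsto_neg_atTop_atBot.comp h2)
  refine hval.congr' ?_
  filter_upwards [htf.eventually_gt_atTop 1, eventually_gt_atTop (1:ℝ), hle]
    with x htf1 hx1 hlex
  -- set equalities
  have hnum : {ω | min (X 0 ω) (X 1 ω) > x ∧ min (X 1 ω) (X 2 ω) > t * f x}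
      = {ω | X 0 ω > x} ∩ {ω | X 1 ω > x} ∩ {ω | X 2 ω > t * f x} := by
    ext ω
    simp only [Set.mem_setOf_eq, Set.mem_inter_iff, lt_min_iff, gt_iff_lt]
    constructor
    · rintro ⟨⟨h0, h1⟩, h2, h3⟩; exact ⟨⟨h0, h1⟩, h3⟩
    · rintro ⟨⟨h0, h1⟩, h3⟩; exact ⟨⟨h0, h1⟩, lt_of_le_of_lt hlex h1, h3⟩
  have hden : {ω | min (X 0 ω) (X 1 ω) > x} = {ω | X 0 ω > x} ∩ {ω | X 1 ω > x} := by
    ext ω; simp [lt_min_iff, and_comm]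
  have p0 := hsurv 0 x hx1
  have p1 := hsurv 1 x hx1
  have p2 := hsurv 2 (t * f x) htf1
  have hp0 : (0:ℝ) < (μpr {ω | X 0 ω > x}).toReal := by rw [p0]; exact Real.exp_pos _
  have hp1 : (0:ℝ) < (μpr {ω | X 1 ω > x}).toReal := by rw [p1]; exact Real.exp_pos _
  rw [hnum, hden, factor3, factor2, ENNReal.toReal_mul, ENNReal.toReal_mul,
    mul_div_cancel_left₀ _ (mul_pos hp0 hp1).ne', p2]
end

section
/- Let X ~ Lognormal(μ, σ²) and Y = e^{2μ}/X. Then X and Y are identically distributed, and P(X + Y > x) ∼ 2 P(X > x) as x → ∞. -/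
open MeasureTheory Filter Real ProbabilityTheory

noncomputable def Tg (s : ℝ) : ℝ := ∫ u in Set.Ioi s, Real.exp (-(1/2) * u^2)

lemma Tg_integrable : Integrable (fun u : ℝ => Real.exp (-(1/2) * u^2)) :=
  integrable_exp_neg_mul_sq (by norm_num)

lemma Tg_nonneg (s : ℝ) : 0 ≤ Tg s :=
  setIntegral_nonneg measurableSet_Ioi fun u _ => (Real.exp_pos _).le

lemma Tg_split {a b : ℝ} (hab : a ≤ b) :
    Tg a = (∫ u in Set.Ioc a b, Real.exp (-(1/2) * u^2)) + Tg b := by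
  rw [Tg, Tg, ← Set.Ioc_union_Ioi_eq_Ioi hab,
    setIntegral_union ?hd measurableSet_Ioi Tg_integrable.integrableOn Tg_integrable.integrableOn]
  case hd => exact Set.disjoint_left.mpr fun x hx hx' => absurd hx.2 (not_le.mpr hx')

lemma Tg_chunk_le {a b : ℝ} (ha : 0 ≤ a) (hab : a ≤ b) :
    (∫ u in Set.Ioc a b, Real.exp (-(1/2) * u^2)) ≤ (b - a) * Real.exp (-(1/2) * a^2) := by
  calc (∫ u in Set.Ioc a b, Real.exp (-(1/2) * u^2))
      ≤ ∫ _u in Set.Ioc a b, Real.exp (-(1/2) * a^2) := by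
        refine setIntegral_mono_on Tg_integrable.integrableOn ((integrableOn_const_iff (C := Real.exp (-(1/2) * a^2))).mpr ?_)
          measurableSet_Ioc fun u hu => ?_
        · right; rw [Real.volume_Ioc]; exact ENNReal.ofReal_lt_top
        · have h2 : a^2 ≤ u^2 := by nlinarith [hu.1]
          exact Real.exp_le_exp.mpr (by nlinarith)
    _ = (b - a) * Real.exp (-(1/2) * a^2) := by
        rw [setIntegral_const, measureReal_def, Real.volume_Ioc, smul_eq_mul,
          ENNReal.toReal_ofReal (by linarith)]

lemma Tg_chunk_ge {a b : ℝ} (ha : 0 ≤ a) (hab : a ≤ b) :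
    (b - a) * Real.exp (-(1/2) * b^2) ≤ (∫ u in Set.Ioc a b, Real.exp (-(1/2) * u^2)) := by
  calc (b - a) * Real.exp (-(1/2) * b^2)
      = ∫ _u in Set.Ioc a b, Real.exp (-(1/2) * b^2) := by
        rw [setIntegral_const, measureReal_def, Real.volume_Ioc, smul_eq_mul,
          ENNReal.toReal_ofReal (by linarith)]
    _ ≤ _ := by
        refine setIntegral_mono_on ((integrableOn_const_iff (C := Real.exp (-(1/2) * b^2))).mpr ?_) Tg_integrable.integrableOn
          measurableSet_Ioc fun u hu => ?_
        · right; rw [Real.volume_Ioc]; exact ENNReal.ofReal_lt_top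
        · have h2 : u^2 ≤ b^2 := by nlinarith [hu.1, hu.2]
          exact Real.exp_le_exp.mpr (by nlinarith)

lemma Tg_lb {s : ℝ} (hs : 0 < s) :
    (1/s) * Real.exp (-(1/2) * (s + 1/s)^2) ≤ Tg s := by
  have h0 : 0 < 1/s := one_div_pos.mpr hs
  have h1 : s ≤ s + 1/s := by linarith
  calc (1/s) * Real.exp (-(1/2) * (s + 1/s)^2)
      = ((s + 1/s) - s) * Real.exp (-(1/2) * (s + 1/s)^2) := by ring_nf
    _ ≤ ∫ u in Set.Ioc s (s + 1/s), Real.exp (-(1/2) * u^2) := Tg_chunk_ge hs.le h1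
    _ ≤ Tg s := by
        rw [Tg_split h1]
        linarith [Tg_nonneg (s + 1/s)]

lemma Tg_pos {s : ℝ} (hs : 0 < s) : 0 < Tg s :=
  lt_of_lt_of_le (by positivity) (Tg_lb hs)

lemma Tg_ratio {t η : ℝ} (ht : 1 ≤ t) (hη0 : 0 ≤ η) (hη1 : η ≤ 1) :
    Tg (t - η) ≤ (1 + t * η * Real.exp (t * η + 2)) * Tg t := by
  have ht0 : 0 < t := lt_of_lt_of_le one_pos ht
  have htη : 0 ≤ t - η := by linarith
  have hsplit := Tg_split (show t - η ≤ t by linarith)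
  have hchunk : (∫ u in Set.Ioc (t - η) t, Real.exp (-(1/2) * u^2))
      ≤ η * Real.exp (-(1/2) * (t - η)^2) := by
    have := Tg_chunk_le htη (show t - η ≤ t by linarith)
    simpa using this
  have hinv : 1/t ≤ 1 := by rw [div_le_one ht0]; exact ht
  have hexp : Real.exp (-(1/2) * (t - η)^2)
      ≤ Real.exp (t * η + 2) * Real.exp (-(1/2) * (t + 1/t)^2) := by
    rw [← Real.exp_add]
    apply Real.exp_le_exp.mpr
    have h2 : (1/t)^2 ≤ 1 := by nlinarith [one_div_pos.mpr ht0]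
    have h3 : t * (1/t) = 1 := mul_one_div_cancel ht0.ne'
    nlinarith
  have hlb := Tg_lb ht0
  have key : η * Real.exp (-(1/2) * (t - η)^2) ≤ t * η * Real.exp (t * η + 2) * Tg t := by
    calc η * Real.exp (-(1/2) * (t - η)^2)
        ≤ η * (Real.exp (t * η + 2) * Real.exp (-(1/2) * (t + 1/t)^2)) :=
          mul_le_mul_of_nonneg_left hexp hη0
      _ = t * η * Real.exp (t * η + 2) * ((1/t) * Real.exp (-(1/2) * (t + 1/t)^2)) := by
          field_simp
      _ ≤ t * η * Real.exp (t * η + 2) * Tg t := by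
          apply mul_le_mul_of_nonneg_left hlb
          positivity
  have hTle : Tg (t - η) ≤ η * Real.exp (-(1/2) * (t - η)^2) + Tg t := by
    rw [hsplit]; linarith
  calc Tg (t - η) ≤ η * Real.exp (-(1/2) * (t - η)^2) + Tg t := hTle
    _ ≤ t * η * Real.exp (t * η + 2) * Tg t + Tg t := by linarith
    _ = (1 + t * η * Real.exp (t * η + 2)) * Tg t := by ring

lemma gpdf_eq (u : ℝ) : gaussianPDFReal 0 1 u = (Real.sqrt (2*π))⁻¹ * Real.exp (-(1/2) * u^2) := by
  simp [gaussianPDFReal]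
  exact Or.inl (by ring)

lemma gpdf_even (u : ℝ) : gaussianPDFReal 0 1 (-u) = gaussianPDFReal 0 1 u := by
  simp [gaussianPDFReal]

lemma gauss_tail (s : ℝ) :
    gaussianReal 0 1 (Set.Ioi s) = ENNReal.ofReal ((Real.sqrt (2*π))⁻¹ * Tg s) := by
  rw [gaussianReal_apply_eq_integral _ one_ne_zero]
  congr 1
  rw [setIntegral_congr_fun measurableSet_Ioi (fun x _ => gpdf_eq x), integral_const_mul _ _]
  rfl

lemma gauss_sym_Iio (s : ℝ) :
    gaussianReal 0 1 (Set.Iio s) = gaussianReal 0 1 (Set.Ioi (-s)) := by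
  rw [gaussianReal_apply_eq_integral _ one_ne_zero,
      gaussianReal_apply_eq_integral _ one_ne_zero]
  congr 1
  have h1 : ∫ x in Set.Ioi (-s), gaussianPDFReal 0 1 x
      = ∫ x in Set.Ioi (-s), gaussianPDFReal 0 1 (-x) :=
    setIntegral_congr_fun measurableSet_Ioi fun x _ => (gpdf_even x).symm
  rw [h1, integral_comp_neg_Ioi, neg_neg,
    setIntegral_congr_set Iio_ae_eq_Iic]

lemma gauss_sym_Ici (s : ℝ) :
    gaussianReal 0 1 (Set.Ici (-s)) = gaussianReal 0 1 (Set.Iic s) := by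
  rw [gaussianReal_apply_eq_integral _ one_ne_zero,
      gaussianReal_apply_eq_integral _ one_ne_zero]
  congr 1
  have h1 : ∫ x in Set.Iic s, gaussianPDFReal 0 1 x
      = ∫ x in Set.Iic s, gaussianPDFReal 0 1 (-x) :=
    setIntegral_congr_fun measurableSet_Iic fun x _ => (gpdf_even x).symm
  rw [h1, integral_comp_neg_Iic, setIntegral_congr_set Ioi_ae_eq_Ici]

lemma tendsto_v (μ σ : ℝ) (hσ : 0 < σ) :
    Tendsto (fun x => (Real.log x - μ) * (Real.log x - Real.log (x-1)) / (σ * σ))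
      atTop (nhds 0) := by
  have h3 : (fun x : ℝ => Real.log x - μ) =o[atTop] (id : ℝ → ℝ) :=
    Real.isLittleO_log_id_atTop.sub (Asymptotics.isLittleO_const_id_atTop μ)
  have h4 : (id : ℝ → ℝ) =O[atTop] (fun x => x - 1) := by
    rw [Asymptotics.isBigO_iff]
    refine ⟨2, ?_⟩
    filter_upwards [eventually_ge_atTop (2:ℝ)] with x hx
    rw [Real.norm_eq_abs, Real.norm_eq_abs, id, abs_of_nonneg (by linarith),
      abs_of_nonneg (by linarith)]
    linarith
  have hlf : Tendsto (fun x => (Real.log x - μ) / (x - 1)) atTop (nhds 0) :=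
    (h3.trans_isBigO h4).tendsto_div_nhds_zero
  have hub : Tendsto (fun x => (Real.log x - μ) / (x - 1) * (σ*σ)⁻¹) atTop (nhds 0) := by
    have := hlf.mul_const (σ*σ)⁻¹
    rwa [zero_mul] at this
  refine tendsto_of_tendsto_of_tendsto_of_le_of_le' tendsto_const_nhds hub ?_ ?_
  · filter_upwards [eventually_ge_atTop (2:ℝ), eventually_ge_atTop (Real.exp μ)] with x hx2 hxμ
    have h0 : (0:ℝ) < x - 1 := by linarith
    have ha : 0 ≤ Real.log x - μ := by
      have := (Real.le_log_iff_exp_le (by linarith : (0:ℝ) < x)).mpr hxμ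
      linarith
    have hb : 0 ≤ Real.log x - Real.log (x-1) :=
      sub_nonneg.mpr (Real.log_le_log h0 (by linarith))
    positivity
  · filter_upwards [eventually_ge_atTop (2:ℝ), eventually_ge_atTop (Real.exp μ)] with x hx2 hxμ
    have h0 : (0:ℝ) < x - 1 := by linarith
    have ha : 0 ≤ Real.log x - μ := by
      have := (Real.le_log_iff_exp_le (by linarith : (0:ℝ) < x)).mpr hxμ
      linarith
    have hc : Real.log x - Real.log (x-1) ≤ (x-1)⁻¹ := by
      have he : Real.log x - Real.log (x-1) = Real.log (x/(x-1)) :=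
        (Real.log_div (by linarith) h0.ne').symm
      have h2 := Real.log_le_sub_one_of_pos (show (0:ℝ) < x/(x-1) by positivity)
      have h3 : x/(x-1) - 1 = (x-1)⁻¹ := by field_simp; ring
      rw [he]; linarith [h2, h3.le, h3.ge]
    calc (Real.log x - μ) * (Real.log x - Real.log (x-1)) / (σ*σ)
        = (Real.log x - μ) * (Real.log x - Real.log (x-1)) * (σ*σ)⁻¹ := by
          rw [div_eq_mul_inv]
      _ ≤ (Real.log x - μ) * (x-1)⁻¹ * (σ*σ)⁻¹ :=
          mul_le_mul_of_nonneg_right (mul_le_mul_of_nonneg_left hc ha)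
            (inv_nonneg.mpr (by positivity))
      _ = (Real.log x - μ) / (x - 1) * (σ*σ)⁻¹ := by rw [div_eq_mul_inv]

set_option maxHeartbeats 1000000 in
/-- For `X ~ Lognormal(μ,σ²)` (i.e. `X = exp(μ + σZ)`, `Z` standard normal) and
`Y = e^{2μ}/X`, the variables `X` and `Y` are identically distributed and
`P(X + Y > x) ∼ 2 P(X > x)` as `x → ∞`. -/
theorem stmt_11 {Ω : Type*} [MeasurableSpace Ω] (μpr : Measure Ω) [IsProbabilityMeasure μpr]
    (μ σ : ℝ) (hσ : 0 < σ)
    (Z : Ω → ℝ) (hZm : Measurable Z)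
    (hZ : Measure.map Z μpr = gaussianReal 0 1)
    (X Y : Ω → ℝ)
    (hX : ∀ ω, X ω = Real.exp (μ + σ * Z ω))
    (hY : ∀ ω, Y ω = Real.exp (2 * μ) / X ω) :
    (∀ x : ℝ, μpr {ω | X ω ≤ x} = μpr {ω | Y ω ≤ x}) ∧
    Tendsto (fun x =>
      (μpr {ω | X ω + Y ω > x}).toReal / (μpr {ω | X ω > x}).toReal)
      atTop (nhds 2) := by
  have hXpos : ∀ ω, 0 < X ω := fun ω => by rw [hX]; exact Real.exp_pos _
  have hYdef : ∀ ω, Y ω = Real.exp (μ - σ * Z ω) := by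
    intro ω; rw [hY, hX, ← Real.exp_sub]; congr 1; ring
  have hYpos : ∀ ω, 0 < Y ω := fun ω => by rw [hYdef]; exact Real.exp_pos _
  have hXY : ∀ ω, X ω * Y ω = Real.exp (2*μ) := by
    intro ω
    rw [hY, mul_comm, div_mul_cancel₀ _ (hXpos ω).ne']
  have hmap : ∀ S : Set ℝ, MeasurableSet S → μpr (Z ⁻¹' S) = gaussianReal 0 1 S := by
    intro S hS; rw [← hZ, Measure.map_apply hZm hS]
  have hAset : ∀ x : ℝ, 0 < x → {ω | X ω > x} = Z ⁻¹' Set.Ioi ((Real.log x - μ)/σ) := by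
    intro x hx; ext ω
    simp only [Set.mem_setOf_eq, Set.mem_preimage, Set.mem_Ioi, gt_iff_lt, hX ω]
    rw [← Real.log_lt_iff_lt_exp hx, div_lt_iff₀ hσ]
    constructor <;> intro h <;> nlinarith
  have hBset : ∀ x : ℝ, 0 < x → {ω | Y ω > x} = Z ⁻¹' Set.Iio ((μ - Real.log x)/σ) := by
    intro x hx; ext ω
    simp only [Set.mem_setOf_eq, Set.mem_preimage, Set.mem_Iio, gt_iff_lt, hYdef ω]
    rw [← Real.log_lt_iff_lt_exp hx, lt_div_iff₀ hσ]
    constructor <;> intro h <;> nlinarith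
  have hAle : ∀ x : ℝ, 0 < x → {ω | X ω ≤ x} = Z ⁻¹' Set.Iic ((Real.log x - μ)/σ) := by
    intro x hx; ext ω
    simp only [Set.mem_setOf_eq, Set.mem_preimage, Set.mem_Iic, hX ω]
    rw [← Real.le_log_iff_exp_le hx, le_div_iff₀ hσ]
    constructor <;> intro h <;> nlinarith
  have hBle : ∀ x : ℝ, 0 < x → {ω | Y ω ≤ x} = Z ⁻¹' Set.Ici ((μ - Real.log x)/σ) := by
    intro x hx; ext ω
    simp only [Set.mem_setOf_eq, Set.mem_preimage, Set.mem_Ici, hYdef ω]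
    rw [← Real.le_log_iff_exp_le hx, div_le_iff₀ hσ]
    constructor <;> intro h <;> nlinarith
  have hPA : ∀ x : ℝ, 0 < x →
      μpr {ω | X ω > x} = ENNReal.ofReal ((Real.sqrt (2*π))⁻¹ * Tg ((Real.log x - μ)/σ)) := by
    intro x hx
    rw [hAset x hx, hmap _ measurableSet_Ioi, gauss_tail]
  have hPB : ∀ x : ℝ, 0 < x → μpr {ω | Y ω > x} = μpr {ω | X ω > x} := by
    intro x hx
    rw [hBset x hx, hmap _ measurableSet_Iio, gauss_sym_Iio,
      show -((μ - Real.log x)/σ) = (Real.log x - μ)/σ by ring, gauss_tail, hPA x hx]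
  constructor
  · intro x
    rcases le_or_gt x 0 with hx | hx
    · have h1 : {ω | X ω ≤ x} = ∅ := by
        ext ω
        simp only [Set.mem_setOf_eq, Set.mem_empty_iff_false, iff_false, not_le]
        exact lt_of_le_of_lt hx (hXpos ω)
      have h2 : {ω | Y ω ≤ x} = ∅ := by
        ext ω
        simp only [Set.mem_setOf_eq, Set.mem_empty_iff_false, iff_false, not_le]
        exact lt_of_le_of_lt hx (hYpos ω)
      rw [h1, h2]
    · rw [hAle x hx, hBle x hx, hmap _ measurableSet_Iic, hmap _ measurableSet_Ici,
        show (μ - Real.log x)/σ = -((Real.log x - μ)/σ) by ring, gauss_sym_Ici]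
  · -- the tail limit
    have hXm : Measurable X := by
      have hfe : X = fun ω => Real.exp (μ + σ * Z ω) := funext hX
      rw [hfe]
      exact Real.measurable_exp.comp (measurable_const.add (measurable_const.mul hZm))
    have hYm : Measurable Y := by
      have hfe : Y = fun ω => Real.exp (μ - σ * Z ω) := funext hYdef
      rw [hfe]
      exact Real.measurable_exp.comp (measurable_const.sub (measurable_const.mul hZm))
    have hmB : ∀ x : ℝ, MeasurableSet {ω | Y ω > x} := fun x =>
      measurableSet_lt measurable_const hYm
    have hPtoReal : ∀ x : ℝ, 0 < x →
        (μpr {ω | X ω > x}).toReal = (Real.sqrt (2*π))⁻¹ * Tg ((Real.log x - μ)/σ) := by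
      intro x hx
      rw [hPA x hx, ENNReal.toReal_ofReal
        (mul_nonneg (inv_nonneg.mpr (Real.sqrt_nonneg _)) (Tg_nonneg _))]
    have hlow : ∀ x : ℝ, Real.exp μ ≤ x →
        μpr {ω | X ω > x} + μpr {ω | Y ω > x} ≤ μpr {ω | X ω + Y ω > x} := by
      intro x hx
      have hee : Real.exp (2*μ) = Real.exp μ * Real.exp μ := by
        rw [← Real.exp_add]; ring_nf
      have hdisj : Disjoint {ω | X ω > x} {ω | Y ω > x} := by
        rw [Set.disjoint_left]
        intro ω h1 h2
        simp only [Set.mem_setOf_eq, gt_iff_lt] at h1 h2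
        have hxy := hXY ω
        nlinarith [Real.exp_pos μ, hXpos ω, hYpos ω]
      rw [← measure_union hdisj (hmB x)]
      apply measure_mono
      intro ω hω
      simp only [Set.mem_union, Set.mem_setOf_eq, gt_iff_lt] at *
      rcases hω with h | h
      · linarith [hYpos ω]
      · linarith [hXpos ω]
    have hup : ∀ x : ℝ, 2*Real.exp (2*μ) ≤ x → 2 ≤ x →
        μpr {ω | X ω + Y ω > x} ≤ μpr {ω | X ω > x - 1} + μpr {ω | Y ω > x - 1} := by
      intro x hx h2
      refine le_trans (measure_mono ?_) (measure_union_le _ _)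
      intro ω hω
      simp only [Set.mem_setOf_eq, Set.mem_union, gt_iff_lt] at *
      have hxy := hXY ω
      have hXp := hXpos ω
      have hYp := hYpos ω
      have hep := Real.exp_pos (2*μ)
      rcases le_total (X ω) (Y ω) with h | h
      · right
        have hY2 : x < 2 * Y ω := by linarith
        have hX1 : X ω ≤ 1 := le_of_mul_le_mul_right (by rw [hxy, one_mul]; linarith) hYp
        linarith
      · left
        have hY2 : x < 2 * X ω := by linarith
        have hY1 : Y ω ≤ 1 := le_of_mul_le_mul_right
          (by rw [mul_comm] at hxy; rw [hxy, one_mul]; linarith) hXp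
        linarith
    set W : ℝ → ℝ := fun x => ((Real.log x - μ)/σ) * ((Real.log x - Real.log (x-1))/σ) with hWdef
    have hW0 : Tendsto W atTop (nhds 0) := by
      refine (tendsto_v μ σ hσ).congr fun x => ?_
      rw [hWdef]
      field_simp
    have hBlim : Tendsto (fun x => 2*(1 + W x * Real.exp (W x + 2))) atTop (nhds 2) := by
      have hcont : Continuous (fun y : ℝ => 2*(1 + y * Real.exp (y + 2))) :=
        continuous_const.mul (continuous_const.add (continuous_id.mul
          (Real.continuous_exp.comp (continuous_id.add continuous_const))))
      have hc2 := (hcont.tendsto 0).comp hW0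
      simpa [Function.comp_def] using hc2
    have hEv : ∀ᶠ x in atTop,
        2 ≤ (μpr {ω | X ω + Y ω > x}).toReal / (μpr {ω | X ω > x}).toReal ∧
        (μpr {ω | X ω + Y ω > x}).toReal / (μpr {ω | X ω > x}).toReal
          ≤ 2*(1 + W x * Real.exp (W x + 2)) := by
      filter_upwards [eventually_ge_atTop (2:ℝ), eventually_ge_atTop (2*Real.exp (2*μ)),
        eventually_ge_atTop (Real.exp μ), eventually_ge_atTop (Real.exp (μ+σ)),
        eventually_ge_atTop (1 + 1/σ)] with x h2 hA hC hD hE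
      have hx0 : (0:ℝ) < x := by linarith
      have hx1 : (0:ℝ) < x - 1 := by linarith
      -- t ≥ 1
      have hlog : μ + σ ≤ Real.log x := (Real.le_log_iff_exp_le hx0).mpr hD
      have ht1 : 1 ≤ (Real.log x - μ)/σ := by
        rw [le_div_iff₀ hσ, one_mul]; linarith
      have ht0 : 0 < (Real.log x - μ)/σ := lt_of_lt_of_le one_pos ht1
      -- η ∈ [0,1]
      have hη0 : 0 ≤ (Real.log x - Real.log (x-1))/σ :=
        div_nonneg (sub_nonneg.mpr (Real.log_le_log hx1 (by linarith))) hσ.le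
      have hc : Real.log x - Real.log (x-1) ≤ (x-1)⁻¹ := by
        have he : Real.log x - Real.log (x-1) = Real.log (x/(x-1)) :=
          (Real.log_div (by linarith) hx1.ne').symm
        have hle := Real.log_le_sub_one_of_pos (show (0:ℝ) < x/(x-1) by positivity)
        have h3 : x/(x-1) - 1 = (x-1)⁻¹ := by field_simp; ring
        rw [he]; linarith [hle, h3.le, h3.ge]
      have hη1 : (Real.log x - Real.log (x-1))/σ ≤ 1 := by
        rw [div_le_one hσ]
        have hinv : (x-1)⁻¹ ≤ σ := by
          rw [inv_le_comm₀ hx1 hσ, inv_eq_one_div]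
          linarith
        linarith
      -- positivity of P x
      have hTpos : 0 < Tg ((Real.log x - μ)/σ) := Tg_pos ht0
      have hsq : (0:ℝ) < (Real.sqrt (2*π))⁻¹ := by
        rw [inv_pos]
        exact Real.sqrt_pos.mpr (by positivity)
      have hPpos : 0 < (μpr {ω | X ω > x}).toReal := by
        rw [hPtoReal x hx0]; positivity
      -- lower bound
      have hlow' := hlow x hC
      have hlowR : 2 * (μpr {ω | X ω > x}).toReal ≤ (μpr {ω | X ω + Y ω > x}).toReal := by
        have := ENNReal.toReal_le_toReal
          (ENNReal.add_ne_top.mpr ⟨measure_ne_top _ _, measure_ne_top _ _⟩)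
          (measure_ne_top μpr _) |>.mpr hlow'
        rw [ENNReal.toReal_add (measure_ne_top _ _) (measure_ne_top _ _), hPB x hx0] at this
        linarith
      -- upper bound
      have hup' := hup x hA h2
      have hupR : (μpr {ω | X ω + Y ω > x}).toReal ≤ 2 * (μpr {ω | X ω > x - 1}).toReal := by
        have := ENNReal.toReal_le_toReal (measure_ne_top μpr _)
          (ENNReal.add_ne_top.mpr ⟨measure_ne_top _ _, measure_ne_top _ _⟩) |>.mpr hup'
        rw [ENNReal.toReal_add (measure_ne_top _ _) (measure_ne_top _ _), hPB (x-1) hx1] at this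
        linarith
      have htshift : (Real.log (x-1) - μ)/σ
          = (Real.log x - μ)/σ - (Real.log x - Real.log (x-1))/σ := by ring
      have hration := Tg_ratio ht1 hη0 hη1
      have hPupper : (μpr {ω | X ω > x - 1}).toReal
          ≤ (1 + W x * Real.exp (W x + 2)) * (μpr {ω | X ω > x}).toReal := by
        rw [hPtoReal (x-1) hx1, hPtoReal x hx0, htshift, hWdef]
        calc (Real.sqrt (2*π))⁻¹
              * Tg ((Real.log x - μ)/σ - (Real.log x - Real.log (x-1))/σ)
            ≤ (Real.sqrt (2*π))⁻¹ * ((1 + ((Real.log x - μ)/σ) * ((Real.log x - Real.log (x-1))/σ)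
                * Real.exp (((Real.log x - μ)/σ) * ((Real.log x - Real.log (x-1))/σ) + 2))
                * Tg ((Real.log x - μ)/σ)) :=
              mul_le_mul_of_nonneg_left hration hsq.le
          _ = (1 + ((Real.log x - μ)/σ) * ((Real.log x - Real.log (x-1))/σ)
                * Real.exp (((Real.log x - μ)/σ) * ((Real.log x - Real.log (x-1))/σ) + 2))
                * ((Real.sqrt (2*π))⁻¹ * Tg ((Real.log x - μ)/σ)) := by ring
      constructor
      · rw [le_div_iff₀ hPpos]; linarith
      · rw [div_le_iff₀ hPpos]
        calc (μpr {ω | X ω + Y ω > x}).toReal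
            ≤ 2 * (μpr {ω | X ω > x - 1}).toReal := hupR
          _ ≤ 2 * ((1 + W x * Real.exp (W x + 2)) * (μpr {ω | X ω > x}).toReal) := by
              linarith [hPupper]
          _ = 2 * (1 + W x * Real.exp (W x + 2)) * (μpr {ω | X ω > x}).toReal := by ring
    exact tendsto_of_tendsto_of_tendsto_of_le_of_le' tendsto_const_nhds hBlim
      (hEv.mono fun x h => h.1) (hEv.mono fun x h => h.2)
end

section
/- Let F ∈ MDA(Λ) with auxiliary function f satisfying liminf_{x→∞} f(x) = δ > 0, supported on [0,∞) with inf{x : F(x)>0} = 0 and sup{x : F(x)<1} = ∞. Let U ~ Uniform(0,1), X = F⁻¹(U) (generalized inverse), Y = F⁻¹(1-U). Then P(X + Y > x) ∼ 2 P(X > x) as x → ∞. -/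
open MeasureTheory Filter Real

/-- Let `F ∈ MDA(Λ)` with auxiliary function `f` having `liminf f = δ > 0`, supported on
`[0,∞)` with lower endpoint `0` and infinite right endpoint. For `U ~ Uniform(0,1)`,
`X = F⁻¹(U)` and `Y = F⁻¹(1-U)` (generalized inverses, countermonotonic), one has
`P(X + Y > x) ∼ 2 P(X > x)`. -/
theorem stmt_12 {Ω : Type*} [MeasurableSpace Ω] (ℙ : Measure Ω) [IsProbabilityMeasure ℙ]
    (F f : ℝ → ℝ) (δ : ℝ) (hδ : 0 < δ)
    (hmono : Monotone F) (hrange : ∀ x, 0 ≤ F x ∧ F x ≤ 1)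
    (hsupp : ∀ x < (0:ℝ), F x = 0)
    (hlow : sInf {x : ℝ | 0 < F x} = 0)
    (hend : ∀ x, F x < 1)
    (hfpos : ∀ x, 0 < f x)
    (hliminf : Filter.liminf f atTop = δ)
    (hself : ∀ x : ℝ, Tendsto (fun t => f (t + x * f t) / f t) atTop (nhds 1))
    (hMDA : ∀ x : ℝ, Tendsto (fun t => (1 - F (t + x * f t)) / (1 - F t))
      atTop (nhds (Real.exp (-x))))
    (U : Ω → ℝ) (hUm : Measurable U)
    (hU : Measure.map U ℙ = volume.restrict (Set.Ioo (0:ℝ) 1))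
    (Finv : ℝ → ℝ) (hFinv : ∀ p, Finv p = sInf {x : ℝ | p ≤ F x})
    (X Y : Ω → ℝ)
    (hX : ∀ ω, X ω = Finv (U ω)) (hY : ∀ ω, Y ω = Finv (1 - U ω)) :
    Tendsto (fun x =>
      (ℙ {ω | X ω + Y ω > x}).toReal / (ℙ {ω | X ω > x}).toReal)
      atTop (nhds 2) := by
  have hF0 : ∀ z, 0 ≤ F z := fun z => (hrange z).1
  have hF1 : ∀ z, F z < 1 := hend
  -- F tends to 1 at infinity
  have hFtop : Tendsto F atTop (nhds 1) := by
    have hbdd : BddAbove (Set.range F) := ⟨1, by rintro _ ⟨z, rfl⟩; exact (hrange z).2⟩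
    have hlim : Tendsto F atTop (nhds (⨆ z, F z)) := tendsto_atTop_ciSup hmono hbdd
    have hle : (⨆ z, F z) ≤ 1 := ciSup_le fun z => (hrange z).2
    rcases eq_or_lt_of_le hle with h | h
    · rwa [h] at hlim
    · exfalso
      have hFle : ∀ z, F z ≤ ⨆ z, F z := fun z => le_ciSup hbdd z
      have h2 : Tendsto (fun t => F (t + 1 * f t)) atTop (nhds (⨆ z, F z)) := by
        refine tendsto_of_tendsto_of_tendsto_of_le_of_le hlim tendsto_const_nhds ?_ ?_
        · intro t; exact hmono (by nlinarith [hfpos t])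
        · intro t; exact hFle _
      have hne : (1 : ℝ) - (⨆ z, F z) ≠ 0 := sub_ne_zero.mpr (ne_of_gt h)
      have h3 : Tendsto (fun t => (1 - F (t + 1 * f t)) / (1 - F t)) atTop
          (nhds ((1 - ⨆ z, F z) / (1 - ⨆ z, F z))) :=
        Tendsto.div (tendsto_const_nhds.sub h2) (tendsto_const_nhds.sub hlim) hne
      rw [div_self hne] at h3
      have heq := tendsto_nhds_unique (hMDA 1) h3
      have : Real.exp (-1) < 1 := Real.exp_lt_one_iff.mpr (by norm_num)
      rw [heq] at this; exact lt_irrefl _ this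
  -- basic facts about the generalized inverse
  have hSbdd : ∀ {p : ℝ}, 0 < p → BddBelow {x : ℝ | p ≤ F x} := by
    intro p hp
    refine ⟨0, fun z hz => ?_⟩
    by_contra h
    push_neg at h
    rw [Set.mem_setOf_eq, hsupp z h] at hz
    linarith
  have hSne : ∀ {p : ℝ}, p < 1 → ∃ z, p ≤ F z := fun {p} hp =>
    (hFtop.eventually (eventually_ge_nhds hp)).exists
  have hFinv_out : ∀ {p : ℝ}, p ≤ 0 ∨ 1 ≤ p → Finv p = 0 := by
    intro p hp
    rw [hFinv]
    rcases hp with hp | hp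
    · have hu : {x : ℝ | p ≤ F x} = Set.univ :=
        Set.eq_univ_of_forall fun z => le_trans hp (hF0 z)
      rw [hu]
      apply Real.sInf_of_not_bddBelow
      rintro ⟨b, hb⟩
      have := hb (Set.mem_univ (b - 1))
      linarith
    · have hu : {x : ℝ | p ≤ F x} = ∅ := by
        apply Set.eq_empty_of_forall_notMem
        intro z hz
        exact absurd (lt_of_lt_of_le (hF1 z) hp) (not_lt.mpr hz)
      rw [hu, Real.sInf_empty]
  have hFinv_nonneg : ∀ p, 0 ≤ Finv p := by
    intro p
    rcases le_or_gt p 0 with hp | hp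
    · rw [hFinv_out (Or.inl hp)]
    · rw [hFinv]
      exact Real.sInf_nonneg fun z hz => by
        by_contra h
        push_neg at h
        rw [Set.mem_setOf_eq, hsupp z h] at hz
        linarith
  have hFinv_le : ∀ {p z : ℝ}, 0 < p → p ≤ F z → Finv p ≤ z := by
    intro p z hp hz
    rw [hFinv]; exact csInf_le (hSbdd hp) hz
  have hFinv_ge : ∀ {p z : ℝ}, F z < p → p < 1 → z ≤ Finv p := by
    intro p z hz hp
    rw [hFinv]
    refine le_csInf (hSne hp) fun w hw => ?_
    by_contra h
    push_neg at h
    exact absurd (le_trans hw (hmono h.le)) (not_le.mpr hz)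
  have hFinv_mono : ∀ {p q : ℝ}, 0 < p → p ≤ q → q < 1 → Finv p ≤ Finv q := by
    intro p q hp hpq hq
    rw [hFinv, hFinv]
    exact csInf_le_csInf (hSbdd hp) (hSne hq) fun z hz => le_trans hpq hz
  have hmem01 : ∀ {u x : ℝ}, 0 ≤ x → x < Finv u → 0 < u ∧ u < 1 := by
    intro u x hx h
    constructor
    · by_contra hu; push_neg at hu; rw [hFinv_out (Or.inl hu)] at h; linarith
    · by_contra hu; push_neg at hu; rw [hFinv_out (Or.inr hu)] at h; linarith
  -- measurability of the relevant sets of u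
  have hAmeas : ∀ x : ℝ, 0 ≤ x → MeasurableSet {u : ℝ | x < Finv u} := by
    intro x hx
    apply Set.OrdConnected.measurableSet
    refine ⟨fun u1 h1 u3 h3 u2 hu2 => ?_⟩
    have m1 := hmem01 hx h1
    have m3 := hmem01 hx h3
    have h2a : 0 < u2 := lt_of_lt_of_le m1.1 hu2.1
    have h2b : u2 < 1 := lt_of_le_of_lt hu2.2 m3.2
    exact lt_of_lt_of_le h1 (hFinv_mono m1.1 hu2.1 h2b)
  have hBmeas : ∀ x : ℝ, 0 ≤ x → MeasurableSet {u : ℝ | x < Finv (1 - u)} := by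
    intro x hx
    apply Set.OrdConnected.measurableSet
    refine ⟨fun u1 h1 u3 h3 u2 hu2 => ?_⟩
    have m1 := hmem01 hx h1
    have m3 := hmem01 hx h3
    have h2a : 0 < 1 - u2 := by have := hu2.2; simp only [Set.mem_setOf_eq] at *; linarith [m3.1]
    have h2b : 1 - u2 < 1 := by have := hu2.1; linarith [m1.2]
    exact lt_of_lt_of_le h3 (hFinv_mono m3.1 (by linarith [hu2.2]) h2b)
  have hXset : ∀ x : ℝ, {ω | X ω > x} = U ⁻¹' {u : ℝ | x < Finv u} := by
    intro x; ext ω; simp [hX, Set.mem_setOf_eq]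
  have hYset : ∀ x : ℝ, {ω | Y ω > x} = U ⁻¹' {u : ℝ | x < Finv (1 - u)} := by
    intro x; ext ω; simp [hY, Set.mem_setOf_eq]
  -- measure computations
  have hPX : ∀ x : ℝ, 0 ≤ x → ℙ {ω | X ω > x} = volume {u : ℝ | x < Finv u} := by
    intro x hx
    rw [hXset, ← Measure.map_apply hUm (hAmeas x hx), hU,
      Measure.restrict_apply (hAmeas x hx)]
    congr 1
    rw [Set.inter_eq_left]
    intro u hu
    exact ⟨(hmem01 hx hu).1, (hmem01 hx hu).2⟩
  have hPY : ∀ x : ℝ, 0 ≤ x → ℙ {ω | Y ω > x} = volume {u : ℝ | x < Finv (1 - u)} := by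
    intro x hx
    rw [hYset, ← Measure.map_apply hUm (hBmeas x hx), hU,
      Measure.restrict_apply (hBmeas x hx)]
    congr 1
    rw [Set.inter_eq_left]
    intro u hu
    have := hmem01 hx hu
    constructor <;> [linarith [this.2]; linarith [this.1]]
  have hPX_ub : ∀ x : ℝ, 0 ≤ x → ℙ {ω | X ω > x} ≤ ENNReal.ofReal (1 - F x) := by
    intro x hx
    rw [hPX x hx]
    have hsub : {u : ℝ | x < Finv u} ⊆ Set.Ioo (F x) 1 := by
      intro u hu
      have m := hmem01 hx hu
      refine ⟨?_, m.2⟩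
      by_contra h
      push_neg at h
      exact absurd (hFinv_le m.1 h) (not_le.mpr hu)
    calc volume {u : ℝ | x < Finv u} ≤ volume (Set.Ioo (F x) 1) := measure_mono hsub
      _ = ENNReal.ofReal (1 - F x) := Real.volume_Ioo
  have hPX_lb : ∀ x : ℝ, 0 ≤ x → ∀ η : ℝ, 0 < η →
      ENNReal.ofReal (1 - F (x + η)) ≤ ℙ {ω | X ω > x} := by
    intro x hx η hη
    rw [hPX x hx]
    have hsub : Set.Ioo (F (x + η)) 1 ⊆ {u : ℝ | x < Finv u} := by
      intro u hu
      have h1 : x + η ≤ Finv u := hFinv_ge hu.1 hu.2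
      show x < Finv u
      linarith
    calc ENNReal.ofReal (1 - F (x + η)) = volume (Set.Ioo (F (x + η)) 1) :=
        Real.volume_Ioo.symm
      _ ≤ volume {u : ℝ | x < Finv u} := measure_mono hsub
  have hPY_ub : ∀ x : ℝ, 0 ≤ x → ℙ {ω | Y ω > x} ≤ ENNReal.ofReal (1 - F x) := by
    intro x hx
    rw [hPY x hx]
    have hsub : {u : ℝ | x < Finv (1 - u)} ⊆ Set.Ioo 0 (1 - F x) := by
      intro u hu
      have m := hmem01 hx hu
      refine ⟨by linarith [m.2], ?_⟩
      by_contra h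
      push_neg at h
      have : 1 - u ≤ F x := by linarith
      exact absurd (hFinv_le m.1 this) (not_le.mpr hu)
    calc volume {u : ℝ | x < Finv (1 - u)} ≤ volume (Set.Ioo 0 (1 - F x)) :=
        measure_mono hsub
      _ = ENNReal.ofReal (1 - F x) := by rw [Real.volume_Ioo, sub_zero]
  have hPY_lb : ∀ x : ℝ, 0 ≤ x → ∀ η : ℝ, 0 < η →
      ENNReal.ofReal (1 - F (x + η)) ≤ ℙ {ω | Y ω > x} := by
    intro x hx η hη
    rw [hPY x hx]
    have hsub : Set.Ioo 0 (1 - F (x + η)) ⊆ {u : ℝ | x < Finv (1 - u)} := by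
      intro u hu
      have h1 : F (x + η) < 1 - u := by linarith [hu.2]
      have h2 : 1 - u < 1 := by linarith [hu.1]
      have h3 : x + η ≤ Finv (1 - u) := hFinv_ge h1 h2
      show x < Finv (1 - u)
      linarith
    have hvol : volume (Set.Ioo (0:ℝ) (1 - F (x + η))) = ENNReal.ofReal (1 - F (x + η)) := by
      rw [Real.volume_Ioo, sub_zero]
    rw [← hvol]
    exact measure_mono hsub
  -- lower bound on the tail of the sum
  have hXYlb : ∀ x : ℝ, 0 ≤ x → 1 / 2 ≤ F x →
      ℙ {ω | X ω > x} + ℙ {ω | Y ω > x} ≤ ℙ {ω | X ω + Y ω > x} := by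
    intro x hx hFx
    have hmB : MeasurableSet {ω | Y ω > x} := by
      rw [hYset]; exact hUm (hBmeas x hx)
    have hdisj : Disjoint {ω | X ω > x} {ω | Y ω > x} := by
      rw [Set.disjoint_left]
      intro ω hXω hYω
      simp only [Set.mem_setOf_eq, hX, hY] at hXω hYω
      have m1 := hmem01 hx hXω
      have m2 := hmem01 hx hYω
      have h1 : F x < U ω := by
        by_contra h
        push_neg at h
        exact absurd (hFinv_le m1.1 h) (not_le.mpr hXω)
      have h2 : F x < 1 - U ω := by
        by_contra h
        push_neg at h
        exact absurd (hFinv_le m2.1 h) (not_le.mpr hYω)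
      linarith
    have hsub : {ω | X ω > x} ∪ {ω | Y ω > x} ⊆ {ω | X ω + Y ω > x} := by
      rintro ω (hω | hω)
      · have : 0 ≤ Y ω := by rw [hY]; exact hFinv_nonneg _
        simp only [Set.mem_setOf_eq] at *
        linarith
      · have : 0 ≤ X ω := by rw [hX]; exact hFinv_nonneg _
        simp only [Set.mem_setOf_eq] at *
        linarith
    calc ℙ {ω | X ω > x} + ℙ {ω | Y ω > x} = ℙ ({ω | X ω > x} ∪ {ω | Y ω > x}) :=
        (measure_union hdisj hmB).symm
      _ ≤ ℙ {ω | X ω + Y ω > x} := measure_mono hsub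
  -- eventual lower bound on f
  have hfev : ∀ᶠ x in atTop, δ / 2 ≤ f x := by
    have hbd : IsBoundedUnder (· ≥ ·) atTop f :=
      Filter.isBoundedUnder_of ⟨0, fun x => (hfpos x).le⟩
    have hlt : δ / 2 < liminf f atTop := by rw [hliminf]; linarith
    exact (eventually_lt_of_lt_liminf hlt hbd).mono fun x hx => hx.le
  -- the key shift estimates coming from the MDA property
  have hshift_up : ∀ c : ℝ, 0 < c → ∀ γ : ℝ, 0 < γ → ∀ᶠ x in atTop,
      1 - F (x - c) ≤ (Real.exp (2 * c / δ) + γ) * (1 - F x) := by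
    intro c hc γ hγ
    have hspos : 0 < 2 * c / δ := by positivity
    have h1 := hMDA (-(2 * c / δ))
    rw [neg_neg] at h1
    have h2 : ∀ᶠ x in atTop,
        (1 - F (x + -(2 * c / δ) * f x)) / (1 - F x) < Real.exp (2 * c / δ) + γ :=
      h1.eventually (eventually_lt_nhds (by linarith))
    filter_upwards [h2, hfev] with x hx hf
    have hden : 0 < 1 - F x := by linarith [hF1 x]
    have hle : x + -(2 * c / δ) * f x ≤ x - c := by
      have h3 : c ≤ 2 * c / δ * f x := by
        have h4 : 2 * c / δ * (δ / 2) = c := by field_simp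
        nlinarith [mul_le_mul_of_nonneg_left hf hspos.le]
      linarith
    have hFle : F (x + -(2 * c / δ) * f x) ≤ F (x - c) := hmono hle
    have h5 := (div_lt_iff₀ hden).mp hx
    linarith
  have hshift_down : ∀ c : ℝ, 0 < c → ∀ γ : ℝ, 0 < γ → ∀ᶠ x in atTop,
      (Real.exp (-(2 * c / δ)) - γ) * (1 - F x) ≤ 1 - F (x + c) := by
    intro c hc γ hγ
    have hspos : 0 < 2 * c / δ := by positivity
    have h1 := hMDA (2 * c / δ)
    have h2 : ∀ᶠ x in atTop,
        Real.exp (-(2 * c / δ)) - γ < (1 - F (x + 2 * c / δ * f x)) / (1 - F x) :=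
      h1.eventually (eventually_gt_nhds (by linarith))
    filter_upwards [h2, hfev] with x hx hf
    have hden : 0 < 1 - F x := by linarith [hF1 x]
    have hle : x + c ≤ x + 2 * c / δ * f x := by
      have h3 : c ≤ 2 * c / δ * f x := by
        have h4 : 2 * c / δ * (δ / 2) = c := by field_simp
        nlinarith [mul_le_mul_of_nonneg_left hf hspos.le]
      linarith
    have hFle : F (x + c) ≤ F (x + 2 * c / δ * f x) := hmono hle
    have h5 := (lt_div_iff₀ hden).mp hx
    linarith
  -- main argument
  rw [Metric.tendsto_nhds]
  intro c hc
  -- continuity of exp at 0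
  obtain ⟨r, hr, hrexp⟩ : ∃ r : ℝ, 0 < r ∧ ∀ t : ℝ, |t| < r → |Real.exp t - 1| < c / 4 := by
    have h0 : Tendsto Real.exp (nhds 0) (nhds 1) := by
      simpa using Real.continuous_exp.tendsto 0
    have h1 := (Metric.tendsto_nhds.mp h0) (c / 4) (by positivity)
    rw [Metric.eventually_nhds_iff] at h1
    obtain ⟨r, hr, h⟩ := h1
    refine ⟨r, hr, fun t ht => ?_⟩
    have := h (y := t) (by rwa [Real.dist_eq, sub_zero])
    rwa [Real.dist_eq] at this
  set ε : ℝ := δ * r / 8 with hεdef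
  have hε : 0 < ε := by positivity
  have hup : Real.exp (2 * (2 * ε) / δ) < 1 + c / 4 := by
    have harg : 2 * (2 * ε) / δ = r / 2 := by rw [hεdef]; field_simp; ring
    have := hrexp (2 * (2 * ε) / δ) (by rw [harg, abs_of_pos (by linarith)]; linarith)
    have := abs_lt.mp this
    linarith [this.2]
  have hdn : 1 - c / 4 < Real.exp (-(2 * ε / δ)) := by
    have harg : 2 * ε / δ = r / 4 := by rw [hεdef]; field_simp; ring
    have := hrexp (-(2 * ε / δ)) (by rw [abs_neg, harg, abs_of_pos (by linarith)]; linarith)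
    have := abs_lt.mp this
    linarith [this.1]
  -- small-quantile bound
  obtain ⟨z₀, hz₀mem, hz₀lt⟩ : ∃ z ∈ {x : ℝ | 0 < F x}, z < ε := by
    have hne : {x : ℝ | 0 < F x}.Nonempty := by
      obtain ⟨z, hz⟩ := hSne (show (1 : ℝ) / 2 < 1 by norm_num)
      exact ⟨z, by simp only [Set.mem_setOf_eq]; linarith⟩
    apply exists_lt_of_csInf_lt hne
    rw [hlow]; exact hε
  set p₀ : ℝ := min (F z₀) (1 / 4) with hp₀def
  have hp₀pos : 0 < p₀ := lt_min hz₀mem (by norm_num)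
  have hp₀le : p₀ ≤ 1 / 4 := min_le_right _ _
  have hsmall : ∀ u : ℝ, u ≤ p₀ → Finv u ≤ ε := by
    intro u hu
    rcases le_or_gt u 0 with h | h
    · rw [hFinv_out (Or.inl h)]; linarith
    · have h2 : u ≤ F z₀ := le_trans hu (min_le_left _ _)
      exact le_trans (hFinv_le h h2) hz₀lt.le
  set M : ℝ := Finv (1 - p₀) with hMdef
  have hM0 : 0 ≤ M := hFinv_nonneg _
  have hmid : ∀ u : ℝ, u ≤ 1 - p₀ → Finv u ≤ M := by
    intro u hu
    rcases le_or_gt u 0 with h | h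
    · rw [hFinv_out (Or.inl h)]; exact hM0
    · exact hFinv_mono h hu (by linarith)
  -- upper bound on the tail of the sum
  have hXYub : ∀ x : ℝ, 2 * M < x →
      ℙ {ω | X ω + Y ω > x} ≤ ℙ {ω | X ω > x - ε} + ℙ {ω | Y ω > x - ε} := by
    intro x hMx
    have hsub : {ω | X ω + Y ω > x} ⊆ {ω | X ω > x - ε} ∪ {ω | Y ω > x - ε} := by
      intro ω hω
      simp only [Set.mem_setOf_eq] at hω
      rcases le_or_gt (U ω) (1 - p₀) with h1 | h1
      · rcases le_or_gt (1 - U ω) (1 - p₀) with h2 | h2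
        · exfalso
          have hXle : X ω ≤ M := by rw [hX]; exact hmid _ h1
          have hYle : Y ω ≤ M := by rw [hY]; exact hmid _ h2
          linarith
        · right
          have hXle : X ω ≤ ε := by rw [hX]; exact hsmall _ (by linarith)
          show x - ε < Y ω
          linarith
      · left
        have hYle : Y ω ≤ ε := by rw [hY]; exact hsmall _ (by linarith)
        show x - ε < X ω
        linarith
    exact le_trans (measure_mono hsub) (measure_union_le _ _)
  -- collect eventual facts
  have ev4 : ∀ᶠ x in atTop,
      1 - F (x + ε - 2 * ε) ≤ (Real.exp (2 * (2 * ε) / δ) + c / 8) * (1 - F (x + ε)) := by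
    have h := hshift_up (2 * ε) (by linarith) (c / 8) (by positivity)
    exact (tendsto_atTop_add_const_right atTop ε tendsto_id).eventually h
  have ev5 := hshift_down ε hε (c / 8) (by positivity)
  have ev1 : ∀ᶠ x : ℝ in atTop, (1 : ℝ) / 2 ≤ F x := hFtop.eventually (eventually_ge_nhds (by norm_num))
  filter_upwards [ev1, ev4, ev5, eventually_ge_atTop (0 : ℝ),
    eventually_gt_atTop (2 * M + ε)] with x h1 h4 h5 h2 h3
  -- real-valued tail quantities
  have hx0 : (0 : ℝ) ≤ x := h2
  have hxε : 0 ≤ x - ε := by linarith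
  have hden1 : 0 < 1 - F (x + ε) := by linarith [hF1 (x + ε)]
  have hden2 : 0 < 1 - F x := by linarith [hF1 x]
  set a : ℝ := (ℙ {ω | X ω > x}).toReal with hadef
  set b : ℝ := (ℙ {ω | Y ω > x}).toReal with hbdef
  set s : ℝ := (ℙ {ω | X ω + Y ω > x}).toReal with hsdef
  have haub : a ≤ 1 - F x := by
    have := hPX_ub x hx0
    have h' := ENNReal.toReal_mono ENNReal.ofReal_ne_top this
    rwa [ENNReal.toReal_ofReal hden2.le] at h'
  have halb : 1 - F (x + ε) ≤ a := by
    have := hPX_lb x hx0 ε hε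
    have h' := ENNReal.toReal_mono (measure_ne_top ℙ _) this
    rwa [ENNReal.toReal_ofReal hden1.le] at h'
  have hblb : 1 - F (x + ε) ≤ b := by
    have := hPY_lb x hx0 ε hε
    have h' := ENNReal.toReal_mono (measure_ne_top ℙ _) this
    rwa [ENNReal.toReal_ofReal hden1.le] at h'
  have hb0 : 0 ≤ b := ENNReal.toReal_nonneg
  have hapos : 0 < a := lt_of_lt_of_le hden1 halb
  have hslb : a + b ≤ s := by
    have := hXYlb x hx0 h1
    have h' := ENNReal.toReal_mono (measure_ne_top ℙ _) this
    rwa [ENNReal.toReal_add (measure_ne_top ℙ _) (measure_ne_top ℙ _)] at h'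
  have hsub2 : s ≤ 2 * (1 - F (x - ε)) := by
    have hstep := hXYub x (by linarith)
    have hstep2 : ℙ {ω | X ω > x - ε} + ℙ {ω | Y ω > x - ε} ≤
        ENNReal.ofReal (1 - F (x - ε)) + ENNReal.ofReal (1 - F (x - ε)) :=
      add_le_add (hPX_ub (x - ε) hxε) (hPY_ub (x - ε) hxε)
    have := le_trans hstep hstep2
    have h' := ENNReal.toReal_mono (ENNReal.add_ne_top.mpr ⟨ENNReal.ofReal_ne_top, ENNReal.ofReal_ne_top⟩) this
    rwa [ENNReal.toReal_add ENNReal.ofReal_ne_top ENNReal.ofReal_ne_top,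
      ENNReal.toReal_ofReal (by linarith [hF1 (x - ε)] : (0:ℝ) ≤ 1 - F (x - ε)),
      ← two_mul] at h'
  have hs0 : 0 ≤ s := ENNReal.toReal_nonneg
  -- upper bound on ratio
  have hRub : s / a ≤ 2 * (Real.exp (2 * (2 * ε) / δ) + c / 8) := by
    have hshift : 1 - F (x - ε) ≤ (Real.exp (2 * (2 * ε) / δ) + c / 8) * (1 - F (x + ε)) := by
      have hxx : x + ε - 2 * ε = x - ε := by ring
      rwa [hxx] at h4
    have h6 : s / a ≤ 2 * (1 - F (x - ε)) / (1 - F (x + ε)) :=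
      div_le_div₀ (by linarith [hF1 (x - ε)]) hsub2 hden1 halb
    have h7 : 2 * (1 - F (x - ε)) / (1 - F (x + ε)) ≤
        2 * (Real.exp (2 * (2 * ε) / δ) + c / 8) := by
      rw [div_le_iff₀ hden1]
      linarith [hshift]
    linarith
  -- lower bound on ratio
  have hRlb : 1 + (Real.exp (-(2 * ε / δ)) - c / 8) ≤ s / a := by
    have h6 : (a + b) / a ≤ s / a := (div_le_div_iff_of_pos_right hapos).mpr hslb
    have h7 : (a + b) / a = 1 + b / a := by
      rw [add_div, div_self hapos.ne']
    have h8 : (1 - F (x + ε)) / (1 - F x) ≤ b / a := div_le_div₀ hb0 hblb hapos haub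
    have h9 : Real.exp (-(2 * ε / δ)) - c / 8 ≤ (1 - F (x + ε)) / (1 - F x) := by
      rw [le_div_iff₀ hden2]
      linarith
    linarith
  rw [Real.dist_eq, abs_lt]
  constructor
  · linarith [hRlb, hdn]
  · linarith [hRub, hup]
end

section
/- Let (X₁, X₂) be bivariate normal, each with mean μ, variance σ² > 0, and correlation ρ ∈ (-1,1). Set X = exp(X₁), Y = exp(X₂), and f(x) = σ² x/(log x - μ). Then for every t > 0, lim_{x→∞} P(X > x, Y > t f(x))/P(X > x) = 0. -/
open MeasureTheory Filter Real ProbabilityTheory Set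
open scoped NNReal ENNReal

lemma aux_pdf_mul (c x : ℝ) :
    gaussianPDFReal 0 1 x * rexp (c * x) = rexp (c^2/2) * gaussianPDFReal c 1 x := by
  simp only [gaussianPDFReal, NNReal.coe_one, mul_one, sub_zero]
  have h : rexp (-x^2/2) * rexp (c*x) = rexp (c^2/2) * rexp (-(x-c)^2/2) := by
    rw [← Real.exp_add, ← Real.exp_add]; congr 1; ring
  linear_combination (Real.sqrt (2*π))⁻¹ * h

lemma aux_integral_exp_gaussian (c : ℝ) :
    ∫ z, rexp (c * z) ∂(gaussianReal 0 1) = rexp (c^2/2) := by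
  rw [gaussianReal_of_var_ne_zero 0 one_ne_zero]
  have hpdf : gaussianPDF 0 1
      = fun x => ((Real.toNNReal (gaussianPDFReal 0 1 x) : ℝ≥0) : ℝ≥0∞) := rfl
  rw [hpdf, integral_withDensity_eq_integral_smul
    ((measurable_gaussianPDFReal 0 1).real_toNNReal)]
  have h : ∀ x, (Real.toNNReal (gaussianPDFReal 0 1 x)) • rexp (c * x)
      = rexp (c^2/2) * gaussianPDFReal c 1 x := by
    intro x
    rw [NNReal.smul_def, smul_eq_mul, Real.coe_toNNReal _ (gaussianPDFReal_nonneg 0 1 x)]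
    exact aux_pdf_mul c x
  simp only [h]
  rw [integral_const_mul, integral_gaussianPDFReal_eq_one c one_ne_zero, mul_one]

lemma aux_integrable_exp_gaussian (c : ℝ) :
    Integrable (fun z => rexp (c * z)) (gaussianReal 0 1) := by
  rw [gaussianReal_of_var_ne_zero 0 one_ne_zero]
  have hpdf : gaussianPDF 0 1
      = fun x => ((Real.toNNReal (gaussianPDFReal 0 1 x) : ℝ≥0) : ℝ≥0∞) := rfl
  rw [hpdf, integrable_withDensity_iff_integrable_smul
    ((measurable_gaussianPDFReal 0 1).real_toNNReal)]
  have h : (fun x => (Real.toNNReal (gaussianPDFReal 0 1 x)) • rexp (c * x))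
      = fun x => rexp (c^2/2) * gaussianPDFReal c 1 x := by
    ext x
    rw [NNReal.smul_def, smul_eq_mul, Real.coe_toNNReal _ (gaussianPDFReal_nonneg 0 1 x)]
    exact aux_pdf_mul c x
  rw [h]
  exact (integrable_gaussianPDFReal c 1).const_mul _

lemma aux_integral_exp_map {Ω : Type*} [MeasurableSpace Ω] (μpr : Measure Ω)
    (W : Ω → ℝ) (hWm : Measurable W) (hW : Measure.map W μpr = gaussianReal 0 1) (c : ℝ) :
    ∫ ω, rexp (c * W ω) ∂μpr = rexp (c^2/2) := by
  have hsm : AEStronglyMeasurable (fun z => rexp (c * z)) (Measure.map W μpr) :=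
    (Real.continuous_exp.comp (continuous_const.mul continuous_id)).aestronglyMeasurable
  rw [← integral_map hWm.aemeasurable hsm, hW]
  exact aux_integral_exp_gaussian c

lemma aux_integrable_exp_map {Ω : Type*} [MeasurableSpace Ω] (μpr : Measure Ω)
    (W : Ω → ℝ) (hWm : Measurable W) (hW : Measure.map W μpr = gaussianReal 0 1) (c : ℝ) :
    Integrable (fun ω => rexp (c * W ω)) μpr := by
  have hsm : AEStronglyMeasurable (fun z => rexp (c * z)) (Measure.map W μpr) :=
    (Real.continuous_exp.comp (continuous_const.mul continuous_id)).aestronglyMeasurable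
  exact (integrable_map_measure hsm hWm.aemeasurable).mp
    (by rw [hW]; exact aux_integrable_exp_gaussian c)

lemma aux_tail_lb {d : ℝ} (hd : 0 ≤ d) :
    rexp (-(d+1)^2/2) / Real.sqrt (2*π) ≤ (gaussianReal 0 1 (Ioi d)).toReal := by
  have hmono : (gaussianReal 0 1 (Ioc d (d+1))).toReal ≤ (gaussianReal 0 1 (Ioi d)).toReal :=
    ENNReal.toReal_mono (measure_ne_top _ _) (measure_mono Ioc_subset_Ioi_self)
  refine le_trans ?_ hmono
  rw [gaussianReal_apply_eq_integral 0 one_ne_zero (Ioc d (d+1)),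
    ENNReal.toReal_ofReal (setIntegral_nonneg measurableSet_Ioc
      (fun x _ => gaussianPDFReal_nonneg 0 1 x))]
  have hconst : rexp (-(d+1)^2/2) / Real.sqrt (2*π)
      = ∫ _ in Ioc d (d+1), gaussianPDFReal 0 1 (d+1) := by
    rw [setIntegral_const]
    simp only [gaussianPDFReal, NNReal.coe_one, mul_one, sub_zero, Real.volume_Ioc]
    rw [measureReal_def, Real.volume_Ioc, ENNReal.toReal_ofReal (by linarith : (0:ℝ) ≤ d + 1 - d)]
    rw [show d + 1 - d = 1 by ring, one_smul]
    rw [div_eq_inv_mul]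
  rw [hconst]
  refine setIntegral_mono_on ((integrableOn_const_iff).mpr (Or.inr ?_))
    ((integrable_gaussianPDFReal 0 1).integrableOn) measurableSet_Ioc ?_
  · rw [Real.volume_Ioc]; exact ENNReal.ofReal_lt_top
  · intro x hx
    simp only [gaussianPDFReal, NNReal.coe_one, mul_one, sub_zero]
    have hx1 : d < x := hx.1
    have hx2 : x ≤ d + 1 := hx.2
    have h : -(d+1)^2/2 ≤ -x^2/2 := by nlinarith
    exact mul_le_mul_of_nonneg_left (Real.exp_le_exp.mpr h)
      (inv_nonneg.mpr (Real.sqrt_nonneg _))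

lemma aux_log_le {κ : ℝ} (hκ : κ < 2) (c₀ : ℝ) :
    ∀ᶠ w in atTop, Real.log w ≤ (2-κ)*w + c₀ := by
  set ε := (2-κ)/2 with hε
  have hεpos : 0 < ε := by rw [hε]; linarith
  filter_upwards [eventually_ge_atTop (1:ℝ), eventually_ge_atTop ((2/ε)^2),
    eventually_ge_atTop (-c₀/ε)] with w h1 h2 h3
  have hw0 : 0 < w := by linarith
  have hsq : Real.sqrt w * Real.sqrt w = w := Real.mul_self_sqrt hw0.le
  have hs : 2/ε ≤ Real.sqrt w := by
    have := Real.sqrt_le_sqrt h2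
    rwa [Real.sqrt_sq (by positivity : (0:ℝ) ≤ 2/ε)] at this
  have hlog : Real.log w ≤ 2 * Real.sqrt w := by
    have h4 : Real.log (Real.sqrt w) ≤ Real.sqrt w - 1 :=
      Real.log_le_sub_one_of_pos (Real.sqrt_pos.mpr hw0)
    have h5 : Real.log (Real.sqrt w) = Real.log w / 2 := Real.log_sqrt hw0.le
    linarith
  have h6 : 2 * Real.sqrt w ≤ ε * w := by
    have h5' : 2 ≤ Real.sqrt w * ε := (div_le_iff₀ hεpos).mp hs
    nlinarith [Real.sqrt_nonneg w]
  have h7 : 0 ≤ ε * w + c₀ := by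
    have := (div_le_iff₀ hεpos).mp h3
    nlinarith
  have h8 : (2-κ) = 2*ε := by rw [hε]; ring
  rw [h8]
  linarith

lemma aux_atBot {η : ℝ} (hη : 0 < η) :
    Tendsto (fun s : ℝ => s + 1/2 - η*s^2) atTop atBot := by
  have h0 : Tendsto (fun s : ℝ => η*s + (-1)) atTop atTop :=
    tendsto_atTop_add_const_right (l := atTop) (-1) (Tendsto.const_mul_atTop hη tendsto_id)
  have h1 : Tendsto (fun s : ℝ => s * (η*s + (-1))) atTop atTop :=
    Tendsto.atTop_mul_atTop₀ tendsto_id h0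
  have h1n : Tendsto (fun s : ℝ => -(s * (η*s + (-1)))) atTop atBot :=
    (tendsto_neg_atTop_atBot (G := ℝ)).comp h1
  have h2 : Tendsto (fun s : ℝ => 1/2 + -(s * (η*s + (-1)))) atTop atBot :=
    tendsto_atBot_add_const_left atTop (1/2) h1n
  exact h2.congr (fun s => by ring)

set_option maxHeartbeats 1000000 in
/-- Let `(X₁,X₂)` be bivariate normal with means `μ`, variances `σ² > 0`, correlation
`ρ ∈ (-1,1)` (constructed from independent standard normals `Z₁, Z₂`), and set
`X = exp(X₁)`, `Y = exp(X₂)`, `f(x) = σ²x/(log x - μ)`. Then for every `t > 0`,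
`P(X > x, Y > t f(x))/P(X > x) → 0` as `x → ∞`. -/
theorem stmt_13 {Ω : Type*} [MeasurableSpace Ω] (μpr : Measure Ω) [IsProbabilityMeasure μpr]
    (μ σ ρ : ℝ) (hσ : 0 < σ) (hρ : -1 < ρ ∧ ρ < 1)
    (Z₁ Z₂ : Ω → ℝ) (hZ₁m : Measurable Z₁) (hZ₂m : Measurable Z₂)
    (hZ₁ : Measure.map Z₁ μpr = gaussianReal 0 1)
    (hZ₂ : Measure.map Z₂ μpr = gaussianReal 0 1)
    (hindep : IndepFun Z₁ Z₂ μpr)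
    (X₁ X₂ : Ω → ℝ)
    (hX₁ : ∀ ω, X₁ ω = μ + σ * Z₁ ω)
    (hX₂ : ∀ ω, X₂ ω = μ + σ * (ρ * Z₁ ω + Real.sqrt (1 - ρ^2) * Z₂ ω))
    (X Y : Ω → ℝ)
    (hX : ∀ ω, X ω = Real.exp (X₁ ω)) (hY : ∀ ω, Y ω = Real.exp (X₂ ω))
    (f : ℝ → ℝ) (hf : ∀ x, f x = σ^2 * x / (Real.log x - μ)) :
    ∀ t > (0:ℝ), Tendsto (fun x =>
      (μpr {ω | X ω > x ∧ Y ω > t * f x}).toReal / (μpr {ω | X ω > x}).toReal)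
      atTop (nhds 0) := by
  intro t ht
  obtain ⟨hρ1, hρ2⟩ := hρ
  have hπ : (0:ℝ) < Real.sqrt (2*π) := Real.sqrt_pos.mpr (by positivity)
  set a : ℝ := 1 + ρ with ha_def
  set b : ℝ := Real.sqrt (1 - ρ^2) with hb_def
  have hb2 : b^2 = 1 - ρ^2 := Real.sq_sqrt (by nlinarith)
  set v : ℝ := 2*(1+ρ) with hv_def
  have hv : 0 < v := by rw [hv_def]; linarith
  have hab : a^2 + b^2 = v := by rw [ha_def, hb2, hv_def]; ring
  set κ : ℝ := (2 + Real.sqrt v)/2 with hκ_def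
  have hsv0 : 0 ≤ Real.sqrt v := Real.sqrt_nonneg v
  have hsv : Real.sqrt v < 2 := by
    rw [show (2:ℝ) = Real.sqrt 4 by
      rw [show (4:ℝ) = 2^2 by norm_num, Real.sqrt_sq (by norm_num : (0:ℝ) ≤ 2)]]
    exact Real.sqrt_lt_sqrt hv.le (by rw [hv_def]; linarith)
  have hκ2 : κ < 2 := by rw [hκ_def]; linarith
  have hκpos : 0 < κ := by rw [hκ_def]; linarith
  have hκv : v < κ^2 := by
    have h1 : Real.sqrt v < κ := by rw [hκ_def]; linarith
    nlinarith [Real.sq_sqrt hv.le]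
  set η : ℝ := κ^2/(2*v) - 1/2 with hη_def
  have hηpos : 0 < η := by
    rw [hη_def]
    have : 1/2 < κ^2/(2*v) := by
      rw [lt_div_iff₀ (by linarith : (0:ℝ) < 2*v)]; linarith
    linarith
  set S : Ω → ℝ := fun ω => a * Z₁ ω + b * Z₂ ω with hS_def
  set d : ℝ → ℝ := fun x => (Real.log x - μ) / σ with hd_def
  set L : ℝ → ℝ := fun x => (Real.log x + Real.log t + Real.log (f x) - 2*μ) / σ with hL_def
  set c₀ : ℝ := Real.log t + Real.log (σ^2) with hc₀_def
  have hw_top : Tendsto (fun x : ℝ => Real.log x - μ) atTop atTop :=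
    (tendsto_atTop_add_const_right (l := atTop) (-μ) Real.tendsto_log_atTop).congr
      (fun x => (sub_eq_add_neg _ _).symm)
  have hd_top : Tendsto d atTop atTop := Tendsto.atTop_div_const hσ hw_top
  -- eventual lower bound on L
  have hLge : ∀ᶠ x in atTop, κ * d x ≤ L x := by
    filter_upwards [hw_top.eventually (aux_log_le hκ2 c₀), hw_top.eventually_ge_atTop 1,
      eventually_gt_atTop (0:ℝ)] with x hlogb hw1 hx0
    have hw0 : (0:ℝ) < Real.log x - μ := by linarith
    have hlogf : Real.log (f x)
        = Real.log (σ^2) + Real.log x - Real.log (Real.log x - μ) := by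
      rw [hf x, Real.log_div (by positivity) hw0.ne', Real.log_mul (by positivity) hx0.ne']
    have hnum : Real.log x + Real.log t + Real.log (f x) - 2*μ
        = 2*(Real.log x - μ) + c₀ - Real.log (Real.log x - μ) := by
      rw [hlogf, hc₀_def]; ring
    show κ * ((Real.log x - μ)/σ) ≤ (Real.log x + Real.log t + Real.log (f x) - 2*μ)/σ
    rw [hnum, ← mul_div_assoc, div_le_div_iff_of_pos_right hσ]
    linarith
  -- identification of the denominator measure
  have hDen : ∀ᶠ x in atTop, μpr {ω | X ω > x} = gaussianReal 0 1 (Ioi (d x)) := by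
    filter_upwards [eventually_gt_atTop (0:ℝ)] with x hx0
    have hset : {ω | X ω > x} = Z₁ ⁻¹' (Ioi (d x)) := by
      ext ω
      simp only [Set.mem_setOf_eq, Set.mem_preimage, Set.mem_Ioi, hX, hX₁, gt_iff_lt]
      rw [← Real.log_lt_iff_lt_exp hx0]
      show Real.log x < μ + σ * Z₁ ω ↔ (Real.log x - μ)/σ < Z₁ ω
      rw [div_lt_iff₀ hσ]
      have hc : Z₁ ω * σ = σ * Z₁ ω := mul_comm _ _
      constructor <;> intro h <;> linarith
    rw [hset, ← hZ₁, Measure.map_apply hZ₁m measurableSet_Ioi]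
  -- main eventual bound
  have hbound : ∀ᶠ x in atTop,
      (μpr {ω | X ω > x ∧ Y ω > t * f x}).toReal / (μpr {ω | X ω > x}).toReal
        ≤ Real.sqrt (2*π) * rexp (d x + 1/2 - η * (d x)^2) := by
    filter_upwards [hLge, hDen, eventually_gt_atTop (1:ℝ), hw_top.eventually_ge_atTop 1]
      with x hLx hDenx hx1 hw1
    have hx0 : (0:ℝ) < x := by linarith
    have hw0 : (0:ℝ) < Real.log x - μ := by linarith
    have hd0 : 0 ≤ d x := div_nonneg hw0.le hσ.le
    have hL0 : 0 ≤ L x := le_trans (by positivity) hLx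
    have hfx0 : 0 < f x := by rw [hf x]; positivity
    -- subset inclusion
    have hsub : {ω | X ω > x ∧ Y ω > t * f x} ⊆ {ω | L x ≤ S ω} := by
      intro ω hω
      obtain ⟨h1, h2⟩ := hω
      have htf : 0 < t * f x := by positivity
      have hXpos : 0 < X ω := lt_trans hx0 h1
      have hprod : x * (t * f x) < X ω * Y ω :=
        mul_lt_mul'' h1 h2 hx0.le htf.le
      have hexp : X ω * Y ω = rexp (X₁ ω + X₂ ω) := by
        rw [hX ω, hY ω, ← Real.exp_add]
      have hlt : Real.log (x * (t * f x)) < X₁ ω + X₂ ω := by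
        rw [Real.log_lt_iff_lt_exp (by positivity), ← hexp]; exact hprod
      have hXsum : X₁ ω + X₂ ω = 2*μ + σ * S ω := by
        rw [hX₁ ω, hX₂ ω]
        show _ = 2*μ + σ * (a * Z₁ ω + b * Z₂ ω)
        rw [ha_def]; ring
      have hlog3 : Real.log (x * (t * f x))
          = Real.log x + (Real.log t + Real.log (f x)) := by
        rw [Real.log_mul hx0.ne' htf.ne', Real.log_mul ht.ne' hfx0.ne']
      have hkey : Real.log x + Real.log t + Real.log (f x) - 2*μ < σ * S ω := by
        rw [hXsum] at hlt
        rw [hlog3] at hlt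
        linarith
      show (Real.log x + Real.log t + Real.log (f x) - 2*μ)/σ ≤ S ω
      rw [div_le_iff₀ hσ]
      have hc : S ω * σ = σ * S ω := mul_comm _ _
      linarith
    -- Chernoff bound on the numerator
    set lam : ℝ := L x / v with hlam_def
    have hlam0 : 0 ≤ lam := div_nonneg hL0 hv.le
    have hintA : Integrable (fun ω => rexp ((lam*a) * Z₁ ω)) μpr :=
      aux_integrable_exp_map μpr Z₁ hZ₁m hZ₁ _
    have hintB : Integrable (fun ω => rexp ((lam*b) * Z₂ ω)) μpr :=
      aux_integrable_exp_map μpr Z₂ hZ₂m hZ₂ _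
    have hindepAB : IndepFun (fun ω => rexp ((lam*a) * Z₁ ω))
        (fun ω => rexp ((lam*b) * Z₂ ω)) μpr :=
      hindep.comp ((measurable_id.const_mul (lam*a)).exp) ((measurable_id.const_mul (lam*b)).exp)
    have hint : Integrable (fun ω => rexp (lam * S ω)) μpr := by
      refine (hindepAB.integrable_mul hintA hintB).congr (Eventually.of_forall fun ω => ?_)
      show rexp ((lam*a) * Z₁ ω) * rexp ((lam*b) * Z₂ ω) = rexp (lam * S ω)
      rw [← Real.exp_add, hS_def]
      congr 1
      ring
    have hmgfA : mgf (fun ω => a * Z₁ ω) μpr lam = rexp ((lam*a)^2/2) := by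
      rw [mgf]
      simp_rw [← mul_assoc]
      exact aux_integral_exp_map μpr Z₁ hZ₁m hZ₁ (lam*a)
    have hmgfB : mgf (fun ω => b * Z₂ ω) μpr lam = rexp ((lam*b)^2/2) := by
      rw [mgf]
      simp_rw [← mul_assoc]
      exact aux_integral_exp_map μpr Z₂ hZ₂m hZ₂ (lam*b)
    have hindepAB' : IndepFun (fun ω => a * Z₁ ω) (fun ω => b * Z₂ ω) μpr :=
      hindep.comp (measurable_id.const_mul a) (measurable_id.const_mul b)
    have hmgfS : mgf S μpr lam = rexp ((lam*a)^2/2) * rexp ((lam*b)^2/2) := by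
      have hSeq : S = (fun ω => a * Z₁ ω) + (fun ω => b * Z₂ ω) := rfl
      rw [hSeq, hindepAB'.mgf_add' ((hZ₁m.const_mul a).aestronglyMeasurable)
        ((hZ₂m.const_mul b).aestronglyMeasurable), hmgfA, hmgfB]
    have hch := measure_ge_le_exp_mul_mgf (μ := μpr) (X := S) (L x) hlam0 hint
    rw [hmgfS] at hch
    have hchval : rexp (-lam * L x) * (rexp ((lam*a)^2/2) * rexp ((lam*b)^2/2))
        = rexp (-(L x)^2/(2*v)) := by
      rw [← Real.exp_add, ← Real.exp_add]
      congr 1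
      have hb2' : b^2 = v - a^2 := by linarith
      rw [mul_pow, mul_pow, hb2', hlam_def]
      field_simp
      ring
    have hnum : (μpr {ω | X ω > x ∧ Y ω > t * f x}).toReal ≤ rexp (-(L x)^2/(2*v)) := by
      refine le_trans (ENNReal.toReal_mono (measure_ne_top _ _) (measure_mono hsub)) ?_
      rw [← hchval]
      exact hch
    have hden : rexp (-(d x+1)^2/2) / Real.sqrt (2*π) ≤ (μpr {ω | X ω > x}).toReal := by
      rw [hDenx]; exact aux_tail_lb hd0
    have hdenpos : 0 < rexp (-(d x+1)^2/2) / Real.sqrt (2*π) := by positivity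
    have hstep1 : (μpr {ω | X ω > x ∧ Y ω > t * f x}).toReal / (μpr {ω | X ω > x}).toReal
        ≤ (rexp (-(L x)^2/(2*v))) / (rexp (-(d x+1)^2/2) / Real.sqrt (2*π)) :=
      div_le_div₀ (Real.exp_nonneg _) hnum hdenpos hden
    refine le_trans hstep1 ?_
    have heq : rexp (-(L x)^2/(2*v)) / (rexp (-(d x+1)^2/2) / Real.sqrt (2*π))
        = Real.sqrt (2*π) * rexp (-(L x)^2/(2*v) - (-(d x+1)^2/2)) := by
      rw [div_div_eq_mul_div, Real.exp_sub]
      ring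
    rw [heq]
    refine mul_le_mul_of_nonneg_left (Real.exp_le_exp.mpr ?_) (Real.sqrt_nonneg _)
    have h1 : (κ * d x)^2 ≤ (L x)^2 := pow_le_pow_left₀ (by positivity) hLx 2
    have h2 : (κ * d x)^2/(2*v) ≤ (L x)^2/(2*v) := by
      apply div_le_div_of_nonneg_right h1 (by linarith)
    have h3 : (κ * d x)^2/(2*v) = (1/2 + η)*(d x)^2 := by
      rw [hη_def]
      field_simp
      ring
    have h4 : (d x + 1)^2/2 = (d x)^2/2 + d x + 1/2 := by ring
    have h5 : -L x ^ 2 / (2 * v) = -(L x ^ 2 / (2 * v)) := by ring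
    have h6 : -(d x + 1) ^ 2 / 2 = -((d x + 1) ^ 2 / 2) := by ring
    linarith [h2, h3, h4, h5, h6]
  -- conclusion by squeezing
  have htends : Tendsto (fun x => Real.sqrt (2*π) * rexp (d x + 1/2 - η * (d x)^2))
      atTop (nhds 0) := by
    have h1 : Tendsto (fun s : ℝ => s + 1/2 - η*s^2) atTop atBot := aux_atBot hηpos
    have h2 : Tendsto (fun x => d x + 1/2 - η * (d x)^2) atTop atBot := h1.comp hd_top
    have h3 : Tendsto (fun x => rexp (d x + 1/2 - η * (d x)^2)) atTop (nhds 0) :=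
      Real.tendsto_exp_atBot.comp h2
    have h4 := h3.const_mul (Real.sqrt (2*π))
    simpa using h4
  refine squeeze_zero' (Eventually.of_forall fun x =>
    div_nonneg ENNReal.toReal_nonneg ENNReal.toReal_nonneg) hbound htends
end

section
/- Let F̄(x) = exp(-x^α) for x > 0 with α ∈ (0,1), a von Mises function with auxiliary function f(x) = x^{1-α}/α. Then for every L > 0, lim_{x→∞} (1-F(L f(x)))²/(1-F(x)) = exp(x^α (1 - 2(L/α)^α x^{-α²})) → ∞; i.e., the joint-tail sufficient condition fails for every L, even though F is subexponential and P(X+Y>x) ∼ 2P(X>x) for X,Y i.i.d. ~ F. -/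
open MeasureTheory Filter Real ProbabilityTheory Set Topology ENNReal

/-- Bernoulli-type bound: for `0 < u`, `0 ≤ y`, `0 ≤ α ≤ 1`:
`(u+y)^α ≤ u^α + α*y*u^(α-1)`. -/
lemma rpow_add_le_aux {α u y : ℝ} (hu : 0 < u) (hy : 0 ≤ y) (hα0 : 0 ≤ α) (hα1 : α ≤ 1) :
    (u + y) ^ α ≤ u ^ α + α * y * u ^ (α - 1) := by
  have h1 : u + y = u * (1 + y / u) := by field_simp
  have h2 : (1 + y / u) ^ α ≤ 1 + α * (y / u) :=
    rpow_one_add_le_one_add_mul_self (le_trans (by norm_num) (by positivity : (0:ℝ) ≤ y / u)) hα0 hα1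
  have h3 : u ^ (α - 1) = u ^ α / u := by
    rw [Real.rpow_sub hu, Real.rpow_one]
  calc (u + y) ^ α = u ^ α * (1 + y / u) ^ α := by
        rw [h1, Real.mul_rpow hu.le (by positivity)]
    _ ≤ u ^ α * (1 + α * (y / u)) := by
        exact mul_le_mul_of_nonneg_left h2 (Real.rpow_nonneg hu.le _)
    _ = u ^ α + α * y * u ^ (α - 1) := by rw [h3]; field_simp

/-- The key exponent bound on the domination region. -/
lemma exponent_bound {α x y : ℝ} (hα0 : 0 < α) (hα1 : α < 1) (hy : 0 < y)
    (hyx : y ≤ x / 2) (hx : 0 < x) :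
    x ^ α - (x - y) ^ α ≤ α * y ^ α := by
  set u := x - y with hu
  have hu0 : 0 < u := by simp only [hu]; linarith
  have hyu : y ≤ u := by simp only [hu]; linarith
  have h1 : x ^ α ≤ u ^ α + α * y * u ^ (α - 1) := by
    have := rpow_add_le_aux hu0 hy.le hα0.le hα1.le
    rwa [show u + y = x by simp [hu]] at this
  have h2 : y * u ^ (α - 1) ≤ y ^ α := by
    have hratio : y / u ≤ 1 := div_le_one_of_le₀ hyu hu0.le
    have hr0 : 0 ≤ y / u := by positivity
    have hp : (y / u) ^ (1 - α) ≤ 1 :=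
      Real.rpow_le_one hr0 hratio (by linarith)
    have heq : y * u ^ (α - 1) = y ^ α * (y / u) ^ (1 - α) := by
      rw [Real.div_rpow hy.le hu0.le, show (α : ℝ) - 1 = -(1 - α) by ring,
        Real.rpow_neg hu0.le]
      rw [div_eq_mul_inv, ← mul_assoc, ← Real.rpow_add hy]
      ring_nf
      rw [Real.rpow_one]; ring
    calc y * u ^ (α - 1) = y ^ α * (y / u) ^ (1 - α) := heq
      _ ≤ y ^ α * 1 := mul_le_mul_of_nonneg_left hp (Real.rpow_nonneg hy.le _)
      _ = y ^ α := mul_one _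
  nlinarith [Real.rpow_nonneg hy.le α]


lemma ratio_eq (u v : ℝ) :
    ENNReal.ofReal (Real.exp u) * (ENNReal.ofReal (Real.exp v))⁻¹
      = ENNReal.ofReal (Real.exp (u - v)) := by
  rw [← div_eq_mul_inv, ← ENNReal.ofReal_div_of_pos (Real.exp_pos v), ← Real.exp_sub]

lemma tail_limit (α : ℝ) (hα0 : 0 < α) (hα1 : α < 1) (ν : Measure ℝ)
    [IsProbabilityMeasure ν]
    (hT : ∀ t : ℝ, 0 < t → ν (Set.Ioi t) = ENNReal.ofReal (Real.exp (-(t ^ α)))) :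
    Tendsto (fun x => ((ν.prod ν) {p : ℝ × ℝ | x < p.1 + p.2}).toReal
      / (ν (Set.Ioi x)).toReal) atTop (𝓝 2) := by
  -- ν puts no mass on (-∞, 0]
  have hIic0 : ν (Set.Iic 0) = 0 := by
    have key : ∀ ε : ℝ, 0 < ε → (ν (Set.Iic 0)).toReal ≤ ε := by
      intro ε hε
      set t := ε ^ ((1:ℝ) / α) with htdef
      have ht : 0 < t := Real.rpow_pos_of_pos hε _
      have htα : t ^ α = ε := by
        rw [htdef, ← Real.rpow_mul hε.le, one_div, inv_mul_cancel₀ hα0.ne', Real.rpow_one]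
      have hsum : ν (Set.Iic t) + ν (Set.Ioi t) = 1 := by
        rw [← measure_union (Set.Iic_disjoint_Ioi le_rfl) measurableSet_Ioi,
          Set.Iic_union_Ioi, measure_univ]
      have hfin1 : ν (Set.Iic t) ≠ ⊤ := measure_ne_top _ _
      have h1 : (ν (Set.Iic t)).toReal = 1 - Real.exp (-ε) := by
        have h2 := congrArg ENNReal.toReal hsum
        rw [ENNReal.toReal_add hfin1 (measure_ne_top _ _), hT t ht, htα,
          ENNReal.toReal_ofReal (Real.exp_nonneg _), ENNReal.toReal_one] at h2
        linarith
      calc (ν (Set.Iic 0)).toReal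
          ≤ (ν (Set.Iic t)).toReal :=
            ENNReal.toReal_mono hfin1 (measure_mono (Set.Iic_subset_Iic.mpr ht.le))
        _ = 1 - Real.exp (-ε) := h1
        _ ≤ ε := by nlinarith [Real.add_one_le_exp (-ε)]
    have h0 : (ν (Set.Iic 0)).toReal = 0 :=
      le_antisymm (le_of_forall_pos_le_add (fun ε hε => by simpa using key ε hε))
        ENNReal.toReal_nonneg
    rwa [ENNReal.toReal_eq_zero_iff, or_iff_left (measure_ne_top ν _)] at h0
  have hae : ∀ᵐ y ∂ν, 0 < y := by
    rw [ae_iff]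
    convert hIic0 using 2
    ext y; simp [not_lt]
  have hTne : ∀ x : ℝ, 0 < x → ν (Set.Ioi x) ≠ 0 := by
    intro x hx; rw [hT x hx]; simp [Real.exp_pos]
  -- the one-sided piece
  set A : ℝ → ℝ≥0∞ :=
    fun x => ∫⁻ a, (Set.Iic (x/2)).indicator (fun a => ν (Set.Ioi (x - a))) a ∂ν with hA_def
  -- decomposition
  have hdecomp : ∀ x : ℝ, 0 < x →
      (ν.prod ν) {p : ℝ × ℝ | x < p.1 + p.2}
        = 2 * A x + ν (Set.Ioi (x/2)) * ν (Set.Ioi (x/2)) := by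
    intro x hx
    set S1 := {p : ℝ × ℝ | x < p.1 + p.2 ∧ p.1 ≤ x/2} with hS1
    set S2 := {p : ℝ × ℝ | x < p.1 + p.2 ∧ p.2 ≤ x/2} with hS2
    set S3 := Set.Ioi (x/2) ×ˢ Set.Ioi (x/2) with hS3
    have hsum_meas : MeasurableSet {p : ℝ × ℝ | x < p.1 + p.2} :=
      measurableSet_lt measurable_const (measurable_fst.add measurable_snd)
    have hm1 : MeasurableSet S1 := by
      have : S1 = {p : ℝ × ℝ | x < p.1 + p.2} ∩ (Prod.fst ⁻¹' Set.Iic (x/2)) := by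
        ext p; simp [hS1, Set.mem_setOf_eq]
      rw [this]; exact hsum_meas.inter (measurable_fst measurableSet_Iic)
    have hm2 : MeasurableSet S2 := by
      have : S2 = {p : ℝ × ℝ | x < p.1 + p.2} ∩ (Prod.snd ⁻¹' Set.Iic (x/2)) := by
        ext p; simp [hS2, Set.mem_setOf_eq]
      rw [this]; exact hsum_meas.inter (measurable_snd measurableSet_Iic)
    have hm3 : MeasurableSet S3 := measurableSet_Ioi.prod measurableSet_Ioi
    have hset : {p : ℝ × ℝ | x < p.1 + p.2} = S1 ∪ S2 ∪ S3 := by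
      ext p
      simp only [hS1, hS2, hS3, Set.mem_setOf_eq, Set.mem_union, Set.mem_prod, Set.mem_Ioi]
      constructor
      · intro h
        rcases le_or_gt p.1 (x/2) with h1 | h1
        · exact Or.inl (Or.inl ⟨h, h1⟩)
        rcases le_or_gt p.2 (x/2) with h2 | h2
        · exact Or.inl (Or.inr ⟨h, h2⟩)
        · exact Or.inr ⟨h1, h2⟩
      · rintro ((⟨h, -⟩ | ⟨h, -⟩) | ⟨h1, h2⟩)
        · exact h
        · exact h
        · show x < p.1 + p.2; linarith
    have hd12 : Disjoint S1 S2 := by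
      rw [Set.disjoint_left]
      rintro p ⟨hp1, hp2⟩ ⟨hq1, hq2⟩
      linarith
    have hd3 : Disjoint (S1 ∪ S2) S3 := by
      rw [Set.disjoint_left]
      rintro p (⟨-, hp⟩ | ⟨-, hp⟩) ⟨hq1, hq2⟩
      · exact absurd hq1 (not_lt.mpr hp)
      · exact absurd hq2 (not_lt.mpr hp)
    have h1eq : (ν.prod ν) S1 = A x := by
      rw [Measure.prod_apply hm1, hA_def]
      refine lintegral_congr fun a => ?_
      by_cases ha : a ≤ x/2
      · rw [Set.indicator_of_mem (Set.mem_Iic.mpr ha)]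
        congr 1
        ext b
        simp only [hS1, Set.mem_preimage, Set.mem_setOf_eq, Set.mem_Ioi]
        constructor
        · rintro ⟨h, -⟩; linarith
        · intro h; exact ⟨by linarith, ha⟩
      · rw [Set.indicator_of_notMem (by simpa using ha)]
        have : Prod.mk a ⁻¹' S1 = ∅ := by
          ext b; simp only [hS1, Set.mem_preimage, Set.mem_setOf_eq, Set.mem_empty_iff_false,
            iff_false, not_and]
          intro _; exact ha
        simp [this]
    have h2eq : (ν.prod ν) S2 = (ν.prod ν) S1 := by
      have hswap : S2 = Prod.swap ⁻¹' S1 := by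
        ext p
        simp only [hS1, hS2, Set.mem_preimage, Set.mem_setOf_eq, Prod.fst_swap, Prod.snd_swap]
        constructor
        · rintro ⟨h1, h2⟩; exact ⟨by linarith, h2⟩
        · rintro ⟨h1, h2⟩; exact ⟨by linarith, h2⟩
      rw [hswap, ← Measure.map_apply measurable_swap hm1, Measure.prod_swap]
    have h3eq : (ν.prod ν) S3 = ν (Set.Ioi (x/2)) * ν (Set.Ioi (x/2)) :=
      Measure.prod_prod _ _
    rw [hset, measure_union hd3 hm3, measure_union hd12 hm2, h1eq, h2eq, h1eq, h3eq]
    ring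
  -- the bound for domination
  set G : ℝ → ℝ≥0∞ := fun a => ENNReal.ofReal (Real.exp (α * a ^ α)) with hG_def
  -- finiteness of the dominating integral (layer cake)
  have hGmeas : Measurable fun a : ℝ => Real.exp (α * a ^ α) := by
    apply Real.continuous_exp.measurable.comp
    exact ((Real.continuous_rpow_const hα0.le).measurable).const_mul α
  have hGfin : ∫⁻ a, G a ∂ν ≠ ⊤ := by
    have hlayer := lintegral_eq_lintegral_meas_lt ν
      (f := fun a => Real.exp (α * a ^ α))
      (ae_of_all _ fun a => Real.exp_nonneg _) hGmeas.aemeasurable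
    rw [hG_def]
    simp only []
    rw [hlayer]
    have hsplit : Set.Ioi (0:ℝ) = Set.Ioc 0 1 ∪ Set.Ioi 1 :=
      (Set.Ioc_union_Ioi_eq_Ioi zero_le_one).symm
    rw [hsplit, lintegral_union measurableSet_Ioi (Set.Ioc_disjoint_Ioi le_rfl)]
    have hb1 : ∫⁻ t in Set.Ioc (0:ℝ) 1, ν {a | t < Real.exp (α * a ^ α)} ≤ 1 := by
      calc ∫⁻ t in Set.Ioc (0:ℝ) 1, ν {a | t < Real.exp (α * a ^ α)}
          ≤ ∫⁻ _ in Set.Ioc (0:ℝ) 1, 1 := lintegral_mono fun t => prob_le_one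
        _ = 1 := by rw [setLIntegral_one]; simp
    have hb2 : ∫⁻ t in Set.Ioi (1:ℝ), ν {a | t < Real.exp (α * a ^ α)}
        ≤ ∫⁻ t in Set.Ioi (1:ℝ), ENNReal.ofReal (t ^ (-(1/α))) := by
      refine setLIntegral_mono (by fun_prop) fun t ht => ?_
      have ht1 : (1:ℝ) < t := ht
      have ht0 : (0:ℝ) < t := by linarith
      have hlt : 0 < Real.log t := Real.log_pos ht1
      set s : ℝ := (Real.log t / α) ^ (1/α) with hs_def
      have hs0 : 0 < s := Real.rpow_pos_of_pos (div_pos hlt hα0) _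
      have hsα : s ^ α = Real.log t / α := by
        rw [hs_def, ← Real.rpow_mul (div_pos hlt hα0).le, one_div,
          inv_mul_cancel₀ hα0.ne', Real.rpow_one]
      have hsub : {a : ℝ | t < Real.exp (α * a ^ α)} ⊆ Set.Iic 0 ∪ Set.Ioi s := by
        intro a ha
        rcases le_or_gt a 0 with h | h
        · exact Or.inl h
        · right
          simp only [Set.mem_setOf_eq] at ha
          have hlog : Real.log t < α * a ^ α := (Real.log_lt_iff_lt_exp ht0).mpr ha
          have haα : Real.log t / α < a ^ α := by
            rw [div_lt_iff₀ hα0]; linarith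
          by_contra hc
          simp only [Set.mem_Ioi, not_lt] at hc
          have : a ^ α ≤ s ^ α := Real.rpow_le_rpow h.le hc hα0.le
          rw [hsα] at this
          linarith
      calc ν {a : ℝ | t < Real.exp (α * a ^ α)}
          ≤ ν (Set.Iic 0 ∪ Set.Ioi s) := measure_mono hsub
        _ ≤ ν (Set.Iic 0) + ν (Set.Ioi s) := measure_union_le _ _
        _ = ENNReal.ofReal (Real.exp (-(s ^ α))) := by rw [hIic0, hT s hs0, zero_add]
        _ = ENNReal.ofReal (t ^ (-(1/α))) := by
            congr 1
            rw [hsα, Real.rpow_def_of_pos ht0]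
            congr 1
            ring
    have hb2fin : ∫⁻ t in Set.Ioi (1:ℝ), ENNReal.ofReal (t ^ (-(1/α))) < ⊤ := by
      have hexp : -(1/α) < -1 := by
        rw [neg_lt_neg_iff]
        rw [lt_div_iff₀ hα0]
        linarith
      have hint : IntegrableOn (fun t : ℝ => t ^ (-(1/α))) (Set.Ioi 1) :=
        integrableOn_Ioi_rpow_of_lt hexp one_pos
      have := hint.2
      rw [hasFiniteIntegral_iff_norm] at this
      calc ∫⁻ t in Set.Ioi (1:ℝ), ENNReal.ofReal (t ^ (-(1/α)))
          ≤ ∫⁻ t in Set.Ioi (1:ℝ), ENNReal.ofReal ‖t ^ (-(1/α))‖ :=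
            lintegral_mono fun t => ENNReal.ofReal_le_ofReal (le_abs_self _)
        _ < ⊤ := this
    exact (lt_of_le_of_lt (add_le_add hb1 hb2) (by
      exact ENNReal.add_lt_top.mpr ⟨one_lt_top, hb2fin⟩)).ne
  -- Step B : A x / T x → 1 by dominated convergence
  have hAT : Tendsto (fun x => A x / ν (Set.Ioi x)) atTop (𝓝 1) := by
    set g : ℝ → ℝ → ℝ≥0∞ := fun x a =>
      (Set.Iic (x/2)).indicator (fun a => ν (Set.Ioi (x - a)) * (ν (Set.Ioi x))⁻¹) a with hg_def
    have hrew : (fun x => A x / ν (Set.Ioi x)) =ᶠ[atTop] fun x => ∫⁻ a, g x a ∂ν := by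
      filter_upwards [eventually_gt_atTop 0] with x hx
      rw [hA_def, div_eq_mul_inv]
      simp only []
      rw [← lintegral_mul_const' _ _ (ENNReal.inv_ne_top.mpr (hTne x hx))]
      congr 1
      funext a
      by_cases ha : a ∈ Set.Iic (x/2)
      · simp [hg_def, ha]
      · simp [hg_def, ha]
    rw [tendsto_congr' hrew]
    have h1 : (𝓝 (1:ℝ≥0∞)) = 𝓝 (∫⁻ _, 1 ∂ν) := by simp
    rw [h1]
    refine tendsto_lintegral_filter_of_dominated_convergence G ?_ ?_ hGfin ?_
    · filter_upwards with x
      apply Measurable.indicator _ measurableSet_Iic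
      have hmono : Monotone fun a : ℝ => ν (Set.Ioi (x - a)) := by
        intro a b hab
        exact measure_mono (Set.Ioi_subset_Ioi (by linarith))
      exact hmono.measurable.mul_const _
    · filter_upwards [eventually_gt_atTop 0] with x hx
      filter_upwards [hae] with a ha
      by_cases ha2 : a ∈ Set.Iic (x/2)
      · have ha2' : a ≤ x/2 := ha2
        have hxa : 0 < x - a := by linarith
        rw [hg_def]
        simp only []
        rw [Set.indicator_of_mem ha2, hT _ hxa, hT x hx, ratio_eq, hG_def]
        simp only []
        apply ENNReal.ofReal_le_ofReal
        apply Real.exp_le_exp.mpr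
        have hb := exponent_bound hα0 hα1 ha ha2' hx
        linarith
      · rw [hg_def]; simp only []
        rw [Set.indicator_of_notMem ha2]; exact bot_le
    · filter_upwards [hae] with a ha
      have hev : ∀ᶠ x in atTop, g x a = ENNReal.ofReal (Real.exp (x ^ α - (x - a) ^ α)) := by
        filter_upwards [eventually_ge_atTop (2*a), eventually_gt_atTop 0] with x hx2 hx0
        have ha2 : a ∈ Set.Iic (x/2) := by simp only [Set.mem_Iic]; linarith
        have hxa : 0 < x - a := by linarith
        rw [hg_def]; simp only []
        rw [Set.indicator_of_mem ha2, hT _ hxa, hT _ hx0, ratio_eq]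
        congr 1; ring
      rw [tendsto_congr' hev]
      have hexp0 : Tendsto (fun x : ℝ => x ^ α - (x - a) ^ α) atTop (𝓝 0) := by
        have hup : Tendsto (fun x : ℝ => α * a * (x - a) ^ (α - 1)) atTop (𝓝 0) := by
          have h1' : Tendsto (fun x : ℝ => x - a) atTop atTop :=
            tendsto_atTop_add_const_right _ _ tendsto_id
          have h2' : Tendsto (fun u : ℝ => u ^ (α - 1)) atTop (𝓝 0) := by
            have := tendsto_rpow_neg_atTop (y := 1 - α) (by linarith)
            simpa [show -(1-α) = α - 1 by ring] using this
          have h3' := (h2'.comp h1').const_mul (α * a)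
          simpa using h3'
        refine tendsto_of_tendsto_of_tendsto_of_le_of_le' tendsto_const_nhds hup ?_ ?_
        · filter_upwards [eventually_ge_atTop a, eventually_gt_atTop 0] with x hx1 hx0
          have : (x - a) ^ α ≤ x ^ α :=
            Real.rpow_le_rpow (by linarith) (by linarith) hα0.le
          linarith
        · filter_upwards [eventually_ge_atTop (2*a), eventually_gt_atTop 0] with x hx2 hx0
          have hxa : 0 < x - a := by linarith
          have hb := rpow_add_le_aux hxa ha.le hα0.le hα1.le
          rw [show x - a + a = x by ring] at hb
          linarith
      have hcomp := (ENNReal.continuous_ofReal.tendsto _).comp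
        ((Real.continuous_exp.tendsto _).comp hexp0)
      simpa [Function.comp_def] using hcomp
  -- Step C : the product term is negligible
  have hC : Tendsto (fun x => ν (Set.Ioi (x/2)) * ν (Set.Ioi (x/2)) / ν (Set.Ioi x))
      atTop (𝓝 0) := by
    have hev : ∀ᶠ x in atTop, ν (Set.Ioi (x/2)) * ν (Set.Ioi (x/2)) / ν (Set.Ioi x)
        = ENNReal.ofReal (Real.exp ((1 - 2 ^ (1-α)) * x ^ α)) := by
      filter_upwards [eventually_gt_atTop 0] with x hx
      have h2 : (0:ℝ) < x/2 := by linarith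
      rw [hT _ h2, hT _ hx, ← ENNReal.ofReal_mul (Real.exp_nonneg _), ← Real.exp_add,
        div_eq_mul_inv, ratio_eq]
      congr 1
      have hxd : (x/2) ^ α = x ^ α / 2 ^ α := Real.div_rpow hx.le (by norm_num : (0:ℝ) ≤ 2) α
      have h2α : (2:ℝ) ^ (1 - α) = 2 / 2 ^ α := by
        rw [Real.rpow_sub (by norm_num : (0:ℝ) < 2), Real.rpow_one]
      have h2pos : (0:ℝ) < 2 ^ α := Real.rpow_pos_of_pos (by norm_num) _
      rw [hxd, h2α]
      field_simp
      ring
    rw [tendsto_congr' hev]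
    have harg : Tendsto (fun x : ℝ => (1 - 2 ^ (1-α)) * x ^ α) atTop atBot := by
      have hneg : 1 - (2:ℝ) ^ (1-α) < 0 := by
        have h12 : (1:ℝ) < 2 ^ (1-α) := by
          rw [show (1:ℝ) = 2 ^ (0:ℝ) by simp]
          exact Real.rpow_lt_rpow_of_exponent_lt one_lt_two (by simp; linarith)
        linarith
      exact (tendsto_const_mul_atBot_of_neg hneg).mpr (tendsto_rpow_atTop hα0)
    have hcomp := (ENNReal.continuous_ofReal.tendsto _).comp
      (Real.tendsto_exp_atBot.comp harg)
    simpa [Function.comp_def] using hcomp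
  -- combine
  have hmain : Tendsto (fun x => (ν.prod ν) {p : ℝ × ℝ | x < p.1 + p.2} / ν (Set.Ioi x))
      atTop (𝓝 2) := by
    have hev : ∀ᶠ x in atTop, (ν.prod ν) {p : ℝ × ℝ | x < p.1 + p.2} / ν (Set.Ioi x)
        = 2 * (A x / ν (Set.Ioi x)) + ν (Set.Ioi (x/2)) * ν (Set.Ioi (x/2)) / ν (Set.Ioi x) := by
      filter_upwards [eventually_gt_atTop 0] with x hx
      rw [hdecomp x hx, ENNReal.add_div, mul_div_assoc]
    rw [tendsto_congr' hev]
    have h2A : Tendsto (fun x => 2 * (A x / ν (Set.Ioi x))) atTop (𝓝 2) := by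
      have := ENNReal.Tendsto.const_mul (a := 2) hAT (Or.inr (by norm_num))
      simpa using this
    have := h2A.add hC
    simpa using this
  have hfinal := (ENNReal.tendsto_toReal (a := 2) (by norm_num)).comp hmain
  refine Tendsto.congr (fun x => ?_) (by simpa using hfinal)
  exact ENNReal.toReal_div _ _

lemma part1 (α : ℝ) (hα : 0 < α ∧ α < 1) (F f : ℝ → ℝ)
    (hFbar : ∀ x : ℝ, 0 < x → 1 - F x = Real.exp (-(x ^ α)))
    (hf : ∀ x, f x = x ^ (1 - α) / α) :
    ∀ L > (0:ℝ),
      (∀ x : ℝ, 0 < x →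
        (1 - F (L * f x)) ^ 2 / (1 - F x)
          = Real.exp (x ^ α * (1 - 2 * (L / α) ^ α * x ^ (-(α ^ 2))))) ∧
      Tendsto (fun x => (1 - F (L * f x)) ^ 2 / (1 - F x)) atTop atTop := by
  obtain ⟨hα0, hα1⟩ := hα
  intro L hL
  have hLα : 0 < L / α := div_pos hL hα0
  set c : ℝ := (L / α) ^ α with hc
  have hc0 : 0 < c := rpow_pos_of_pos hLα α
  have key : ∀ x : ℝ, 0 < x →
      (1 - F (L * f x)) ^ 2 / (1 - F x)
        = Real.exp (x ^ α * (1 - 2 * c * x ^ (-(α ^ 2)))) := by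
    intro x hx
    have h1 : L * f x = (L / α) * x ^ (1 - α) := by rw [hf]; ring
    have hx1α : 0 < x ^ (1 - α) := rpow_pos_of_pos hx _
    have hpos : 0 < L * f x := by rw [h1]; positivity
    have h2 : (L * f x) ^ α = c * x ^ (α - α ^ 2) := by
      rw [h1, Real.mul_rpow hLα.le (rpow_nonneg hx.le _), ← Real.rpow_mul hx.le,
        show (1 - α) * α = α - α ^ 2 by ring]
    rw [hFbar _ hpos, hFbar _ hx, h2]
    rw [← Real.exp_nat_mul, ← Real.exp_sub]
    congr 1
    have h3 : x ^ α * x ^ (-(α ^ 2)) = x ^ (α - α ^ 2) := by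
      rw [← Real.rpow_add hx]; ring_nf
    push_cast
    linear_combination (2 * c) * h3
  refine ⟨key, ?_⟩
  have hev : (fun x => Real.exp (x ^ α * (1 - 2 * c * x ^ (-(α ^ 2)))))
      =ᶠ[atTop] fun x => (1 - F (L * f x)) ^ 2 / (1 - F x) := by
    filter_upwards [eventually_gt_atTop 0] with x hx
    exact (key x hx).symm
  refine Tendsto.congr' hev ?_
  refine Real.tendsto_exp_atTop.comp ?_
  refine Filter.Tendsto.atTop_mul_pos one_pos (tendsto_rpow_atTop hα0) ?_
  have h0 : Tendsto (fun x : ℝ => x ^ (-(α ^ 2))) atTop (𝓝 0) :=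
    tendsto_rpow_neg_atTop (by positivity)
  have := (h0.const_mul (2 * c)).const_sub 1
  simpa using this

/-- Heavy-tailed Weibull: `F̄(x) = exp(-x^α)`, `α ∈ (0,1)`, with von Mises auxiliary
function `f(x) = x^{1-α}/α`. For every `L > 0`,
`(F̄(Lf(x)))²/F̄(x) = exp(x^α(1 - 2(L/α)^α x^{-α²})) → ∞`; i.e., the joint-tail
sufficient condition fails for every `L`, even though `F` is subexponential:
`P(X+Y>x) ∼ 2P(X>x)` for `X, Y` i.i.d. with distribution `F`. -/
theorem stmt_15 {Ω : Type*} [MeasurableSpace Ω] (μpr : Measure Ω) [IsProbabilityMeasure μpr]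
    (α : ℝ) (hα : 0 < α ∧ α < 1)
    (F f : ℝ → ℝ)
    (hFbar : ∀ x : ℝ, 0 < x → 1 - F x = Real.exp (-(x ^ α)))
    (hf : ∀ x, f x = x ^ (1 - α) / α)
    (X Y : Ω → ℝ) (hXm : Measurable X) (hYm : Measurable Y)
    (hindep : IndepFun X Y μpr)
    (hXd : ∀ x, F x = (μpr {ω | X ω ≤ x}).toReal)
    (hYd : ∀ x, F x = (μpr {ω | Y ω ≤ x}).toReal) :
    (∀ L > (0:ℝ),
      (∀ x : ℝ, 0 < x →
        (1 - F (L * f x)) ^ 2 / (1 - F x)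
          = Real.exp (x ^ α * (1 - 2 * (L / α) ^ α * x ^ (-(α ^ 2))))) ∧
      Tendsto (fun x => (1 - F (L * f x)) ^ 2 / (1 - F x)) atTop atTop) ∧
    Tendsto (fun x =>
      (μpr {ω | X ω + Y ω > x}).toReal / (μpr {ω | X ω > x}).toReal)
      atTop (nhds 2) := by
  obtain ⟨hα0, hα1⟩ := hα
  refine ⟨part1 α ⟨hα0, hα1⟩ F f hFbar hf, ?_⟩
  set ν : Measure ℝ := μpr.map X with hν_def
  have hprobν : IsProbabilityMeasure ν := Measure.isProbabilityMeasure_map hXm.aemeasurable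
  have hmapY : μpr.map Y = ν := by
    refine Measure.ext_of_Iic (μpr.map Y) ν fun a => ?_
    rw [hν_def, Measure.map_apply hYm measurableSet_Iic, Measure.map_apply hXm measurableSet_Iic]
    have h1 : (μpr (Y ⁻¹' Set.Iic a)).toReal = (μpr (X ⁻¹' Set.Iic a)).toReal := by
      have e1 : Y ⁻¹' Set.Iic a = {ω | Y ω ≤ a} := rfl
      have e2 : X ⁻¹' Set.Iic a = {ω | X ω ≤ a} := rfl
      rw [e1, e2, ← hYd, ← hXd]
    exact (ENNReal.toReal_eq_toReal_iff' (measure_ne_top _ _) (measure_ne_top _ _)).mp h1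
  have hT : ∀ t : ℝ, 0 < t → ν (Set.Ioi t) = ENNReal.ofReal (Real.exp (-(t ^ α))) := by
    intro t ht
    have hIic : ν (Set.Iic t) = ENNReal.ofReal (F t) := by
      rw [hν_def, Measure.map_apply hXm measurableSet_Iic]
      have : F t = (μpr (X ⁻¹' Set.Iic t)).toReal := hXd t
      rw [this, ENNReal.ofReal_toReal (measure_ne_top _ _)]
    have hcompl : ν (Set.Ioi t) = 1 - ν (Set.Iic t) := by
      rw [← Set.compl_Iic, measure_compl measurableSet_Iic (measure_ne_top _ _), measure_univ]
    have hFt : F t = 1 - Real.exp (-(t ^ α)) := by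
      have := hFbar t ht; linarith
    have hexple : Real.exp (-(t ^ α)) ≤ 1 := by
      rw [← Real.exp_zero]
      exact Real.exp_le_exp.mpr (neg_nonpos.mpr (Real.rpow_nonneg ht.le α))
    rw [hcompl, hIic, hFt]
    rw [show (1:ℝ≥0∞) = ENNReal.ofReal 1 by simp]
    rw [← ENNReal.ofReal_sub _ (by linarith [Real.exp_pos (-(t ^ α))])]
    congr 1
    ring
  have hpairmap : μpr.map (fun ω => (X ω, Y ω)) = ν.prod ν := by
    rw [(indepFun_iff_map_prod_eq_prod_map_map hXm.aemeasurable hYm.aemeasurable).mp hindep,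
      hmapY, hν_def]
  have hsum_meas : ∀ x : ℝ, MeasurableSet {p : ℝ × ℝ | x < p.1 + p.2} := fun x =>
    measurableSet_lt measurable_const (measurable_fst.add measurable_snd)
  have hnum : ∀ x : ℝ, μpr {ω | X ω + Y ω > x} = (ν.prod ν) {p : ℝ × ℝ | x < p.1 + p.2} := by
    intro x
    rw [← hpairmap, Measure.map_apply (hXm.prodMk hYm) (hsum_meas x)]
    rfl
  have hden : ∀ x : ℝ, μpr {ω | X ω > x} = ν (Set.Ioi x) := by
    intro x
    rw [hν_def, Measure.map_apply hXm measurableSet_Ioi]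
    rfl
  have := tail_limit α hα0 hα1 ν hT
  simp only [hnum, hden]
  exact this
end

section
/- Let (U,V) satisfy: U has distribution F ∈ MDA(Λ) with infinite right endpoint and auxiliary function f; lim_{x→∞} P(V>x)/P(U>x) = c ∈ (0,∞); for all t>0, P(|V| > t f(x) | U > x) → 0 and P(|U| > t f(x) | V > x) → 0; and for some L>0, P(V > Lf(x), U > Lf(x))/P(U>x) → 0. Let a₁ > a₂ > 0. Then P(a₁U + a₂V > x) ∼ P(U > x/a₁) as x → ∞. -/
open MeasureTheory Filter Real

private lemma div_le_div_same' {a b c : ℝ} (h : a ≤ b) (hc : 0 < c) : a / c ≤ b / c := by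
  rw [div_le_div_iff₀ hc hc]
  nlinarith

private lemma div_split' {a b c : ℝ} (hb : b ≠ 0) : a / c = a / b * (b / c) :=
  (div_mul_div_cancel₀ hb).symm

/-- The auxiliary function of a Gumbel-MDA tail is `o(t)`. -/
private lemma aux_f_small {G f : ℝ → ℝ} (hGanti : Antitone G) (hGpos : ∀ x, 0 < G x)
    (hGsmall : ∀ η > (0:ℝ), ∀ᶠ t in atTop, G t < η)
    (hMDA : ∀ x : ℝ, Tendsto (fun t => G (t + x * f t) / G t) atTop (nhds (Real.exp (-x))))
    (hfpos : ∀ x, 0 < f x) :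
    ∀ δ > (0:ℝ), ∀ᶠ t in atTop, f t < δ * t := by
  intro δ hδ
  by_contra hcon
  rw [Filter.not_eventually] at hcon
  have hx := hMDA (-(2/δ))
  rw [neg_neg] at hx
  have hev1 : ∀ᶠ t in atTop, G (t + -(2/δ) * f t) / G t < Real.exp (2/δ) + 1 :=
    hx.eventually (eventually_lt_nhds (by linarith [Real.exp_pos (2/δ)]))
  have hev2 := hGsmall (G 0 / (Real.exp (2/δ) + 1))
    (div_pos (hGpos 0) (by positivity))
  have hev3 : ∀ᶠ t : ℝ in atTop, (0:ℝ) ≤ t := eventually_ge_atTop 0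
  obtain ⟨t, hft, h1, h2, ht0⟩ := (hcon.and_eventually (hev1.and (hev2.and hev3))).exists
  rw [not_lt] at hft
  have h2δ : (0:ℝ) < 2/δ := by positivity
  have harg : t + -(2/δ) * f t ≤ 0 := by
    have e1 : 2/δ * (δ * t) ≤ 2/δ * f t := mul_le_mul_of_nonneg_left hft h2δ.le
    have e2 : 2/δ * (δ * t) = 2 * t := by field_simp
    nlinarith
  have hnum : G 0 ≤ G (t + -(2/δ) * f t) := hGanti harg
  have hGt := hGpos t
  have hfrac : Real.exp (2/δ) + 1 < G 0 / G t := by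
    rw [lt_div_iff₀ hGt]
    have h3 : G t * (Real.exp (2/δ) + 1) < G 0 := (lt_div_iff₀ (by positivity)).mp h2
    nlinarith
  have hcontr : G 0 / G t ≤ G (t + -(2/δ) * f t) / G t := div_le_div_same' hnum hGt
  linarith

/-- Rapid variation of the tail. -/
private lemma aux_rapid {G f : ℝ → ℝ} (hGanti : Antitone G) (hGpos : ∀ x, 0 < G x)
    (hGsmall : ∀ η > (0:ℝ), ∀ᶠ t in atTop, G t < η)
    (hMDA : ∀ x : ℝ, Tendsto (fun t => G (t + x * f t) / G t) atTop (nhds (Real.exp (-x))))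
    (hfpos : ∀ x, 0 < f x) {l : ℝ} (hl : 1 < l) :
    Tendsto (fun y => G (l * y) / G y) atTop (nhds 0) := by
  rw [Metric.tendsto_nhds]
  intro ε hε
  set M := max (Real.log (2/ε)) 1 with hM
  have hM1 : (1:ℝ) ≤ M := le_max_right _ _
  have hMpos : (0:ℝ) < M := by linarith
  have hexpM : Real.exp (-M) ≤ ε/2 := by
    have h1 : Real.log (2/ε) ≤ M := le_max_left _ _
    have h2 : Real.exp (-M) ≤ Real.exp (-(Real.log (2/ε))) := Real.exp_le_exp.mpr (by linarith)
    calc Real.exp (-M) ≤ Real.exp (-(Real.log (2/ε))) := h2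
      _ = (2/ε)⁻¹ := by rw [Real.exp_neg, Real.exp_log (by positivity)]
      _ = ε/2 := by rw [inv_div]
  have hev1 : ∀ᶠ y in atTop, G (y + M * f y) / G y < Real.exp (-M) + ε/2 :=
    (hMDA M).eventually (eventually_lt_nhds (by linarith [Real.exp_pos (-M)]))
  have hev2 := aux_f_small hGanti hGpos hGsmall hMDA hfpos ((l-1)/M) (div_pos (by linarith) hMpos)
  filter_upwards [hev1, hev2] with y h1 h2
  have harg : y + M * f y ≤ l * y := by
    have e1 : M * f y < M * ((l-1)/M * y) := mul_lt_mul_of_pos_left h2 hMpos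
    have e2 : M * ((l-1)/M * y) = (l-1) * y := by field_simp
    nlinarith
  have hle : G (l * y) ≤ G (y + M * f y) := hGanti harg
  have h3 : G (l*y)/G y ≤ G (y + M*f y)/G y := div_le_div_same' hle (hGpos y)
  have hnn : 0 ≤ G (l*y)/G y := div_nonneg (hGpos _).le (hGpos _).le
  rw [Real.dist_eq, sub_zero, abs_of_nonneg hnn]
  linarith

private lemma aux_C {G H f : ℝ → ℝ} {c : ℝ} (hGanti : Antitone G) (hGpos : ∀ x, 0 < G x)
    (hGsmall : ∀ η > (0:ℝ), ∀ᶠ t in atTop, G t < η)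
    (hMDA : ∀ x : ℝ, Tendsto (fun t => G (t + x * f t) / G t) atTop (nhds (Real.exp (-x))))
    (hfpos : ∀ x, 0 < f x)
    (hHanti : Antitone H) (hHnn : ∀ x, 0 ≤ H x)
    (hratio : Tendsto (fun x => H x / G x) atTop (nhds c))
    {κ m : ℝ} (hκ : 1 < κ) (hm : 0 < m) :
    Tendsto (fun y => H (κ * y + -(κ * m) * f y) / G y) atTop (nhds 0) := by
  set l := (1 + κ)/2 with hl
  have hl1 : 1 < l := by rw [hl]; linarith
  have hlκ : l < κ := by rw [hl]; linarith
  have e1 : Tendsto (fun y => H (l * y) / G (l * y)) atTop (nhds c) :=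
    hratio.comp (Tendsto.const_mul_atTop (by linarith) tendsto_id)
  have e2 := aux_rapid hGanti hGpos hGsmall hMDA hfpos hl1
  have e3 : Tendsto (fun y => H (l * y) / G y) atTop (nhds 0) := by
    have h4 := e1.mul e2
    rw [mul_zero] at h4
    refine h4.congr fun y => ?_
    exact (div_split' (ne_of_gt (hGpos (l * y)))).symm
  refine squeeze_zero' (Eventually.of_forall fun y => div_nonneg (hHnn _) (hGpos y).le) ?_ e3
  have hev := aux_f_small hGanti hGpos hGsmall hMDA hfpos ((κ - l)/(κ*m)) (div_pos (by linarith) (by positivity))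
  filter_upwards [hev] with y h2
  have harg : l * y ≤ κ * y + -(κ*m) * f y := by
    have e4 : κ*m * f y < κ*m * ((κ-l)/(κ*m) * y) := mul_lt_mul_of_pos_left h2 (by positivity)
    have e5 : κ*m * ((κ-l)/(κ*m) * y) = (κ - l) * y := by field_simp
    nlinarith
  exact div_le_div_same' (hHanti harg) (hGpos y)

private lemma aux_B {Ω : Type*} [MeasurableSpace Ω] (ℙ : Measure Ω) [IsProbabilityMeasure ℙ]
    (U V : Ω → ℝ) (f : ℝ → ℝ) (hfpos : ∀ x, 0 < f x)
    (G : ℝ → ℝ)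
    (hGanti : Antitone G) (hGpos : ∀ x, 0 < G x)
    (hGsmall : ∀ η > (0:ℝ), ∀ᶠ t in atTop, G t < η)
    (hMDA : ∀ x : ℝ, Tendsto (fun t => G (t + x * f t) / G t) atTop (nhds (Real.exp (-x))))
    (hself : ∀ x : ℝ, Tendsto (fun t => f (t + x * f t) / f t) atTop (nhds 1))
    (hcondV : ∀ t > (0:ℝ), Tendsto (fun x =>
      (ℙ {ω | |V ω| > t * f x ∧ U ω > x}).toReal / G x) atTop (nhds 0))
    {t s' : ℝ} (ht : 0 < t) (hs' : 0 < s') :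
    Tendsto (fun y => (ℙ {ω | |V ω| > t * f y ∧ U ω > y + -s' * f y}).toReal / G y)
      atTop (nhds 0) := by
  have hφ : Tendsto (fun y : ℝ => y + -s' * f y) atTop atTop := by
    have hev : ∀ᶠ y in atTop, y / 2 ≤ y + -s' * f y := by
      filter_upwards [aux_f_small hGanti hGpos hGsmall hMDA hfpos (1/(2*s')) (by positivity)]
        with y hy
      have e1 : s' * f y < s' * (1/(2*s') * y) := mul_lt_mul_of_pos_left hy hs'
      have e2 : s' * (1/(2*s') * y) = y/2 := by field_simp
      nlinarith
    exact tendsto_atTop_mono' atTop hev (Tendsto.atTop_div_const two_pos tendsto_id)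
  have h1 : Tendsto (fun y : ℝ =>
      (ℙ {ω | |V ω| > (t/2) * f (y + -s' * f y) ∧ U ω > y + -s' * f y}).toReal
        / G (y + -s' * f y)) atTop (nhds 0) :=
    (hcondV (t/2) (by positivity)).comp hφ
  have h2 : Tendsto (fun y : ℝ => G (y + -s' * f y) / G y) atTop (nhds (Real.exp s')) := by
    have h3 := hMDA (-s')
    rwa [neg_neg] at h3
  have h3 := h1.mul h2
  rw [zero_mul] at h3
  refine squeeze_zero'
    (Eventually.of_forall fun y => div_nonneg ENNReal.toReal_nonneg (hGpos y).le) ?_ h3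
  have hf2 := (hself (-s')).eventually (eventually_lt_nhds one_lt_two)
  filter_upwards [hf2] with y hy
  have hfy := hfpos y
  have hfφ := hfpos (y + -s' * f y)
  have hGφ := hGpos (y + -s' * f y)
  have hGy := hGpos y
  have hlt : (t/2) * f (y + -s' * f y) ≤ t * f y := by
    have h4 : f (y + -s' * f y) < 2 * f y := by
      have h5 := (div_lt_iff₀ hfy).mp hy
      linarith
    nlinarith
  have hsub : (ℙ {ω | |V ω| > t * f y ∧ U ω > y + -s' * f y}).toReal
      ≤ (ℙ {ω | |V ω| > (t/2) * f (y + -s' * f y) ∧ U ω > y + -s' * f y}).toReal := by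
    refine ENNReal.toReal_mono (measure_ne_top _ _) (measure_mono fun ω h => ?_)
    exact ⟨lt_of_le_of_lt hlt h.1, h.2⟩
  calc (ℙ {ω | |V ω| > t * f y ∧ U ω > y + -s' * f y}).toReal / G y
      ≤ (ℙ {ω | |V ω| > (t/2) * f (y + -s' * f y) ∧ U ω > y + -s' * f y}).toReal / G y :=
        div_le_div_same' hsub hGy
    _ = (ℙ {ω | |V ω| > (t/2) * f (y + -s' * f y) ∧ U ω > y + -s' * f y}).toReal
          / G (y + -s' * f y) * (G (y + -s' * f y) / G y) := div_split' (ne_of_gt hGφ)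

set_option maxHeartbeats 2000000 in
/-- Under the tail-equivalence assumptions with `c ∈ (0,∞)`, for coefficients
`a₁ > a₂ > 0` one has `P(a₁U + a₂V > x) ∼ P(U > x/a₁)` as `x → ∞`. -/
theorem stmt_16 {Ω : Type*} [MeasurableSpace Ω] (ℙ : Measure Ω) [IsProbabilityMeasure ℙ]
    (U V : Ω → ℝ) (hUm : Measurable U) (hVm : Measurable V)
    (F f : ℝ → ℝ) (c : ℝ) (hc : 0 < c)
    (hF : ∀ x, F x = (ℙ {ω | U ω ≤ x}).toReal)
    (hend : ∀ x, F x < 1)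
    (hfpos : ∀ x, 0 < f x)
    (hself : ∀ x : ℝ, Tendsto (fun t => f (t + x * f t) / f t) atTop (nhds 1))
    (hMDA : ∀ x : ℝ, Tendsto (fun t => (1 - F (t + x * f t)) / (1 - F t))
      atTop (nhds (Real.exp (-x))))
    (hratio : Tendsto (fun x =>
      (ℙ {ω | V ω > x}).toReal / (ℙ {ω | U ω > x}).toReal) atTop (nhds c))
    (hcondV : ∀ t > (0:ℝ), Tendsto (fun x =>
      (ℙ {ω | |V ω| > t * f x ∧ U ω > x}).toReal / (ℙ {ω | U ω > x}).toReal)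
      atTop (nhds 0))
    (hcondU : ∀ t > (0:ℝ), Tendsto (fun x =>
      (ℙ {ω | |U ω| > t * f x ∧ V ω > x}).toReal / (ℙ {ω | V ω > x}).toReal)
      atTop (nhds 0))
    (hjoint : ∃ L > (0:ℝ), Tendsto (fun x =>
      (ℙ {ω | V ω > L * f x ∧ U ω > L * f x}).toReal / (ℙ {ω | U ω > x}).toReal)
      atTop (nhds 0))
    (a₁ a₂ : ℝ) (ha : a₁ > a₂) (ha₂ : a₂ > 0) :
    Tendsto (fun x =>
      (ℙ {ω | a₁ * U ω + a₂ * V ω > x}).toReal / (ℙ {ω | U ω > x / a₁}).toReal)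
      atTop (nhds 1) := by
  obtain ⟨L, hLpos, hjointL⟩ := hjoint
  have ha₁ : (0:ℝ) < a₁ := ha₂.trans ha
  set G : ℝ → ℝ := fun y => (ℙ {ω | U ω > y}).toReal with hGdef
  set H : ℝ → ℝ := fun y => (ℙ {ω | V ω > y}).toReal with hHdef
  have hGanti : Antitone G := by
    intro a b hab
    simp only [hGdef]
    exact ENNReal.toReal_mono (measure_ne_top _ _)
      (measure_mono fun ω h => lt_of_le_of_lt hab h)
  have hHanti : Antitone H := by
    intro a b hab
    simp only [hHdef]
    exact ENNReal.toReal_mono (measure_ne_top _ _)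
      (measure_mono fun ω h => lt_of_le_of_lt hab h)
  have hHnn : ∀ x, 0 ≤ H x := fun x => by
    simp only [hHdef]; exact ENNReal.toReal_nonneg
  have hG1F : ∀ y, G y = 1 - F y := by
    intro y
    have hceq : {ω | U ω > y} = {ω | U ω ≤ y}ᶜ := by
      ext ω; simp [not_le]
    simp only [hGdef]
    rw [hF y, hceq, prob_compl_eq_one_sub (show MeasurableSet {ω | U ω ≤ y} from hUm measurableSet_Iic),
      ENNReal.toReal_sub_of_le prob_le_one ENNReal.one_ne_top, ENNReal.toReal_one]
  have hGpos : ∀ y, 0 < G y := fun y => by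
    rw [hG1F y]; linarith [hend y]
  have hGsmall : ∀ η > (0:ℝ), ∀ᶠ t in atTop, G t < η := by
    have hiInter : (⋂ n : ℕ, {ω | U ω > (n:ℝ)}) = (∅ : Set Ω) := by
      ext ω
      simp only [Set.mem_iInter, Set.mem_setOf_eq, Set.mem_empty_iff_false, iff_false,
        not_forall, not_lt]
      obtain ⟨n, hn⟩ := exists_nat_gt (U ω)
      exact ⟨n, hn.le⟩
    have hanti : Antitone (fun n : ℕ => {ω | U ω > (n:ℝ)}) := by
      intro a b hab ω h
      simp only [Set.mem_setOf_eq] at *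
      exact lt_of_le_of_lt (Nat.cast_le.mpr hab) h
    have htend := tendsto_measure_iInter_atTop (μ := ℙ)
      (s := fun n : ℕ => {ω | U ω > (n:ℝ)})
      (fun n => (hUm measurableSet_Ioi).nullMeasurableSet) hanti ⟨0, measure_ne_top _ _⟩
    rw [hiInter, measure_empty] at htend
    have h0 : Tendsto (fun n : ℕ => (ℙ {ω | U ω > (n:ℝ)}).toReal) atTop (nhds 0) := by
      have h1 := (ENNReal.tendsto_toReal ENNReal.zero_ne_top).comp htend
      exact h1
    intro η hη
    have h2 : ∀ᶠ n : ℕ in atTop, G (n:ℝ) < η := by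
      have : (fun n : ℕ => G (n:ℝ)) = fun n : ℕ => (ℙ {ω | U ω > (n:ℝ)}).toReal := by
        simp only [hGdef]
      rw [show (∀ᶠ n : ℕ in atTop, G (n:ℝ) < η) = ∀ᶠ n : ℕ in atTop,
        (ℙ {ω | U ω > (n:ℝ)}).toReal < η by simp only [hGdef]]
      exact h0.eventually (eventually_lt_nhds hη)
    obtain ⟨N, hN⟩ := eventually_atTop.mp h2
    filter_upwards [eventually_ge_atTop (N:ℝ)] with y hy
    exact lt_of_le_of_lt (hGanti hy) (hN N le_rfl)
  have hMDA' : ∀ x : ℝ, Tendsto (fun t => G (t + x * f t) / G t) atTop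
      (nhds (Real.exp (-x))) := by
    intro x
    refine (hMDA x).congr fun t => ?_
    rw [hG1F (t + x * f t), hG1F t]
  have hcondV' : ∀ t > (0:ℝ), Tendsto (fun x =>
      (ℙ {ω | |V ω| > t * f x ∧ U ω > x}).toReal / G x) atTop (nhds 0) := by
    intro t ht
    simp only [hGdef]
    exact hcondV t ht
  have hratio' : Tendsto (fun x => H x / G x) atTop (nhds c) := by
    simp only [hGdef, hHdef]; exact hratio
  have hjointL' : Tendsto (fun x =>
      (ℙ {ω | V ω > L * f x ∧ U ω > L * f x}).toReal / G x) atTop (nhds 0) := by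
    simp only [hGdef]; exact hjointL
  -- main statement in the variable y = x / a₁
  have hmain : Tendsto (fun y => (ℙ {ω | a₁ * U ω + a₂ * V ω > a₁ * y}).toReal / G y)
      atTop (nhds 1) := by
    rw [Metric.tendsto_nhds]
    intro ε hε
    have lower : ∀ᶠ y in atTop,
        1 - ε < (ℙ {ω | a₁ * U ω + a₂ * V ω > a₁ * y}).toReal / G y := by
      have hs : (0:ℝ) < a₁ * (ε/2) / a₂ := by positivity
      have h1 : ∀ᶠ y in atTop,
          Real.exp (-(ε/2)) - ε/8 < G (y + ε/2 * f y) / G y :=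
        (hMDA' (ε/2)).eventually (eventually_gt_nhds (by linarith))
      have h2 : ∀ᶠ y in atTop,
          (ℙ {ω | |V ω| > a₁ * (ε/2) / a₂ * f y ∧ U ω > y}).toReal / G y < ε/8 :=
        (hcondV' _ hs).eventually (eventually_lt_nhds (by linarith))
      filter_upwards [h1, h2] with y hy1 hy2
      have hGy := hGpos y
      have hfy := hfpos y
      have hincl : {ω | U ω > y + ε/2 * f y} ⊆
          {ω | a₁ * U ω + a₂ * V ω > a₁ * y} ∪
            {ω | |V ω| > a₁ * (ε/2) / a₂ * f y ∧ U ω > y} := by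
        intro ω hω
        by_cases hB : |V ω| > a₁ * (ε/2) / a₂ * f y ∧ U ω > y
        · exact Or.inr hB
        · left
          have hU : U ω > y + ε/2 * f y := hω
          have hUy : U ω > y := by nlinarith
          have hVb : |V ω| ≤ a₁ * (ε/2) / a₂ * f y := by
            by_contra hcc
            exact hB ⟨lt_of_not_ge hcc, hUy⟩
          have hV : -(a₁ * (ε/2) / a₂ * f y) ≤ V ω := (abs_le.mp hVb).1
          have key : a₂ * (a₁ * (ε/2) / a₂ * f y) = a₁ * (ε/2 * f y) := by
            field_simp
          show a₁ * U ω + a₂ * V ω > a₁ * y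
          nlinarith [mul_lt_mul_of_pos_left hU ha₁, mul_le_mul_of_nonneg_left hV ha₂.le]
      have hle1 : G (y + ε/2 * f y) ≤
          (ℙ {ω | a₁ * U ω + a₂ * V ω > a₁ * y}).toReal +
          (ℙ {ω | |V ω| > a₁ * (ε/2) / a₂ * f y ∧ U ω > y}).toReal := by
        have m1 : ℙ {ω | U ω > y + ε/2 * f y} ≤
            ℙ {ω | a₁ * U ω + a₂ * V ω > a₁ * y} +
            ℙ {ω | |V ω| > a₁ * (ε/2) / a₂ * f y ∧ U ω > y} :=
          le_trans (measure_mono hincl) (measure_union_le _ _)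
        have m2 := ENNReal.toReal_mono
          (ENNReal.add_ne_top.mpr ⟨measure_ne_top _ _, measure_ne_top _ _⟩) m1
        rw [ENNReal.toReal_add (measure_ne_top _ _) (measure_ne_top _ _)] at m2
        simpa only [hGdef] using m2
      have hexp : 1 - ε/2 ≤ Real.exp (-(ε/2)) := by
        linarith [Real.add_one_le_exp (-(ε/2))]
      have step : (G (y + ε/2 * f y) -
          (ℙ {ω | |V ω| > a₁ * (ε/2) / a₂ * f y ∧ U ω > y}).toReal) / G y ≤
          (ℙ {ω | a₁ * U ω + a₂ * V ω > a₁ * y}).toReal / G y :=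
        div_le_div_same' (by linarith) hGy
      rw [sub_div] at step
      linarith
    have upper : ∀ᶠ y in atTop,
        (ℙ {ω | a₁ * U ω + a₂ * V ω > a₁ * y}).toReal / G y < 1 + ε := by
      obtain ⟨s, hs, hs2, hsexp⟩ : ∃ s : ℝ, 0 < s ∧ s ≤ 1/2 ∧ Real.exp s ≤ 1 + ε/4 := by
        refine ⟨min (ε/8) (1/2), by positivity, min_le_right _ _, ?_⟩
        set u := min (ε/8) (1/2) with hu
        have hupos : (0:ℝ) < u := by positivity
        have hu2 : u ≤ 1/2 := min_le_right _ _
        have hu8 : u ≤ ε/8 := min_le_left _ _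
        have h1 : 1 - u ≤ Real.exp (-u) := by linarith [Real.add_one_le_exp (-u)]
        have h2 : Real.exp u * (1 - u) ≤ 1 := by
          calc Real.exp u * (1 - u) ≤ Real.exp u * Real.exp (-u) :=
                mul_le_mul_of_nonneg_left h1 (Real.exp_pos u).le
            _ = 1 := by rw [← Real.exp_add]; simp
        have h3 : Real.exp u ≤ 1 / (1 - u) := by
          rw [le_div_iff₀ (by linarith)]
          exact h2
        have h4 : 1 / (1 - u) ≤ 1 + 2 * u := by
          rw [div_le_iff₀ (by linarith)]
          nlinarith
        linarith
      have htpos : (0:ℝ) < a₁/a₂ * s := by positivity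
      set m : ℝ := max (a₁/a₂ * s) (max L 1) with hmdef
      have hmt : a₁/a₂ * s ≤ m := le_max_left _ _
      have hmL : L ≤ m := le_trans (le_max_left _ _) (le_max_right _ _)
      have hm1 : (1:ℝ) ≤ m := le_trans (le_max_right _ _) (le_max_right _ _)
      have hmpos : (0:ℝ) < m := by linarith
      have hκ : 1 < a₁/a₂ := (one_lt_div ha₂).mpr ha
      have e1 : ∀ᶠ y in atTop, G (y + -s * f y) / G y < 1 + ε/2 := by
        have h5 := hMDA' (-s)
        rw [neg_neg] at h5
        have h6 := h5.eventually (eventually_lt_nhds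
          (show Real.exp s < Real.exp s + ε/4 by linarith))
        filter_upwards [h6] with y hy
        linarith
      have TB : Tendsto (fun y =>
          (ℙ {ω | |V ω| > a₁/a₂ * s * f y ∧ U ω > y + -(a₂/a₁ * m) * f y}).toReal / G y)
          atTop (nhds 0) :=
        aux_B ℙ U V f hfpos G hGanti hGpos hGsmall hMDA' hself hcondV' htpos (by positivity)
      have TC : Tendsto (fun y =>
          H (a₁/a₂ * y + -(a₁/a₂ * m) * f y) / G y) atTop (nhds 0) :=
        aux_C hGanti hGpos hGsmall hMDA' hfpos hHanti hHnn hratio' hκ hmpos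
      have e2 := TB.eventually (eventually_lt_nhds (show (0:ℝ) < ε/8 by linarith))
      have e3 := TC.eventually (eventually_lt_nhds (show (0:ℝ) < ε/8 by linarith))
      have e4 := hjointL'.eventually (eventually_lt_nhds (show (0:ℝ) < ε/8 by linarith))
      filter_upwards [e1, e2, e3, e4] with y h1 h2 h3 h4
      have hGy := hGpos y
      have hfy := hfpos y
      have hincl : {ω | a₁ * U ω + a₂ * V ω > a₁ * y} ⊆
          {ω | U ω > y + -s * f y} ∪
          ({ω | |V ω| > a₁/a₂ * s * f y ∧ U ω > y + -(a₂/a₁ * m) * f y} ∪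
          ({ω | V ω > a₁/a₂ * y + -(a₁/a₂ * m) * f y} ∪
           {ω | V ω > L * f y ∧ U ω > L * f y})) := by
        intro ω hω
        simp only [Set.mem_union, Set.mem_setOf_eq] at *
        by_cases hV : |V ω| ≤ a₁/a₂ * s * f y
        · left
          have hVup : V ω ≤ a₁/a₂ * s * f y := (abs_le.mp hV).2
          have expandA : a₁ * (y + -s * f y) = a₁ * y - a₂ * (a₁/a₂ * s * f y) := by
            field_simp; ring
          have hmul : a₁ * (y + -s * f y) < a₁ * U ω := by
            rw [expandA]
            nlinarith [mul_le_mul_of_nonneg_left hVup ha₂.le]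
          exact (mul_lt_mul_iff_right₀ ha₁).mp hmul
        · push_neg at hV
          by_cases hU1 : U ω > y + -(a₂/a₁ * m) * f y
          · exact Or.inr (Or.inl ⟨hV, hU1⟩)
          · push_neg at hU1
            by_cases hU2 : U ω ≤ m * f y
            · refine Or.inr (Or.inr (Or.inl ?_))
              have expandC : a₂ * (a₁/a₂ * y + -(a₁/a₂ * m) * f y) =
                  a₁ * y - a₁ * (m * f y) := by
                field_simp; ring
              have hmul : a₂ * (a₁/a₂ * y + -(a₁/a₂ * m) * f y) < a₂ * V ω := by
                rw [expandC]
                nlinarith [mul_le_mul_of_nonneg_left hU2 ha₁.le]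
              exact (mul_lt_mul_iff_right₀ ha₂).mp hmul
            · push_neg at hU2
              by_cases hV2 : V ω > m * f y
              · refine Or.inr (Or.inr (Or.inr ⟨?_, ?_⟩))
                · exact lt_of_le_of_lt (mul_le_mul_of_nonneg_right hmL hfy.le) hV2
                · exact lt_of_le_of_lt (mul_le_mul_of_nonneg_right hmL hfy.le) hU2
              · push_neg at hV2
                exfalso
                have expandB : a₁ * (y + -(a₂/a₁ * m) * f y) =
                    a₁ * y - a₂ * (m * f y) := by
                  field_simp; ring
                have hmul : a₁ * (y + -(a₂/a₁ * m) * f y) < a₁ * U ω := by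
                  rw [expandB]
                  nlinarith [mul_le_mul_of_nonneg_left hV2 ha₂.le]
                exact absurd ((mul_lt_mul_iff_right₀ ha₁).mp hmul) (not_lt.mpr hU1)
      have m1 : ℙ {ω | a₁ * U ω + a₂ * V ω > a₁ * y} ≤
          ℙ {ω | U ω > y + -s * f y} +
          (ℙ {ω | |V ω| > a₁/a₂ * s * f y ∧ U ω > y + -(a₂/a₁ * m) * f y} +
          (ℙ {ω | V ω > a₁/a₂ * y + -(a₁/a₂ * m) * f y} +
           ℙ {ω | V ω > L * f y ∧ U ω > L * f y})) := by
        refine (measure_mono hincl).trans ?_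
        refine (measure_union_le _ _).trans ?_
        gcongr
        refine (measure_union_le _ _).trans ?_
        gcongr
        exact measure_union_le _ _
      have m2 := ENNReal.toReal_mono (by
        refine ENNReal.add_ne_top.mpr ⟨measure_ne_top _ _, ?_⟩
        refine ENNReal.add_ne_top.mpr ⟨measure_ne_top _ _, ?_⟩
        exact ENNReal.add_ne_top.mpr ⟨measure_ne_top _ _, measure_ne_top _ _⟩) m1
      rw [ENNReal.toReal_add (measure_ne_top _ _) (by
            refine ENNReal.add_ne_top.mpr ⟨measure_ne_top _ _, ?_⟩
            exact ENNReal.add_ne_top.mpr ⟨measure_ne_top _ _, measure_ne_top _ _⟩),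
          ENNReal.toReal_add (measure_ne_top _ _)
            (ENNReal.add_ne_top.mpr ⟨measure_ne_top _ _, measure_ne_top _ _⟩),
          ENNReal.toReal_add (measure_ne_top _ _) (measure_ne_top _ _)] at m2
      have hgA : (ℙ {ω | U ω > y + -s * f y}).toReal = G (y + -s * f y) := by
        simp only [hGdef]
      have hgC : (ℙ {ω | V ω > a₁/a₂ * y + -(a₁/a₂ * m) * f y}).toReal =
          H (a₁/a₂ * y + -(a₁/a₂ * m) * f y) := by
        simp only [hHdef]
      rw [hgA, hgC] at m2
      have hstep : (ℙ {ω | a₁ * U ω + a₂ * V ω > a₁ * y}).toReal / G y ≤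
          G (y + -s * f y) / G y +
          ((ℙ {ω | |V ω| > a₁/a₂ * s * f y ∧ U ω > y + -(a₂/a₁ * m) * f y}).toReal / G y +
          (H (a₁/a₂ * y + -(a₁/a₂ * m) * f y) / G y +
           (ℙ {ω | V ω > L * f y ∧ U ω > L * f y}).toReal / G y)) := by
        calc (ℙ {ω | a₁ * U ω + a₂ * V ω > a₁ * y}).toReal / G y
            ≤ (G (y + -s * f y) +
              ((ℙ {ω | |V ω| > a₁/a₂ * s * f y ∧ U ω > y + -(a₂/a₁ * m) * f y}).toReal +
              (H (a₁/a₂ * y + -(a₁/a₂ * m) * f y) +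
               (ℙ {ω | V ω > L * f y ∧ U ω > L * f y}).toReal))) / G y :=
              div_le_div_same' m2 hGy
          _ = _ := by ring
      linarith
    filter_upwards [lower, upper] with y h1 h2
    rw [Real.dist_eq, abs_lt]
    constructor <;> linarith
  -- conclude by substituting y = x / a₁
  have hdiv : Tendsto (fun x : ℝ => x / a₁) atTop atTop :=
    Tendsto.atTop_div_const ha₁ tendsto_id
  have hcomp := hmain.comp hdiv
  refine Tendsto.congr (fun x => ?_) hcomp
  simp only [Function.comp_apply, hGdef]
  rw [show a₁ * (x / a₁) = x from by field_simp]
end
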